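/- arXiv:2404.13527 — 10 statements merged into one kernel-verified Lean document; each statement's English description precedes it below -/
import Mathlib

section
/- A finite simple graph G is 0-1 strongly EFX-orientable if and only if for every subgraph H of G that is a forest with connected components (trees) T_1, ..., T_k, one can choose for every i a vertex x_i in T_i such that the union over i of the neighborhoods N_H(x_i) of the x_i in H forms an independent set in G. -/
open SimpleGraph
open scoped Classical

variable {V : Type*}

def bundleSet (G : SimpleGraph V) (head : Sym2 V → V) (v : V) : Set (Sym2 V) :=
  {e ∈ G.edgeSet | head e = v}

def IsEFXOrientation (G : SimpleGraph V) (f : V → Set (Sym2 V) → NNReal)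
    (head : Sym2 V → V) : Prop :=
  (∀ e ∈ G.edgeSet, head e ∈ e) ∧
  ∀ a b : V, ∀ g ∈ bundleSet G head b,
    f a (bundleSet G head b \ {g}) ≤ f a (bundleSet G head a)

def StronglyEFXOrientable [Fintype V] (G : SimpleGraph V) : Prop :=
  ∀ f : V → Set (Sym2 V) → NNReal,
    (∀ a, Monotone (f a)) →
    (∀ a X, f a X = f a (X ∩ G.incidenceSet a)) →
    ∃ head : Sym2 V → V, IsEFXOrientation G f head

noncomputable def bundle [Fintype V] (G : SimpleGraph V) (head : Sym2 V → V) (v : V) :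
    Finset (Sym2 V) :=
  Finset.univ.filter fun e => e ∈ G.edgeSet ∧ head e = v

def IsEFX01Orientation [Fintype V] (G : SimpleGraph V) (w : V → Sym2 V → ℕ)
    (head : Sym2 V → V) : Prop :=
  (∀ e ∈ G.edgeSet, head e ∈ e) ∧
  ∀ a b : V, ∀ g ∈ bundle G head b,
    ∑ e ∈ (bundle G head b).erase g, w a e ≤ ∑ e ∈ bundle G head a, w a e

def ZeroOneStronglyEFXOrientable [Fintype V] (G : SimpleGraph V) : Prop :=
  ∀ w : V → Sym2 V → ℕ, (∀ a e, w a e ≤ 1) → (∀ a e, a ∉ e → w a e = 0) →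
    ∃ head : Sym2 V → V, IsEFX01Orientation G w head

def IndepOn (G : SimpleGraph V) (s : Set V) : Prop :=
  ∀ a ∈ s, ∀ b ∈ s, ¬ G.Adj a b


lemma exists_adj_dist {H : SimpleGraph V} {r v : V} (h : H.Reachable r v) (hv : r ≠ v) :
    ∃ u, H.Adj u v ∧ H.dist r u + 1 = H.dist r v := by
  obtain ⟨p, hp⟩ := h.exists_walk_length_eq_dist
  cases hq : p.reverse with
  | nil => exact absurd rfl hv
  | @cons _ u _ hadj q' =>
    refine ⟨u, hadj.symm, ?_⟩
    have hru : H.Reachable r u := ⟨q'.reverse⟩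
    have h1 : H.dist r u ≤ q'.length := by
      simpa using H.dist_le q'.reverse
    have h2 : q'.length + 1 = H.dist r v := by
      have := congrArg Walk.length hq
      simp at this
      omega
    obtain ⟨m, hm⟩ := hru.exists_walk_length_eq_dist
    have h3 : H.dist r v ≤ H.dist r u + 1 := by
      have := H.dist_le (m.concat hadj.symm)
      simpa [Walk.length_concat, hm] using this
    omega

lemma forest_dist_ne {H : SimpleGraph V} (hac : H.IsAcyclic) {r u v : V}
    (hr : H.Reachable r u) (h : H.Adj u v) : H.dist r u ≠ H.dist r v := by
  intro heq
  have hrv : H.Reachable r v := hr.trans h.reachable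
  have hne : u ≠ v := h.ne
  have hvr : r ≠ v := by
    rintro rfl
    have h0 : H.dist r u = 0 := by rw [heq, dist_self]
    exact hne ((hr.dist_eq_zero_iff).mp h0).symm
  have hd0 : H.dist r v ≠ 0 := fun h0 => hvr ((hrv.dist_eq_zero_iff).mp h0)
  obtain ⟨p, hpp, hpl⟩ := hr.exists_path_of_dist
  obtain ⟨q, hqp, hql⟩ := hrv.exists_path_of_dist
  have husup : u ∉ q.support := by
    intro hus
    have h1 : H.dist r u ≤ (q.takeUntil u hus).length := H.dist_le _
    have h2 : (q.takeUntil u hus).length + (q.dropUntil u hus).length = q.length := by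
      rw [← Walk.length_append, Walk.take_spec]
    have h3 : (q.dropUntil u hus).length ≠ 0 := fun h0 => hne (Walk.eq_of_length_eq_zero h0)
    omega
  have hP1 : (p.reverse).IsPath := hpp.reverse
  have hP2 : (Walk.cons h q.reverse).IsPath := by
    refine hqp.reverse.cons ?_
    simpa using husup
  have := hac.path_unique ⟨p.reverse, hP1⟩ ⟨Walk.cons h q.reverse, hP2⟩
  have hlen := congrArg (fun P : H.Path u r => P.1.length) this
  simp [hpl, hql] at hlen
  omega

lemma exists_sink [Fintype V] {H : SimpleGraph V} (hac : H.IsAcyclic) (head : Sym2 V → V)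
    (hh : ∀ e ∈ H.edgeSet, head e ∈ e) (v0 : V) :
    ∃ x, H.Reachable v0 x ∧ ∀ u, H.Adj u x → head s(u, x) ≠ x := by
  by_contra hcon
  push_neg at hcon
  set N : Set ℕ := {n | ∃ x, ∃ p : H.Walk v0 x, p.IsPath ∧
    (∀ d ∈ p.darts, head d.edge = d.toProd.1) ∧ p.length = n} with hN
  have h0 : (0 : ℕ) ∈ N := ⟨v0, Walk.nil, Walk.IsPath.nil, by simp, rfl⟩
  have hbdd : BddAbove N := by
    refine ⟨Fintype.card V, ?_⟩
    rintro n ⟨y, p, hp, -, rfl⟩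
    exact le_of_lt hp.length_lt
  obtain ⟨y, p, hp, hdarts, hlen⟩ := Nat.sSup_mem ⟨0, h0⟩ hbdd
  obtain ⟨u, hadj, hhead⟩ := hcon y ⟨p⟩
  by_cases hus : u ∈ p.support
  · have hr1 : (p.dropUntil u hus).IsPath := hp.dropUntil hus
    have hr2 : (Walk.cons hadj Walk.nil).IsPath := by
      rw [Walk.cons_isPath_iff]
      exact ⟨Walk.IsPath.nil, by simpa using hadj.ne⟩
    have heqp := hac.path_unique ⟨_, hr1⟩ ⟨_, hr2⟩
    have heqw : p.dropUntil u hus = Walk.cons hadj Walk.nil := congrArg Subtype.val heqp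
    have hd : (⟨(u, y), hadj⟩ : H.Dart) ∈ p.darts := by
      apply p.darts_dropUntil_subset hus
      rw [heqw]
      simp [Walk.darts_cons]
    have := hdarts _ hd
    simp only [Dart.edge] at this
    rw [hhead] at this
    exact hadj.ne this.symm
  · have hp' : (p.concat hadj.symm).IsPath := by
      rw [← Walk.isPath_reverse_iff, Walk.reverse_concat, Walk.cons_isPath_iff]
      exact ⟨hp.reverse, by simpa using hus⟩
    have hmem : p.length + 1 ∈ N := by
      refine ⟨u, p.concat hadj.symm, hp', ?_, by simp [Walk.length_concat]⟩
      intro d hd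
      simp only [Walk.darts_concat, List.concat_eq_append, List.mem_append] at hd
      rcases hd with hd | hd
      · exact hdarts d hd
      · simp only [List.mem_singleton] at hd
        subst hd
        simpa [Dart.edge, Sym2.eq_swap] using hhead
    have := le_csSup hbdd hmem
    omega

lemma mem_bundle [Fintype V] {G : SimpleGraph V} {head : Sym2 V → V} {v : V} {e : Sym2 V} :
    e ∈ bundle G head v ↔ e ∈ G.edgeSet ∧ head e = v := by
  simp [bundle]

/-- A finite simple graph `G` is 0-1 strongly EFX-orientable iff for every
forest subgraph `H ⊆ G`, one can pick a vertex `x c` in each connected component `c` of `H`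
such that the union of the `H`-neighborhoods of the chosen vertices is independent in `G`. -/
theorem zeroOne_stronglyEFXOrientable_iff [Fintype V] (G : SimpleGraph V) :
    ZeroOneStronglyEFXOrientable G ↔
      ∀ H : SimpleGraph V, H ≤ G → H.IsAcyclic →
        ∃ x : H.ConnectedComponent → V,
          (∀ c, H.connectedComponentMk (x c) = c) ∧
          IndepOn G (⋃ c, H.neighborSet (x c)) := by
  constructor
  · intro hEFX
    intro H hHG hac
    set w : V → Sym2 V → ℕ := fun a e => if a ∈ e ∧ e ∈ H.edgeSet then 1 else 0 with hw
    obtain ⟨head, hhead, hefx⟩ := hEFX w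
      (fun a e => by by_cases h : a ∈ e ∧ e ∈ H.edgeSet <;> simp [hw, h])
      (fun a e ha => by simp [hw, ha])
    have hheadH : ∀ e ∈ H.edgeSet, head e ∈ e := fun e he =>
      hhead e (SimpleGraph.edgeSet_mono hHG he)
    have hx : ∀ c : H.ConnectedComponent, ∃ xv, H.connectedComponentMk xv = c ∧
        ∀ u, H.Adj u xv → head s(u, xv) ≠ xv := by
      intro c
      obtain ⟨xv, hr, hs⟩ := exists_sink hac head hheadH c.out
      refine ⟨xv, ?_, hs⟩
      rw [← ConnectedComponent.sound hr]
      exact c.out_eq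
    choose x hx1 hx2 using hx
    refine ⟨x, hx1, ?_⟩
    -- key claim
    have key : ∀ (c c' : H.ConnectedComponent) (a b : V), H.Adj (x c) a → H.Adj (x c') b →
        G.Adj a b → head s(a, b) = b → False := by
      intro c c' a b hca hcb hGab hhd
      have hbx : b ≠ x c' := fun h => H.irrefl (h ▸ hcb)
      have he0H : s(b, x c') ∈ H.edgeSet := by
        rw [SimpleGraph.mem_edgeSet]; exact hcb.symm
      have he0G : s(b, x c') ∈ G.edgeSet := SimpleGraph.edgeSet_mono hHG he0H
      have hhd0 : head s(b, x c') = b := by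
        have h1 := hheadH _ he0H
        rw [Sym2.mem_iff] at h1
        have h2 := hx2 c' b hcb.symm
        rw [Sym2.eq_swap] at h2
        tauto
      have he0b : s(b, x c') ∈ bundle G head b := mem_bundle.mpr ⟨he0G, hhd0⟩
      have heb : s(a, b) ∈ bundle G head b := mem_bundle.mpr ⟨hGab, hhd⟩
      have hne : s(a, b) ≠ s(b, x c') := by
        intro h
        rw [Sym2.eq_iff] at h
        rcases h with ⟨h1, h2⟩ | ⟨h1, h2⟩
        · exact hGab.ne h1
        · rw [h1] at hca
          have hcc : c = c' := by
            rw [← hx1 c, ← hx1 c']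
            exact ConnectedComponent.sound hca.reachable
          rw [hcc] at hca
          exact H.irrefl hca
      have hLHS : 1 ≤ ∑ e ∈ (bundle G head b).erase s(a, b), w (x c') e := by
        have hmem : s(b, x c') ∈ (bundle G head b).erase s(a, b) :=
          Finset.mem_erase.mpr ⟨fun h => hne h.symm, he0b⟩
        have hval : w (x c') s(b, x c') = 1 := by
          simp [hw, he0H]
        calc (1 : ℕ) = w (x c') s(b, x c') := hval.symm
          _ ≤ _ := Finset.single_le_sum (fun i _ => Nat.zero_le _) hmem
      have hRHS : ∑ e ∈ bundle G head (x c'), w (x c') e = 0 := by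
        refine Finset.sum_eq_zero fun e' he' => ?_
        obtain ⟨heG, hhde⟩ := mem_bundle.mp he'
        by_cases hcase : x c' ∈ e' ∧ e' ∈ H.edgeSet
        · obtain ⟨u, hu⟩ := Sym2.mem_iff_exists.mp hcase.1
          subst hu
          have hadj : H.Adj (x c') u := (SimpleGraph.mem_edgeSet H).mp hcase.2
          exact absurd (by rwa [Sym2.eq_swap]) (hx2 c' u hadj.symm)
        · simp [hw, hcase]
      have := hefx (x c') b s(a, b) heb
      rw [hRHS] at this
      omega
    intro a ha b hb hGab
    rw [Set.mem_iUnion] at ha hb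
    obtain ⟨c, hca⟩ := ha
    obtain ⟨c', hcb⟩ := hb
    rw [SimpleGraph.mem_neighborSet] at hca hcb
    have := hhead s(a, b) hGab
    rw [Sym2.mem_iff] at this
    rcases this with h | h
    · exact key c' c b a hcb hca hGab.symm (by rwa [Sym2.eq_swap])
    · exact key c c' a b hca hcb hGab h
  · intro hyp
    intro w hw1 hw0
    -- the contested graph H
    set H : SimpleGraph V := {
      Adj := fun u v => G.Adj u v ∧ w u s(u, v) = 1 ∧ w v s(u, v) = 1
      symm := by
        refine ⟨?_⟩; rintro u v ⟨h1, h2, h3⟩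
        refine ⟨h1.symm, ?_, ?_⟩ <;> rwa [Sym2.eq_swap]
      loopless := ⟨fun v h => G.irrefl h.1⟩ } with hHdef
    have hHG : H ≤ G := fun {u v} h => h.1
    have hHedge : ∀ e ∈ H.edgeSet, ∀ a ∈ e, w a e = 1 := by
      intro e he
      induction e with
      | _ u v =>
        intro a ha
        rw [Sym2.mem_iff] at ha
        rw [SimpleGraph.mem_edgeSet] at he
        rcases ha with rfl | rfl
        · exact he.2.1
        · exact he.2.2
    have hcomp : ∀ e ∈ H.edgeSet, ∀ a ∈ e, ∀ b ∈ e,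
        H.connectedComponentMk a = H.connectedComponentMk b := by
      intro e he
      induction e with
      | _ u v =>
        intro a ha b hb
        rw [Sym2.mem_iff] at ha hb
        rw [SimpleGraph.mem_edgeSet] at he
        have hadj := ConnectedComponent.connectedComponentMk_eq_of_adj he
        rcases ha with rfl | rfl <;> rcases hb with rfl | rfl
        · rfl
        · exact hadj
        · exact hadj.symm
        · rfl
    -- cyclic part
    set Q : H.ConnectedComponent → Prop := fun c => ∃ (a : V) (p : H.Walk a a),
      p.IsCycle ∧ H.connectedComponentMk a = c with hQdef
    set TC : V → Prop := fun v => Q (H.connectedComponentMk v) with hTCdef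
    -- forest part
    set H' : SimpleGraph V := {
      Adj := fun u v => H.Adj u v ∧ ¬ TC u ∧ ¬ TC v
      symm := by refine ⟨?_⟩; rintro u v ⟨h1, h2, h3⟩; exact ⟨h1.symm, h3, h2⟩
      loopless := ⟨fun v h => H.irrefl h.1⟩ } with hH'def
    have hH'H : H' ≤ H := fun {u v} h => h.1
    have hH'G : H' ≤ G := fun {u v} h => hHG h.1
    have hH'ac : H'.IsAcyclic := by
      intro v p hp
      have hT : TC v := by
        refine ⟨v, p.mapLe hH'H, hp.mapLe _, rfl⟩
      cases p with
      | nil => exact hp.ne_nil rfl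
      | cons h q => exact h.2.1 hT
    obtain ⟨x, hx1, hindep⟩ := hyp H' hH'G hH'ac
    set S : Set V := ⋃ c, H'.neighborSet (x c) with hSdef
    have hmemS : ∀ b, b ∈ S ↔ ∃ c, H'.Adj (x c) b := by
      intro b
      rw [hSdef, Set.mem_iUnion]
      simp [SimpleGraph.mem_neighborSet]
    have hSH' : ∀ b ∈ S, H'.Adj (x (H'.connectedComponentMk b)) b := by
      intro b hb
      obtain ⟨c, hc⟩ := (hmemS b).mp hb
      have : c = H'.connectedComponentMk b := by
        rw [← hx1 c]
        exact ConnectedComponent.sound hc.reachable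
      rwa [← this]
    have hxS : ∀ c, x c ∉ S := by
      intro c hc
      obtain ⟨c', hc'⟩ := (hmemS _).mp hc
      have : c' = c := by
        rw [← hx1 c', ← hx1 c]
        exact ConnectedComponent.sound hc'.reachable
      rw [this] at hc'
      exact H'.irrefl hc'
    have hSnTC : ∀ b ∈ S, ¬ TC b := fun b hb => (hSH' b hb).2.2
    -- choose a cycle in each cyclic component
    have hbase : ∀ c : H.ConnectedComponent, ∃ (a : V) (p : H.Walk a a),
        Q c → (p.IsCycle ∧ H.connectedComponentMk a = c) := by
      intro c
      by_cases hc : Q c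
      · obtain ⟨a, p, h1, h2⟩ := hc
        exact ⟨a, p, fun _ => ⟨h1, h2⟩⟩
      · exact ⟨c.out, Walk.nil, fun h => absurd h hc⟩
    choose base cyc hcyc using hbase
    set dC : V → ℕ := fun v => H.dist (base (H.connectedComponentMk v)) v with hdCdef
    have hsupmk : ∀ c, Q c → ∀ v ∈ (cyc c).support, H.connectedComponentMk v = c ∧
        H.Reachable (base c) v := by
      intro c hQc v hv
      have hr : H.Reachable (base c) v := ⟨(cyc c).takeUntil v hv⟩
      exact ⟨by rw [← (hcyc c hQc).2]; exact (ConnectedComponent.sound hr).symm, hr⟩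
    -- every vertex of a closed walk is the second of some dart
    have hdart : ∀ (a : V) (p : H.Walk a a), p ≠ Walk.nil → ∀ v ∈ p.support,
        ∃ d ∈ p.darts, d.snd = v := by
      intro a p hnil v hv
      have htail : v ∈ p.support.tail := by
        cases p with
        | nil => exact absurd rfl hnil
        | cons h q =>
          simp only [Walk.support_cons, List.tail_cons]
          rw [Walk.support_cons] at hv
          rcases List.mem_cons.mp hv with rfl | hv
          · exact q.end_mem_support
          · exact hv
      rw [← Walk.map_snd_darts, List.mem_map] at htail
      obtain ⟨d, hd, hds⟩ := htail
      exact ⟨d, hd, hds⟩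
    have hTCadj : ∀ u v : V, H.Adj u v → TC u → TC v := by
      intro u v huv ht
      have h1 : Q (H.connectedComponentMk u) := ht
      rw [ConnectedComponent.connectedComponentMk_eq_of_adj huv] at h1
      exact h1
    -- choice of head for contested edges in cyclic components
    have hcEx : ∀ e : Sym2 V, ∃ z : V, e ∈ H.edgeSet → (∃ y ∈ e, TC y) →
        (z ∈ e ∧ (∀ d ∈ (cyc (H.connectedComponentMk e.out.1)).darts, d.edge = e → d.snd = z) ∧
         ((∀ d ∈ (cyc (H.connectedComponentMk e.out.1)).darts, d.edge ≠ e) →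
           ∀ y ∈ e, dC y ≤ dC z)) := by
      intro e
      by_cases hH : e ∈ H.edgeSet
      swap
      · exact ⟨e.out.1, fun h => absurd h hH⟩
      by_cases hTCe : ∃ y ∈ e, TC y
      swap
      · exact ⟨e.out.1, fun _ h => absurd h hTCe⟩
      set c := H.connectedComponentMk e.out.1 with hc
      have hQc : Q c := by
        obtain ⟨y, hy, hty⟩ := hTCe
        have h1 : Q (H.connectedComponentMk y) := hty
        rwa [hcomp e hH y hy e.out.1 (Sym2.out_fst_mem e)] at h1
      by_cases hd : ∃ d ∈ (cyc c).darts, d.edge = e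
      · obtain ⟨d0, hd0, hde⟩ := hd
        refine ⟨d0.snd, fun _ _ => ⟨?_, ?_, ?_⟩⟩
        · rw [← hde]
          exact Sym2.mem_mk_right _ _
        · intro d hdm heq
          have hnodup : ((cyc c).darts.map Dart.edge).Nodup := by
            have := (hcyc c hQc).1.edges_nodup
            rwa [Walk.edges] at this
          have := List.inj_on_of_nodup_map hnodup hdm hd0 (by rw [heq, hde])
          rw [this]
        · intro hnone
          exact absurd hde (hnone d0 hd0)
      · push_neg at hd
        have hu := Sym2.out_fst_mem e
        set u := e.out.1 with hu'
        set v := Sym2.Mem.other hu with hv'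
        have huv : s(u, v) = e := Sym2.other_spec hu
        have hmem : ∀ y ∈ e, y = u ∨ y = v := by
          intro y hy
          rw [← huv, Sym2.mem_iff] at hy
          exact hy
        by_cases hcmp : dC u ≤ dC v
        · refine ⟨v, fun _ _ => ⟨by rw [← huv]; exact Sym2.mem_mk_right _ _, fun d hdm heq => absurd heq (hd d hdm), fun _ y hy => ?_⟩⟩
          rcases hmem y hy with rfl | rfl
          · exact hcmp
          · exact le_refl _
        · refine ⟨u, fun _ _ => ⟨by rw [← huv]; exact Sym2.mem_mk_left _ _, fun d hdm heq => absurd heq (hd d hdm), fun _ y hy => ?_⟩⟩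
          rcases hmem y hy with rfl | rfl
          · exact le_refl _
          · omega
    choose hc hcspec using hcEx
    -- choice of head for contested tree edges
    set mk' : V → H'.ConnectedComponent := fun v => H'.connectedComponentMk v with hmk'def
    have hmk'adj : ∀ u v : V, H'.Adj u v → mk' u = mk' v :=
      fun u v h => ConnectedComponent.connectedComponentMk_eq_of_adj h
    have hxreach : ∀ c : H'.ConnectedComponent, ∀ v, mk' v = c → H'.Reachable (x c) v := by
      intro c v hv
      exact ConnectedComponent.exact (by rw [hx1 c, ← hv])
    have htEx : ∀ e : Sym2 V, ∃ z : V, e ∈ H.edgeSet → (∀ y ∈ e, ¬ TC y) →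
        (z ∈ e ∧ ∃ y, e = s(y, z) ∧
          H'.dist (x (mk' z)) y < H'.dist (x (mk' z)) z) := by
      intro e
      by_cases hH : e ∈ H.edgeSet
      swap
      · exact ⟨e.out.1, fun h => absurd h hH⟩
      by_cases hTCe : ∀ y ∈ e, ¬ TC y
      swap
      · exact ⟨e.out.1, fun _ h => absurd h hTCe⟩
      have hu := Sym2.out_fst_mem e
      set u := e.out.1 with hu'
      set v := Sym2.Mem.other hu with hv'
      have huv : s(u, v) = e := Sym2.other_spec hu
      have hadj : H.Adj u v := by
        rw [← SimpleGraph.mem_edgeSet, huv]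
        exact hH
      have hadj' : H'.Adj u v := ⟨hadj, hTCe u hu, hTCe v (Sym2.other_mem hu)⟩
      have hmkuv : mk' u = mk' v := hmk'adj u v hadj'
      have hru : H'.Reachable (x (mk' u)) u := hxreach _ u rfl
      have hne := forest_dist_ne hH'ac hru hadj'
      rcases lt_or_gt_of_ne hne with hlt | hgt
      · refine ⟨v, fun _ _ => ⟨by rw [← huv]; exact Sym2.mem_mk_right _ _, u, ?_, ?_⟩⟩
        · rw [← huv]
        · rw [← hmkuv]
          exact hlt
      · refine ⟨u, fun _ _ => ⟨hu, v, ?_, ?_⟩⟩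
        · rw [← huv, Sym2.eq_swap]
        · exact hgt
    -- choice of head for non-contested edges
    have hsEx : ∀ e : Sym2 V, ∃ z : V, e ∈ G.edgeSet → e ∉ H.edgeSet →
        (z ∈ e ∧ z ∉ S ∧ ∀ y ∈ e, w y e = 1 → y ∈ S ∨ y = z) := by
      intro e
      by_cases hG : e ∈ G.edgeSet
      swap
      · exact ⟨e.out.1, fun h => absurd h hG⟩
      by_cases hH : e ∈ H.edgeSet
      · exact ⟨e.out.1, fun _ h => absurd hH h⟩
      have hu := Sym2.out_fst_mem e
      set u := e.out.1 with hu'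
      set v := Sym2.Mem.other hu with hv'
      have hv : v ∈ e := Sym2.other_mem hu
      have huv : s(u, v) = e := Sym2.other_spec hu
      have hGadj : G.Adj u v := by
        rw [← SimpleGraph.mem_edgeSet, huv]
        exact hG
      have hmem : ∀ y ∈ e, y = u ∨ y = v := by
        intro y hy
        rw [← huv, Sym2.mem_iff] at hy
        exact hy
      have hnotboth : ¬ (w u e = 1 ∧ w v e = 1) := by
        rintro ⟨h1, h2⟩
        apply hH
        rw [← huv, SimpleGraph.mem_edgeSet]
        refine ⟨hGadj, ?_, ?_⟩ <;> rw [huv] <;> assumption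
      have hnotbothS : ¬ (u ∈ S ∧ v ∈ S) := by
        rintro ⟨h1, h2⟩
        exact hindep u h1 v h2 hGadj
      by_cases hcu : w u e = 1 ∧ u ∉ S
      · refine ⟨u, fun _ _ => ⟨hu, hcu.2, fun y hy hy1 => ?_⟩⟩
        rcases hmem y hy with rfl | rfl
        · exact Or.inr rfl
        · exact absurd ⟨hcu.1, hy1⟩ hnotboth
      by_cases hcv : w v e = 1 ∧ v ∉ S
      · refine ⟨v, fun _ _ => ⟨hv, hcv.2, fun y hy hy1 => ?_⟩⟩
        rcases hmem y hy with rfl | rfl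
        · exact absurd ⟨hy1, hcv.1⟩ hnotboth
        · exact Or.inr rfl
      push_neg at hcu hcv
      by_cases hus : u ∈ S
      · have hvs : v ∉ S := fun h => hnotbothS ⟨hus, h⟩
        refine ⟨v, fun _ _ => ⟨hv, hvs, fun y hy hy1 => ?_⟩⟩
        rcases hmem y hy with rfl | rfl
        · exact Or.inl hus
        · exact Or.inr rfl
      · refine ⟨u, fun _ _ => ⟨hu, hus, fun y hy hy1 => ?_⟩⟩
        rcases hmem y hy with rfl | rfl
        · exact Or.inr rfl
        · exact Or.inl (hcv hy1)
    choose ht htspec using htEx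
    choose hs hsspec using hsEx
    -- the orientation
    set head : Sym2 V → V := fun e =>
      if e ∈ H.edgeSet then (if ∃ y ∈ e, TC y then hc e else ht e) else hs e with hheaddef
    have hhead_c : ∀ e, e ∈ H.edgeSet → (∃ y ∈ e, TC y) → head e = hc e := by
      intro e h1 h2
      rw [hheaddef]
      simp only
      rw [if_pos h1, if_pos h2]
    have hhead_t : ∀ e, e ∈ H.edgeSet → (∀ y ∈ e, ¬ TC y) → head e = ht e := by
      intro e h1 h2
      rw [hheaddef]
      simp only
      rw [if_pos h1, if_neg]
      push_neg
      exact h2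
    have hhead_s : ∀ e, e ∉ H.edgeSet → head e = hs e := by
      intro e h1
      rw [hheaddef]
      simp only
      rw [if_neg h1]
    have hH0 : ∀ e ∈ G.edgeSet, head e ∈ e := by
      intro e heG
      by_cases h1 : e ∈ H.edgeSet
      · by_cases h2 : ∃ y ∈ e, TC y
        · rw [hhead_c e h1 h2]
          exact (hcspec e h1 h2).1
        · push_neg at h2
          rw [hhead_t e h1 h2]
          exact (htspec e h1 h2).1
      · rw [hhead_s e h1]
        exact (hsspec e heG h1).1
    -- P1 : every vertex in a cyclic component receives a contested edge
    have P1 : ∀ v, TC v → ∃ e, e ∈ H.edgeSet ∧ v ∈ e ∧ head e = v := by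
      intro v htv
      set c := H.connectedComponentMk v with hcdef
      have hQc : Q c := htv
      obtain ⟨hcycIsC, hbmk⟩ := hcyc c hQc
      have hnenil : cyc c ≠ Walk.nil := hcycIsC.ne_nil
      by_cases hvs : v ∈ (cyc c).support
      · obtain ⟨d0, hd0, hd0s⟩ := hdart _ (cyc c) hnenil v hvs
        set e := d0.edge with hedef
        have heH : e ∈ H.edgeSet := d0.edge_mem
        have hve : v ∈ e := by
          rw [hedef, ← hd0s]
          exact Sym2.mem_mk_right _ _
        have hTCe : ∃ y ∈ e, TC y := ⟨v, hve, htv⟩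
        have hcOf : H.connectedComponentMk e.out.1 = c := by
          rw [hcomp e heH e.out.1 (Sym2.out_fst_mem e) v hve]
        have hspec := hcspec e heH hTCe
        rw [hcOf] at hspec
        refine ⟨e, heH, hve, ?_⟩
        rw [hhead_c e heH hTCe, ← hd0s]
        exact (hspec.2.1 d0 hd0 rfl).symm
      · have hbneq : base c ≠ v := fun h => hvs (h ▸ (cyc c).start_mem_support)
        have hrv : H.Reachable (base c) v := ConnectedComponent.exact (by rw [hbmk, hcdef])
        obtain ⟨u, huvadj, hdist⟩ := exists_adj_dist hrv hbneq
        set e : Sym2 V := s(u, v) with hedef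
        have heH : e ∈ H.edgeSet := huvadj
        have hve : v ∈ e := Sym2.mem_mk_right u v
        have hTCe : ∃ y ∈ e, TC y := ⟨v, hve, htv⟩
        have hcOf : H.connectedComponentMk e.out.1 = c := by
          rw [hcomp e heH e.out.1 (Sym2.out_fst_mem e) v hve]
        have hspec := hcspec e heH hTCe
        rw [hcOf] at hspec
        have hnd : ∀ d ∈ (cyc c).darts, d.edge ≠ e := by
          intro d hd he
          apply hvs
          have hmv : v ∈ d.edge := by rw [he]; exact hve
          rcases Sym2.mem_iff.mp hmv with h | h
          · rw [h]
            exact (cyc c).dart_fst_mem_support_of_mem_darts hd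
          · rw [h]
            exact (cyc c).dart_snd_mem_support_of_mem_darts hd
        have h3 := hspec.2.2 hnd
        have hzuv : hc e = u ∨ hc e = v := Sym2.mem_iff.mp hspec.1
        have hmkuc : H.connectedComponentMk u = c := by
          rw [hcdef]
          exact ConnectedComponent.connectedComponentMk_eq_of_adj huvadj
        have hdCu : dC u = H.dist (base c) u := by
          show H.dist (base (H.connectedComponentMk u)) u = H.dist (base c) u
          rw [hmkuc]
        have hdCv : dC v = H.dist (base c) v := rfl
        rcases hzuv with hzu | hzv
        · exfalso
          have h4 := h3 v hve
          rw [hzu, hdCu, hdCv] at h4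
          omega
        · exact ⟨e, heH, hve, by rw [hhead_c e heH hTCe, hzv]⟩
    -- P2 : non-root tree vertices receive their parent edge
    have P2 : ∀ v, ¬ TC v → v ≠ x (mk' v) → ∃ u, H'.Adj u v ∧ head s(u, v) = v := by
      intro v htv hvx
      set r := x (mk' v) with hrdef
      have hrv : H'.Reachable r v := hxreach _ v rfl
      obtain ⟨u, huv, hdist⟩ := exists_adj_dist hrv (fun h => hvx h.symm)
      have heH : s(u, v) ∈ H.edgeSet := hH'H huv
      have hTCe : ∀ y ∈ s(u, v), ¬ TC y := by
        intro y hy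
        rcases Sym2.mem_iff.mp hy with rfl | rfl
        · exact huv.2.1
        · exact htv
      have hspec := htspec s(u, v) heH hTCe
      obtain ⟨hz, y, hey, hylt⟩ := hspec
      have hmkuv : mk' u = mk' v := hmk'adj u v huv
      rcases Sym2.mem_iff.mp hz with hzu | hzv
      · exfalso
        -- ht s(u,v) = u; then y = v and dist r v < dist r u, contradiction
        have hyv : y = v := by
          rw [hzu] at hey
          rcases (Sym2.eq_iff.mp hey) with ⟨h1, h2⟩ | ⟨h1, h2⟩
          · rw [h2] at huv
            exact absurd rfl huv.ne
          · exact h2.symm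
        rw [hzu, hmkuv, ← hrdef, hyv] at hylt
        omega
      · refine ⟨u, huv, ?_⟩
        rw [hhead_t s(u, v) heH hTCe, hzv]
    -- P3 : roots do not receive contested edges
    have P3 : ∀ (c : H'.ConnectedComponent) (u : V), H'.Adj u (x c) → head s(u, x c) ≠ x c := by
      intro c u huv hhd
      have heH : s(u, x c) ∈ H.edgeSet := hH'H huv
      have hTCe : ∀ y ∈ s(u, x c), ¬ TC y := by
        intro y hy
        rcases Sym2.mem_iff.mp hy with rfl | rfl
        · exact huv.2.1
        · exact huv.2.2
      rw [hhead_t _ heH hTCe] at hhd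
      obtain ⟨hz, y, hey, hylt⟩ := htspec s(u, x c) heH hTCe
      rw [hhd] at hey hylt
      have hyu : y = u := by
        rcases Sym2.eq_iff.mp hey with ⟨h1, h2⟩ | ⟨h1, h2⟩
        · exact h1.symm
        · rw [h1] at huv
          exact absurd rfl huv.ne
      have hmkc : mk' (x c) = c := hx1 c
      rw [hyu, hmkc] at hylt
      rw [SimpleGraph.dist_self] at hylt
      omega
    -- P4 : special children receive only their parent edge
    have P4 : ∀ b ∈ S, ∀ e ∈ G.edgeSet, b ∈ e → head e = b → e = s(x (mk' b), b) := by
      intro b hbS e heG hbe hhd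
      have hbp : H'.Adj (x (mk' b)) b := hSH' b hbS
      have hbTC : ¬ TC b := hSnTC b hbS
      by_cases h1 : e ∈ H.edgeSet
      · by_cases h2 : ∃ y ∈ e, TC y
        · exfalso
          obtain ⟨y, hy, hty⟩ := h2
          apply hbTC
          have : Q (H.connectedComponentMk y) := hty
          rw [hcomp e h1 y hy b hbe] at this
          exact this
        · push_neg at h2
          rw [hhead_t e h1 h2] at hhd
          obtain ⟨hz, y, hey, hylt⟩ := htspec e h1 h2
          rw [hhd] at hey hylt
          -- e = s(y, b), H'.Adj y b, dist (x (mk' b)) y < dist (x (mk' b)) b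
          have hadjyb : H'.Adj y b := by
            have hHyb : H.Adj y b := by
              rw [← SimpleGraph.mem_edgeSet, ← hey]
              exact h1
            refine ⟨hHyb, ?_, hbTC⟩
            exact h2 y (by rw [hey]; exact Sym2.mem_mk_left _ _)
          have hdb : H'.dist (x (mk' b)) b = 1 := by
            have hle : H'.dist (x (mk' b)) b ≤ 1 := by
              simpa using H'.dist_le (Walk.cons hbp Walk.nil)
            have hne0 : H'.dist (x (mk' b)) b ≠ 0 := by
              intro h0
              exact hbp.ne (((hxreach (mk' b) b rfl).dist_eq_zero_iff).mp h0)
            omega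
          have hy0 : H'.dist (x (mk' b)) y = 0 := by omega
          have hry : H'.Reachable (x (mk' b)) y := (hxreach (mk' b) b rfl).trans hadjyb.symm.reachable
          have : x (mk' b) = y := (hry.dist_eq_zero_iff).mp hy0
          rw [hey, ← this]
      · rw [hhead_s e h1] at hhd
        have := (hsspec e heG h1).2.1
        rw [hhd] at this
        exact absurd hbS this
    -- P5 : solely valued edges of non-special vertices go to their owner
    have P5 : ∀ e ∈ G.edgeSet, e ∉ H.edgeSet → ∀ v ∈ e, w v e = 1 → v ∉ S → head e = v := by
      intro e heG heH v hve hwv hvS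
      rw [hhead_s e heH]
      obtain ⟨hz, hzS, hzkey⟩ := hsspec e heG heH
      rcases hzkey v hve hwv with h | h
      · exact absurd h hvS
      · exact h.symm
    have hmemb : ∀ (vv : V) (e : Sym2 V), e ∈ bundle G head vv ↔ e ∈ G.edgeSet ∧ head e = vv := by
      intro vv e
      simp [bundle]
    have hseq : ∀ (a b : V) (e : Sym2 V), a ≠ b → a ∈ e → b ∈ e → e = s(a, b) := by
      intro a b e hne ha hb
      obtain ⟨c', hc'⟩ := Sym2.mem_iff_exists.mp ha
      subst hc'
      rcases Sym2.mem_iff.mp hb with h | h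
      · exact absurd h.symm hne
      · rw [h]
    -- dichotomy : every agent is satisfied or is a needy root
    have hsat : ∀ a : V, (∃ e ∈ bundle G head a, w a e = 1) ∨
        (¬ TC a ∧ a = x (mk' a) ∧ ∀ e ∈ G.edgeSet, a ∈ e → w a e = 1 → e ∈ H.edgeSet) := by
      intro a
      by_cases hTa : TC a
      · obtain ⟨e, heH, hae, hhd⟩ := P1 a hTa
        exact Or.inl ⟨e, (hmemb a e).mpr ⟨SimpleGraph.edgeSet_mono hHG heH, hhd⟩,
          hHedge e heH a hae⟩
      by_cases hax : a = x (mk' a)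
      swap
      · obtain ⟨u, huv, hhd⟩ := P2 a hTa hax
        have heH : s(u, a) ∈ H.edgeSet := hH'H huv
        exact Or.inl ⟨s(u, a), (hmemb a _).mpr ⟨SimpleGraph.edgeSet_mono hHG heH, hhd⟩,
          hHedge _ heH a (Sym2.mem_mk_right u a)⟩
      by_cases hsolo : ∃ e, e ∈ G.edgeSet ∧ a ∈ e ∧ w a e = 1 ∧ e ∉ H.edgeSet
      · obtain ⟨e, heG, hae, hwe, heH⟩ := hsolo
        have haS : a ∉ S := by rw [hax]; exact hxS _
        exact Or.inl ⟨e, (hmemb a e).mpr ⟨heG, P5 e heG heH a hae hwe haS⟩, hwe⟩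
      · push_neg at hsolo
        exact Or.inr ⟨hTa, hax, hsolo⟩
    -- the orientation is EFX
    refine ⟨head, hH0, ?_⟩
    intro a b g hg
    by_cases hab : a = b
    · subst hab
      exact Finset.sum_le_sum_of_subset (Finset.erase_subset _ _)
    rcases hsat a with ⟨e0, he0b, he0w⟩ | ⟨hTa, hax, hneedy⟩
    · have hRHS : 1 ≤ ∑ e ∈ bundle G head a, w a e := by
        rw [← he0w]
        exact Finset.single_le_sum (fun i _ => Nat.zero_le _) he0b
      have hLHS : ∑ e ∈ (bundle G head b).erase g, w a e ≤ 1 := by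
        calc ∑ e ∈ (bundle G head b).erase g, w a e
            ≤ ∑ e ∈ (bundle G head b).erase g, (if e = s(a, b) then 1 else 0) := by
              refine Finset.sum_le_sum ?_
              intro e he
              by_cases hwae : w a e = 0
              · rw [hwae]
                exact Nat.zero_le _
              · have hae : a ∈ e := by_contra fun h => hwae (hw0 a e h)
                obtain ⟨heG, hhd⟩ := (hmemb b e).mp (Finset.mem_of_mem_erase he)
                have hbe : b ∈ e := hhd ▸ hH0 e heG
                rw [hseq a b e hab hae hbe, if_pos rfl]
                exact hw1 a _
          _ ≤ 1 := by
              rw [Finset.sum_ite_eq']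
              split_ifs <;> omega
      omega
    · have hLHS : ∑ e ∈ (bundle G head b).erase g, w a e = 0 := by
        refine Finset.sum_eq_zero ?_
        intro e he
        by_contra hwa
        have hae : a ∈ e := by_contra fun h => hwa (hw0 a e h)
        obtain ⟨heG, hhd⟩ := (hmemb b e).mp (Finset.mem_of_mem_erase he)
        have hbe : b ∈ e := hhd ▸ hH0 e heG
        have hw1e : w a e = 1 := le_antisymm (hw1 a e) (Nat.one_le_iff_ne_zero.mpr hwa)
        have heHs : e ∈ H.edgeSet := hneedy e heG hae hw1e
        have heab : e = s(a, b) := hseq a b e hab hae hbe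
        have hHab : H.Adj a b := by
          rw [← SimpleGraph.mem_edgeSet, ← heab]
          exact heHs
        have hTb : ¬ TC b := fun h => hTa (hTCadj b a hHab.symm h)
        have hadj' : H'.Adj a b := ⟨hHab, hTa, hTb⟩
        have hbS : b ∈ S := (hmemS b).mpr ⟨mk' a, by rw [← hax]; exact hadj'⟩
        have h4e := P4 b hbS e heG hbe hhd
        obtain ⟨hgG, hgd⟩ := (hmemb b g).mp hg
        have hbg : b ∈ g := hgd ▸ hH0 g hgG
        have h4g := P4 b hbS g hgG hbg hgd
        exact (Finset.ne_of_mem_erase he) (by rw [h4e, h4g])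
      rw [hLHS]
      exact Nat.zero_le _
end

section
/- If a finite simple graph G is 0-1 strongly EFX-orientable, then for every matching M in G, the subgraph of G induced by the set of vertices covered by M contains an independent set of size |M|. -/
open SimpleGraph
open scoped Classical

variable {V : Type*}

/-- A matching: a set of edges of `G` that are pairwise vertex-disjoint. -/
def IsMatchingSet (G : SimpleGraph V) (M : Finset (Sym2 V)) : Prop :=
  (∀ e ∈ M, e ∈ G.edgeSet) ∧
  ∀ e ∈ M, ∀ f ∈ M, e ≠ f → ∀ v : V, ¬(v ∈ e ∧ v ∈ f)

/-- If `G` is 0-1 strongly EFX-orientable, then for every matching `M` in `G`,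
the subgraph induced by the vertices covered by `M` contains an independent set of size `|M|`. -/
theorem matching_condition_of_zeroOne_stronglyEFXOrientable [Fintype V] (G : SimpleGraph V)
    (h : ZeroOneStronglyEFXOrientable G) :
    ∀ M : Finset (Sym2 V), IsMatchingSet G M →
      ∃ I : Finset V, I.card = M.card ∧ (∀ x ∈ I, ∃ e ∈ M, x ∈ e) ∧
        ∀ a ∈ I, ∀ b ∈ I, ¬ G.Adj a b := by
  intro M hM
  obtain ⟨hMedge, hMdisj⟩ := hM
  set w : V → Sym2 V → ℕ := fun x e => if x ∈ e ∧ e ∈ M then 1 else 0 with hw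
  obtain ⟨head, hhead, hEFX⟩ := h w
    (by intro a e; simp only [hw]; split <;> simp)
    (by intro a e ha; simp only [hw]; rw [if_neg]; rintro ⟨h1, _⟩; exact ha h1)
  have key : ∀ e ∈ M, ∀ g ∈ bundle G head (head e), g = e := by
    intro e he g hg
    by_contra hne
    have heE : e ∈ G.edgeSet := hMedge e he
    have hheadmem : head e ∈ e := hhead e heE
    have hdiag : ¬ e.IsDiag := G.not_isDiag_of_mem_edgeSet heE
    set u := Sym2.Mem.other hheadmem with hu
    have humem : u ∈ e := Sym2.other_mem hheadmem
    have hune : u ≠ head e := (Sym2.other_ne hdiag hheadmem)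
    have hzero : ∑ x ∈ bundle G head u, w u x = 0 := by
      apply Finset.sum_eq_zero
      intro x hx
      simp only [bundle, Finset.mem_filter, Finset.mem_univ, true_and] at hx
      simp only [hw]
      rw [if_neg]
      rintro ⟨hux, hxM⟩
      by_cases hxe : x = e
      · exact hune (hxe ▸ hx.2).symm
      · exact hMdisj x hxM e he hxe u ⟨hux, humem⟩
    have hEnv := hEFX u (head e) g hg
    have heB : e ∈ bundle G head (head e) := by
      simp [bundle, heE]
    have heErase : e ∈ (bundle G head (head e)).erase g :=
      Finset.mem_erase.mpr ⟨fun hh => hne hh.symm, heB⟩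
    have h1 : (1 : ℕ) ≤ ∑ x ∈ (bundle G head (head e)).erase g, w u x := by
      have : w u e = 1 := by simp [hw, humem, he]
      calc (1 : ℕ) = w u e := this.symm
        _ ≤ _ := Finset.single_le_sum (fun i _ => Nat.zero_le _) heErase
    omega
  have headmem : ∀ e ∈ M, head e ∈ e := fun e he => hhead e (hMedge e he)
  refine ⟨M.image head, ?_, ?_, ?_⟩
  · apply Finset.card_image_of_injOn
    intro e he e' he' hee'
    by_contra hne
    exact hMdisj e he e' he' hne (head e) ⟨headmem e he, hee' ▸ headmem e' he'⟩
  · intro x hx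
    obtain ⟨e, he, rfl⟩ := Finset.mem_image.mp hx
    exact ⟨e, he, headmem e he⟩
  · intro a ha b hb hadj
    obtain ⟨e, he, rfl⟩ := Finset.mem_image.mp ha
    obtain ⟨e', he', rfl⟩ := Finset.mem_image.mp hb
    have hee' : e ≠ e' := by
      rintro rfl; exact G.irrefl hadj
    have hgE : s(head e, head e') ∈ G.edgeSet := G.mem_edgeSet.mpr hadj
    have hgmem : head s(head e, head e') ∈ s(head e, head e') := hhead _ hgE
    rw [Sym2.mem_iff] at hgmem
    rcases hgmem with hga | hgb
    · have hgB : s(head e, head e') ∈ bundle G head (head e) := by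
        simp [bundle, hgE, hga]
      have := key e he _ hgB
      have hb'e : head e' ∈ e := by rw [← this]; exact Sym2.mem_mk_right _ _
      exact hMdisj e he e' he' hee' (head e') ⟨hb'e, headmem e' he'⟩
    · have hgB : s(head e, head e') ∈ bundle G head (head e') := by
        simp [bundle, hgE, hgb]
      have := key e' he' _ hgB
      have hae' : head e ∈ e' := by rw [← this]; exact Sym2.mem_mk_left _ _
      exact hMdisj e he e' he' hee' (head e) ⟨headmem e he, hae'⟩
end

section
/- Let G be a finite simple graph that violates the matching condition, i.e., there exists a matching M in G such that the subgraph induced by the vertices covered by M contains no independent set of size |M|. Let G' be obtained from G by subdividing any one edge of G twice (replacing an edge uv by a path u–x_1–x_2–v through two new vertices x_1, x_2). Then G' also violates the matching condition: there is a matching M' in G' such that the subgraph of G' induced by the vertices covered by M' contains no independent set of size |M'|. -/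
open SimpleGraph
open scoped Classical

variable {V : Type*}

/-- The matching condition: every matching `M` admits an independent set of size `|M|`
inside the subgraph induced by the vertices covered by `M`. -/
def MatchingCondition (G : SimpleGraph V) : Prop :=
  ∀ M : Finset (Sym2 V), IsMatchingSet G M →
    ∃ I : Finset V, I.card = M.card ∧ (∀ x ∈ I, ∃ e ∈ M, x ∈ e) ∧
      ∀ a ∈ I, ∀ b ∈ I, ¬ G.Adj a b

/-- The graph obtained from `G` by subdividing the edge `uv` twice: delete `uv`, add two new
vertices `x₁ = Sum.inr 0` and `x₂ = Sum.inr 1`, and add the edges `u x₁`, `x₁ x₂`, `x₂ v`. -/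
def subdivideTwice (G : SimpleGraph V) (u v : V) : SimpleGraph (V ⊕ Fin 2) :=
  SimpleGraph.fromEdgeSet
    ((Sym2.map Sum.inl '' (G.edgeSet \ {s(u, v)})) ∪
      {s(Sum.inl u, Sum.inr 0), s(Sum.inr 0, Sum.inr 1), s(Sum.inr 1, Sum.inl v)})

lemma adj_inl_inl (G : SimpleGraph V) (u v a b : V) :
    (subdivideTwice G u v).Adj (Sum.inl a) (Sum.inl b) ↔ G.Adj a b ∧ s(a,b) ≠ s(u,v) := by
  rw [subdivideTwice, fromEdgeSet_adj]
  constructor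
  · rintro ⟨h, hne⟩
    rcases h with h | h
    · obtain ⟨e, ⟨he, hne'⟩, hmap⟩ := h
      have : e = s(a, b) := Sym2.map.injective Sum.inl_injective (by rw [hmap]; rfl)
      subst this
      exact ⟨he, fun hc => hne' (by simpa using hc)⟩
    · simp only [Set.mem_insert_iff, Set.mem_singleton_iff, Sym2.eq, Sym2.rel_iff', Prod.mk.injEq,
        Prod.swap_prod_mk] at h
      rcases h with (⟨h1,h2⟩|⟨h1,h2⟩) | (h|h) | (⟨h1,h2⟩|⟨h1,h2⟩) <;> simp_all
  · rintro ⟨hab, hne⟩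
    refine ⟨Or.inl ⟨s(a,b), ⟨hab, by simpa using hne⟩, rfl⟩, by rintro h; simp at h; exact G.loopless.irrefl a (h ▸ hab)⟩

lemma adj_u_x0 (G : SimpleGraph V) (u v : V) :
    (subdivideTwice G u v).Adj (Sum.inl u) (Sum.inr 0) := by
  rw [subdivideTwice, fromEdgeSet_adj]; exact ⟨Or.inr (by simp), by simp⟩

lemma adj_x0_x1 (G : SimpleGraph V) (u v : V) :
    (subdivideTwice G u v).Adj (Sum.inr 0) (Sum.inr 1) := by
  rw [subdivideTwice, fromEdgeSet_adj]; exact ⟨Or.inr (by simp), by simp⟩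

lemma adj_x1_v (G : SimpleGraph V) (u v : V) :
    (subdivideTwice G u v).Adj (Sum.inr 1) (Sum.inl v) := by
  rw [subdivideTwice, fromEdgeSet_adj]; exact ⟨Or.inr (by simp), by simp⟩

/-- shrink a big independent covered set to exactly the right size -/
lemma shrink (G : SimpleGraph V) (N : Finset (Sym2 V)) (K : Finset V)
    (hc : N.card ≤ K.card) (hcov : ∀ a ∈ K, ∃ e ∈ N, a ∈ e)
    (hind : ∀ a ∈ K, ∀ b ∈ K, ¬ G.Adj a b) :
    ∃ I : Finset V, I.card = N.card ∧ (∀ x ∈ I, ∃ e ∈ N, x ∈ e) ∧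
      ∀ a ∈ I, ∀ b ∈ I, ¬ G.Adj a b := by
  obtain ⟨I, hIK, hIc⟩ := Finset.exists_subset_card_eq hc
  exact ⟨I, hIc, fun x hx => hcov x (hIK hx), fun a ha b hb => hind a (hIK ha) b (hIK hb)⟩

lemma finishV (G : SimpleGraph V) (u v : V) (N : Finset (Sym2 V))
    (hno : ¬ ∃ I : Finset V, I.card = N.card ∧ (∀ x ∈ I, ∃ e ∈ N, x ∈ e) ∧
      ∀ a ∈ I, ∀ b ∈ I, ¬ G.Adj a b)
    (I' : Finset (V ⊕ Fin 2))
    (hcard : I'.card = N.card + 1)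
    (hindep : ∀ a ∈ I', ∀ b ∈ I', ¬ (subdivideTwice G u v).Adj a b)
    (hcov : ∀ z ∈ I', (∃ a, z = Sum.inl a ∧ ((∃ e ∈ N, a ∈ e) ∨ a = v)) ∨
      z = Sum.inr 0 ∨ z = Sum.inr 1)
    (hvx : Sum.inr 0 ∈ I' → (∃ e ∈ N, v ∈ e) ∨ Sum.inl v ∉ I') : False := by
  classical
  set J : Finset V := I'.preimage Sum.inl (Sum.inl_injective.injOn) with hJ
  have hmemJ : ∀ a : V, a ∈ J ↔ Sum.inl a ∈ I' := by
    intro a; simp [hJ, Finset.mem_preimage]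
  have hnotboth : ¬ (Sum.inr 0 ∈ I' ∧ Sum.inr 1 ∈ I') := by
    rintro ⟨h0, h1⟩; exact hindep _ h0 _ h1 (adj_x0_x1 G u v)
  have hJind : ∀ a ∈ J, ∀ b ∈ J, G.Adj a b → s(a,b) = s(u,v) := by
    intro a ha b hb hab
    by_contra hne
    exact hindep _ ((hmemJ a).1 ha) _ ((hmemJ b).1 hb) ((adj_inl_inl G u v a b).2 ⟨hab, hne⟩)
  -- generic closing step
  have key : ∀ K : Finset V, N.card ≤ K.card → K ⊆ J → (u ∉ K ∨ v ∉ K) →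
      (∀ a ∈ K, ∃ e ∈ N, a ∈ e) → False := by
    intro K hc hKJ huvK hcov'
    apply hno
    apply shrink G N K hc hcov'
    intro a ha b hb hab
    have := hJind a (hKJ ha) b (hKJ hb) hab
    rw [Sym2.eq_iff] at this
    rcases this with ⟨rfl, rfl⟩ | ⟨rfl, rfl⟩
    · rcases huvK with h | h; exacts [h ha, h hb]
    · rcases huvK with h | h; exacts [h hb, h ha]
  -- a card bound helper
  have cardb : ∀ R : Finset (V ⊕ Fin 2), I' ⊆ J.image Sum.inl ∪ R →
      I'.card ≤ J.card + R.card := by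
    intro R hsub
    calc I'.card ≤ (J.image Sum.inl ∪ R).card := Finset.card_le_card hsub
    _ ≤ (J.image Sum.inl).card + R.card := Finset.card_union_le _ _
    _ = J.card + R.card := by rw [Finset.card_image_of_injective _ Sum.inl_injective]
  have hcovJ : ∀ a ∈ J, (∃ e ∈ N, a ∈ e) ∨ a = v := by
    intro a ha
    rcases hcov _ ((hmemJ a).1 ha) with ⟨b, hb, hc⟩ | h | h
    · obtain rfl := Sum.inl_injective hb; exact hc
    · simp at h
    · simp at h
  by_cases h0 : Sum.inr 0 ∈ I'
  · have h1 : Sum.inr 1 ∉ I' := fun h1 => hnotboth ⟨h0, h1⟩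
    have hu : u ∉ J := fun hu => hindep _ ((hmemJ u).1 hu) _ h0 (adj_u_x0 G u v)
    have hJc : N.card ≤ J.card := by
      have := cardb {Sum.inr 0} (by
        intro z hz
        rcases hcov z hz with ⟨a, rfl, _⟩ | rfl | rfl
        · exact Finset.mem_union_left _ (Finset.mem_image_of_mem _ ((hmemJ a).2 hz))
        · exact Finset.mem_union_right _ (by simp)
        · exact absurd hz h1)
      simp only [Finset.card_singleton] at this
      omega
    rcases hvx h0 with hvc | hvn
    · exact key J hJc le_rfl (Or.inl hu) (fun a ha => by
        rcases hcovJ a ha with h | rfl; exacts [h, hvc])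
    · have hv : v ∉ J := fun hv => hvn ((hmemJ v).1 hv)
      exact key J hJc le_rfl (Or.inl hu) (fun a ha => by
        rcases hcovJ a ha with h | rfl; exacts [h, absurd ha hv])
  · by_cases h1 : Sum.inr 1 ∈ I'
    · have hv : v ∉ J := fun hv => hindep _ h1 _ ((hmemJ v).1 hv) (adj_x1_v G u v)
      have hJc : N.card ≤ J.card := by
        have := cardb {Sum.inr 1} (by
          intro z hz
          rcases hcov z hz with ⟨a, rfl, _⟩ | rfl | rfl
          · exact Finset.mem_union_left _ (Finset.mem_image_of_mem _ ((hmemJ a).2 hz))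
          · exact absurd hz h0
          · exact Finset.mem_union_right _ (by simp))
        simp only [Finset.card_singleton] at this
        omega
      exact key J hJc le_rfl (Or.inr hv) (fun a ha => by
        rcases hcovJ a ha with h | rfl; exacts [h, absurd ha hv])
    · have hJc : N.card + 1 ≤ J.card := by
        have := cardb ∅ (by
          intro z hz
          rcases hcov z hz with ⟨a, rfl, _⟩ | rfl | rfl
          · exact Finset.mem_union_left _ (Finset.mem_image_of_mem _ ((hmemJ a).2 hz))
          · exact absurd hz h0
          · exact absurd hz h1)
        simp only [Finset.card_empty] at this
        omega
      have hec : N.card ≤ (J.erase v).card := by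
        have := Finset.pred_card_le_card_erase (s := J) (a := v)
        omega
      exact key (J.erase v) hec (Finset.erase_subset _ _) (Or.inr (Finset.notMem_erase _ _))
        (fun a ha => by
          rcases hcovJ a (Finset.erase_subset _ _ ha) with h | rfl
          exacts [h, absurd rfl (Finset.ne_of_mem_erase ha)])

lemma mapped_mem_edgeSet (G : SimpleGraph V) (u v : V) {e : Sym2 V}
    (he : e ∈ G.edgeSet) (hne : e ≠ s(u,v)) :
    Sym2.map Sum.inl e ∈ (subdivideTwice G u v).edgeSet := by
  induction e using Sym2.ind with
  | _ a b =>
    rw [Sym2.map_pair_eq, SimpleGraph.mem_edgeSet] at *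
    exact (adj_inl_inl G u v a b).2 ⟨he, by simpa using hne⟩

lemma inr_not_mem_map (i : Fin 2) (e : Sym2 V) :
    (Sum.inr i : V ⊕ Fin 2) ∉ Sym2.map Sum.inl e := by
  simp [Sym2.mem_map]

lemma mem_map_inl {z : V ⊕ Fin 2} {e : Sym2 V} :
    z ∈ Sym2.map (Sum.inl : V → V ⊕ Fin 2) e ↔ ∃ a ∈ e, Sum.inl a = z := Sym2.mem_map

lemma image_matching (G : SimpleGraph V) (u v : V) {M : Finset (Sym2 V)}
    (hM : IsMatchingSet G M) (hsv : s(u,v) ∉ M) :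
    (∀ e ∈ M.image (Sym2.map (Sum.inl : V → V ⊕ Fin 2)), e ∈ (subdivideTwice G u v).edgeSet) ∧
    (∀ e ∈ M.image (Sym2.map (Sum.inl : V → V ⊕ Fin 2)), ∀ f ∈ M.image (Sym2.map (Sum.inl : V → V ⊕ Fin 2)), e ≠ f →
      ∀ z : V ⊕ Fin 2, ¬(z ∈ e ∧ z ∈ f)) ∧
    (M.image (Sym2.map (Sum.inl : V → V ⊕ Fin 2))).card = M.card := by
  refine ⟨?_, ?_, Finset.card_image_of_injective _ (Sym2.map.injective Sum.inl_injective)⟩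
  · intro e he
    obtain ⟨e₁, he₁, rfl⟩ := Finset.mem_image.1 he
    exact mapped_mem_edgeSet G u v (hM.1 _ he₁) (fun h => hsv (h ▸ he₁))
  · intro e he f hf hef z ⟨hze, hzf⟩
    obtain ⟨e₁, he₁, rfl⟩ := Finset.mem_image.1 he
    obtain ⟨f₁, hf₁, rfl⟩ := Finset.mem_image.1 hf
    obtain ⟨a, ha, rfl⟩ := mem_map_inl.1 hze
    obtain ⟨b, hb, hba⟩ := mem_map_inl.1 hzf
    obtain rfl := Sum.inl_injective hba
    exact hM.2 e₁ he₁ f₁ hf₁ (fun h => hef (h ▸ rfl)) b ⟨ha, hb⟩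

lemma caseMid (G : SimpleGraph V) (u v : V) (M : Finset (Sym2 V))
    (hM : IsMatchingSet G M)
    (hno : ¬ ∃ I : Finset V, I.card = M.card ∧ (∀ x ∈ I, ∃ e ∈ M, x ∈ e) ∧
      ∀ a ∈ I, ∀ b ∈ I, ¬ G.Adj a b)
    (hsv : s(u,v) ∉ M)
    (mc : MatchingCondition (subdivideTwice G u v)) : False := by
  classical
  obtain ⟨hE, hD, hC⟩ := image_matching G u v hM hsv
  set Nimg := M.image (Sym2.map (Sum.inl : V → V ⊕ Fin 2)) with hNimg
  set em : Sym2 (V ⊕ Fin 2) := s(Sum.inr 0, Sum.inr 1) with hem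
  set M' := Nimg ∪ {em} with hM'
  have hemn : em ∉ Nimg := by
    intro h
    obtain ⟨e₁, _, hmap⟩ := Finset.mem_image.1 h
    exact inr_not_mem_map 0 e₁ (hmap.symm ▸ (Sym2.mem_mk_left _ _))
  have hcard : M'.card = M.card + 1 := by
    rw [hM', Finset.card_union_of_disjoint (Finset.disjoint_singleton_right.2 hemn), hC,
      Finset.card_singleton]
  have hMS : IsMatchingSet (subdivideTwice G u v) M' := by
    constructor
    · intro e he
      rcases Finset.mem_union.1 he with h | h
      · exact hE e h
      · rw [Finset.mem_singleton.1 h, hem]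
        exact (subdivideTwice G u v).mem_edgeSet.2 (adj_x0_x1 G u v)
    · intro e he f hf hef z hz
      have cross : ∀ e₁ ∈ M, ∀ w : V ⊕ Fin 2,
          ¬(w ∈ Sym2.map (Sum.inl : V → V ⊕ Fin 2) e₁ ∧ w ∈ em) := by
        rintro e₁ _ w ⟨hw1, hw2⟩
        obtain ⟨a, _, rfl⟩ := mem_map_inl.1 hw1
        rw [hem, Sym2.mem_iff] at hw2
        rcases hw2 with h | h <;> simp at h
      rcases Finset.mem_union.1 he with he' | he' <;> rcases Finset.mem_union.1 hf with hf' | hf'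
      · exact hD e he' f hf' hef z hz
      · obtain ⟨e₁, he₁, rfl⟩ := Finset.mem_image.1 he'
        rw [Finset.mem_singleton.1 hf'] at hz
        exact cross e₁ he₁ z hz
      · obtain ⟨f₁, hf₁, rfl⟩ := Finset.mem_image.1 hf'
        rw [Finset.mem_singleton.1 he'] at hz
        exact cross f₁ hf₁ z ⟨hz.2, hz.1⟩
      · rw [Finset.mem_singleton.1 he', Finset.mem_singleton.1 hf'] at hef
        exact hef rfl
  obtain ⟨I', h1, h2, h3⟩ := mc M' hMS
  refine finishV G u v M hno I' (by rw [h1, hcard]) h3 ?_ ?_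
  · intro z hz
    obtain ⟨e, he, hze⟩ := h2 z hz
    rcases Finset.mem_union.1 he with he' | he'
    · obtain ⟨e₁, he₁, rfl⟩ := Finset.mem_image.1 he'
      obtain ⟨a, ha, rfl⟩ := mem_map_inl.1 hze
      exact Or.inl ⟨a, rfl, Or.inl ⟨e₁, he₁, ha⟩⟩
    · rw [Finset.mem_singleton.1 he', hem, Sym2.mem_iff] at hze
      rcases hze with rfl | rfl
      · exact Or.inr (Or.inl rfl)
      · exact Or.inr (Or.inr rfl)
  · intro _
    by_cases hv : Sum.inl v ∈ I'
    · obtain ⟨e, he, hze⟩ := h2 _ hv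
      rcases Finset.mem_union.1 he with he' | he'
      · obtain ⟨e₁, he₁, rfl⟩ := Finset.mem_image.1 he'
        obtain ⟨a, ha, hav⟩ := mem_map_inl.1 hze
        obtain rfl := Sum.inl_injective hav
        exact Or.inl ⟨e₁, he₁, ha⟩
      · rw [Finset.mem_singleton.1 he', hem, Sym2.mem_iff] at hze
        rcases hze with h | h <;> simp at h
    · exact Or.inr hv

lemma caseB (G : SimpleGraph V) (u v : V) (huv : G.Adj u v) (M : Finset (Sym2 V))
    (hM : IsMatchingSet G M)
    (hno : ¬ ∃ I : Finset V, I.card = M.card ∧ (∀ x ∈ I, ∃ e ∈ M, x ∈ e) ∧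
      ∀ a ∈ I, ∀ b ∈ I, ¬ G.Adj a b)
    (hsv : s(u,v) ∈ M)
    (mc : MatchingCondition (subdivideTwice G u v)) : False := by
  classical
  set N := M.erase s(u,v) with hN
  have hNM : IsMatchingSet G N :=
    ⟨fun e he => hM.1 e (Finset.mem_of_mem_erase he),
     fun e he f hf hef z hz => hM.2 e (Finset.mem_of_mem_erase he) f
       (Finset.mem_of_mem_erase hf) hef z hz⟩
  obtain ⟨hE, hD, hC⟩ := image_matching G u v hNM (Finset.notMem_erase _ _)
  set Nimg := N.image (Sym2.map (Sum.inl : V → V ⊕ Fin 2)) with hNimg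
  set e₀ : Sym2 (V ⊕ Fin 2) := s(Sum.inl u, Sum.inr 0) with he₀
  set e₂ : Sym2 (V ⊕ Fin 2) := s(Sum.inr 1, Sum.inl v) with he₂
  set M' := Nimg ∪ {e₀, e₂} with hM'
  -- u and v are not covered by N
  have huN : ∀ e ∈ N, u ∉ e := by
    intro e he hu
    exact hM.2 e (Finset.mem_of_mem_erase he) s(u,v) hsv (Finset.ne_of_mem_erase he) u
      ⟨hu, Sym2.mem_mk_left _ _⟩
  have hvN : ∀ e ∈ N, v ∉ e := by
    intro e he hv
    exact hM.2 e (Finset.mem_of_mem_erase he) s(u,v) hsv (Finset.ne_of_mem_erase he) v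
      ⟨hv, Sym2.mem_mk_right _ _⟩
  have he₀n : e₀ ∉ Nimg := by
    intro h
    obtain ⟨e₁, _, hmap⟩ := Finset.mem_image.1 h
    exact inr_not_mem_map 0 e₁ (hmap.symm ▸ (Sym2.mem_mk_right _ _))
  have he₂n : e₂ ∉ Nimg := by
    intro h
    obtain ⟨e₁, _, hmap⟩ := Finset.mem_image.1 h
    exact inr_not_mem_map 1 e₁ (hmap.symm ▸ (Sym2.mem_mk_left _ _))
  have he₀₂ : e₀ ≠ e₂ := by
    rw [he₀, he₂]
    simp [Sym2.eq_iff]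
  have hcard : M'.card = M.card + 1 := by
    have hd : Disjoint Nimg {e₀, e₂} := by
      rw [Finset.disjoint_right]
      intro e he
      rcases Finset.mem_insert.1 he with rfl | he
      · exact he₀n
      · rw [Finset.mem_singleton.1 he]; exact he₂n
    rw [hM', Finset.card_union_of_disjoint hd, hC,
      Finset.card_insert_of_notMem (by simpa using he₀₂), Finset.card_singleton, hN,
      Finset.card_erase_of_mem hsv]
    have : 0 < M.card := Finset.card_pos.2 ⟨_, hsv⟩
    omega
  have hMS : IsMatchingSet (subdivideTwice G u v) M' := by
    constructor
    · intro e he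
      rcases Finset.mem_union.1 he with h | h
      · exact hE e h
      · rcases Finset.mem_insert.1 h with rfl | h
        · exact (subdivideTwice G u v).mem_edgeSet.2 (adj_u_x0 G u v)
        · rw [Finset.mem_singleton.1 h, he₂]
          exact (subdivideTwice G u v).mem_edgeSet.2 (adj_x1_v G u v)
    · intro e he f hf hef z hz
      -- cross: a mapped edge shares no vertex with e₀ or e₂
      have cross : ∀ e₁ ∈ N, ∀ g ∈ ({e₀, e₂} : Finset (Sym2 (V ⊕ Fin 2))), ∀ w : V ⊕ Fin 2,
          ¬(w ∈ Sym2.map (Sum.inl : V → V ⊕ Fin 2) e₁ ∧ w ∈ g) := by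
        rintro e₁ he₁ g hg w ⟨hw1, hw2⟩
        obtain ⟨a, ha, rfl⟩ := mem_map_inl.1 hw1
        rcases Finset.mem_insert.1 hg with rfl | hg
        · rw [he₀, Sym2.mem_iff] at hw2
          rcases hw2 with h | h
          · obtain rfl := Sum.inl_injective h
            exact huN e₁ he₁ ha
          · simp at h
        · rw [Finset.mem_singleton.1 hg, he₂, Sym2.mem_iff] at hw2
          rcases hw2 with h | h
          · simp at h
          · obtain rfl := Sum.inl_injective h
            exact hvN e₁ he₁ ha
      have ecross : ∀ w : V ⊕ Fin 2, ¬(w ∈ e₀ ∧ w ∈ e₂) := by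
        rintro w ⟨hw1, hw2⟩
        rw [he₀, Sym2.mem_iff] at hw1
        rw [he₂, Sym2.mem_iff] at hw2
        rcases hw1 with rfl | rfl
        · rcases hw2 with h | h
          · simp at h
          · exact G.ne_of_adj huv (Sum.inl_injective h)
        · rcases hw2 with h | h <;> simp at h
      rcases Finset.mem_union.1 he with he' | he' <;> rcases Finset.mem_union.1 hf with hf' | hf'
      · exact hD e he' f hf' hef z hz
      · obtain ⟨e₁, he₁, rfl⟩ := Finset.mem_image.1 he'
        exact cross e₁ he₁ f hf' z hz
      · obtain ⟨f₁, hf₁, rfl⟩ := Finset.mem_image.1 hf'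
        exact cross f₁ hf₁ e he' z ⟨hz.2, hz.1⟩
      · rcases Finset.mem_insert.1 he' with rfl | he' <;>
          rcases Finset.mem_insert.1 hf' with rfl | hf'
        · exact hef rfl
        · rw [Finset.mem_singleton.1 hf'] at hz
          exact ecross z hz
        · rw [Finset.mem_singleton.1 he'] at hz
          exact ecross z ⟨hz.2, hz.1⟩
        · rw [Finset.mem_singleton.1 he', Finset.mem_singleton.1 hf'] at hef
          exact hef rfl
  obtain ⟨I', h1, h2, h3⟩ := mc M' hMS
  refine finishV G u v M hno I' (by rw [h1, hcard]) h3 ?_ ?_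
  · intro z hz
    obtain ⟨e, he, hze⟩ := h2 z hz
    rcases Finset.mem_union.1 he with he' | he'
    · obtain ⟨e₁, he₁, rfl⟩ := Finset.mem_image.1 he'
      obtain ⟨a, ha, rfl⟩ := mem_map_inl.1 hze
      exact Or.inl ⟨a, rfl, Or.inl ⟨e₁, Finset.mem_of_mem_erase he₁, ha⟩⟩
    · rcases Finset.mem_insert.1 he' with rfl | he'
      · rw [he₀, Sym2.mem_iff] at hze
        rcases hze with rfl | rfl
        · exact Or.inl ⟨u, rfl, Or.inl ⟨s(u,v), hsv, Sym2.mem_mk_left _ _⟩⟩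
        · exact Or.inr (Or.inl rfl)
      · rw [Finset.mem_singleton.1 he', he₂, Sym2.mem_iff] at hze
        rcases hze with rfl | rfl
        · exact Or.inr (Or.inr rfl)
        · exact Or.inl ⟨v, rfl, Or.inl ⟨s(u,v), hsv, Sym2.mem_mk_right _ _⟩⟩
  · intro _
    exact Or.inl ⟨s(u,v), hsv, Sym2.mem_mk_right _ _⟩

/-- If a finite simple graph `G` violates the matching condition, then so does
the graph `G'` obtained from `G` by subdividing any one of its edges twice. -/
theorem not_matchingCondition_subdivideTwice [Fintype V] (G : SimpleGraph V) (u v : V)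
    (huv : G.Adj u v) (hG : ¬ MatchingCondition G) :
    ¬ MatchingCondition (subdivideTwice G u v) := by
  intro mc
  obtain ⟨M, hM, hno⟩ : ∃ M, IsMatchingSet G M ∧ ¬ ∃ I : Finset V, I.card = M.card ∧
      (∀ x ∈ I, ∃ e ∈ M, x ∈ e) ∧ ∀ a ∈ I, ∀ b ∈ I, ¬ G.Adj a b := by
    by_contra h
    apply hG
    intro M hM
    by_contra hI
    exact h ⟨M, hM, hI⟩
  by_cases hsv : s(u,v) ∈ M
  · exact caseB G u v huv M hM hno hsv mc
  · exact caseMid G u v M hM hno hsv mc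
end

section
/- Every finite simple bipartite graph is strongly EFX-orientable. -/
open SimpleGraph
open scoped Classical

variable {V : Type*}

noncomputable def endA' (c : V → Fin 2) (e : Sym2 V) : V :=
  if c (Quot.out e).1 = 0 then (Quot.out e).1 else (Quot.out e).2

noncomputable def endB' (c : V → Fin 2) (e : Sym2 V) : V :=
  if c (Quot.out e).1 = 0 then (Quot.out e).2 else (Quot.out e).1

lemma endAB'_eq (c : V → Fin 2) (e : Sym2 V) : s(endA' c e, endB' c e) = e := by
  unfold endA' endB'
  split
  · exact Quot.out_eq e
  · rw [Sym2.eq_swap]; exact Quot.out_eq e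

lemma endA'_mem (c : V → Fin 2) (e : Sym2 V) : endA' c e ∈ e := by
  have h := endAB'_eq c e
  have h2 := Sym2.mem_mk_left (endA' c e) (endB' c e)
  rwa [h] at h2

lemma endB'_mem (c : V → Fin 2) (e : Sym2 V) : endB' c e ∈ e := by
  have h := endAB'_eq c e
  have h2 := Sym2.mem_mk_right (endA' c e) (endB' c e)
  rwa [h] at h2

lemma mem_bundleSet {G : SimpleGraph V} {head : Sym2 V → V} {v : V} {e : Sym2 V} :
    e ∈ bundleSet G head v ↔ e ∈ G.edgeSet ∧ head e = v := Iff.rfl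

lemma fin2_cases : ∀ x y : Fin 2, x ≠ y → (x = 0 ∧ y ≠ 0) ∨ (y = 0 ∧ x ≠ 0) := by decide

/-- Every finite simple bipartite graph is strongly EFX-orientable. -/
theorem stronglyEFXOrientable_of_bipartite [Fintype V] (G : SimpleGraph V)
    (h : G.Colorable 2) : StronglyEFXOrientable G := by
  intro f hmono hgraph
  obtain ⟨col⟩ := h
  set c : V → Fin 2 := fun v => col v with hcdef
  -- favorite incident edge of each vertex
  have hfavex : ∀ a : V, ∃ m : Sym2 V,
      (G.incidenceSet a).Nonempty →
        m ∈ G.incidenceSet a ∧ ∀ e ∈ G.incidenceSet a, f a {e} ≤ f a {m} := by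
    intro a
    by_cases hne : (G.incidenceSet a).Nonempty
    · obtain ⟨m, hm, hmax⟩ := Set.exists_max_image (G.incidenceSet a)
        (fun e => f a {e}) (Set.toFinite _) hne
      exact ⟨m, fun _ => ⟨hm, hmax⟩⟩
    · exact ⟨s(a, a), fun hn => absurd hn hne⟩
  choose fav hfav using hfavex
  set head : Sym2 V → V :=
    fun e => if e = fav (endA' c e) then endA' c e else endB' c e with hhead
  -- colors of the two ends of an edge
  have hcolor : ∀ e ∈ G.edgeSet, c (endA' c e) = 0 ∧ c (endB' c e) ≠ 0 := by
    intro e he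
    have h1 : s((Quot.out e).1, (Quot.out e).2) = e := Quot.out_eq e
    have hadj : G.Adj (Quot.out e).1 (Quot.out e).2 := by
      rw [← G.mem_edgeSet, h1]; exact he
    have hne : c (Quot.out e).1 ≠ c (Quot.out e).2 := col.valid hadj
    unfold endA' endB'
    rcases fin2_cases _ _ hne with ⟨ha, hb⟩ | ⟨ha, hb⟩
    · rw [if_pos ha, if_pos ha]; exact ⟨ha, hb⟩
    · rw [if_neg hb, if_neg hb]; exact ⟨ha, hb⟩
  have hend : ∀ (a : V) (e : Sym2 V), e ∈ G.edgeSet → a ∈ e → c a = 0 → endA' c e = a := by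
    intro a e he ha h0
    obtain ⟨h1, h2⟩ := hcolor e he
    have hmem := endAB'_eq c e
    rw [← hmem] at ha
    rcases Sym2.mem_iff.mp ha with h | h
    · exact h.symm
    · exact absurd (h ▸ h0) h2
  have headmem : ∀ e ∈ G.edgeSet, head e ∈ e := by
    intro e he
    simp only [hhead]
    split
    · exact endA'_mem c e
    · exact endB'_mem c e
  -- the favorite edge of a color-0 vertex is oriented towards it
  have hfavhead : ∀ a : V, c a = 0 → (G.incidenceSet a).Nonempty →
      fav a ∈ bundleSet G head a := by
    intro a h0 hne
    obtain ⟨hmem, _⟩ := hfav a hne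
    have hedge : fav a ∈ G.edgeSet := hmem.1
    have hEA : endA' c (fav a) = a := hend a (fav a) hedge hmem.2 h0
    refine ⟨hedge, ?_⟩
    simp [hhead, hEA]
  -- a color-0 vertex owns at most its favorite edge
  have hbundle0 : ∀ b : V, c b = 0 → bundleSet G head b ⊆ {fav b} := by
    intro b h0 e' he'
    obtain ⟨heE, heh⟩ := he'
    by_cases hcase : e' = fav (endA' c e')
    · have hEA : endA' c e' = b := by
        have : head e' = endA' c e' := by simp only [hhead, if_pos hcase]
        rw [← this, heh]
      rw [hEA] at hcase
      exact hcase
    · have hh : head e' = endB' c e' := by simp only [hhead, if_neg hcase]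
      have hEB : endB' c e' = b := by rw [← hh, heh]
      have hne0 : c b ≠ 0 := by rw [← hEB]; exact (hcolor e' heE).2
      exact absurd h0 hne0
  refine ⟨head, headmem, ?_⟩
  intro a b g hg
  by_cases hab : a = b
  · subst hab
    exact hmono a Set.diff_subset
  · rw [hgraph a (bundleSet G head b \ {g})]
    have hSsub : (bundleSet G head b \ {g}) ∩ G.incidenceSet a ⊆ {s(a, b)} := by
      rintro x ⟨⟨⟨hxE, hxh⟩, _⟩, hxI⟩
      have hax : a ∈ x := hxI.2
      have hbx : b ∈ x := hxh ▸ headmem x hxE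
      exact Set.mem_singleton_iff.mpr ((Sym2.mem_and_mem_iff hab).mp ⟨hax, hbx⟩)
    by_cases hsab : s(a, b) ∈ bundleSet G head b \ {g}
    · have h1 : f a ((bundleSet G head b \ {g}) ∩ G.incidenceSet a) ≤ f a {s(a, b)} :=
        hmono a hSsub
      obtain ⟨⟨hsE, hsh⟩, hner⟩ := hsab
      have hadj : G.Adj a b := G.mem_edgeSet.mp hsE
      rcases fin2_cases (c a) (c b) (col.valid hadj) with ⟨ha0, hb0⟩ | ⟨hb0, ha0⟩
      · -- a has color 0
        have hEA : endA' c (s(a, b)) = a := hend a _ hsE (Sym2.mem_mk_left _ _) ha0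
        have hneInc : (G.incidenceSet a).Nonempty := ⟨s(a, b), hsE, Sym2.mem_mk_left _ _⟩
        obtain ⟨hmem, hmax⟩ := hfav a hneInc
        have h2 : f a {s(a, b)} ≤ f a {fav a} := hmax _ ⟨hsE, Sym2.mem_mk_left _ _⟩
        have h3 : fav a ∈ bundleSet G head a := hfavhead a ha0 hneInc
        calc f a ((bundleSet G head b \ {g}) ∩ G.incidenceSet a)
            ≤ f a {s(a, b)} := h1
          _ ≤ f a {fav a} := h2
          _ ≤ f a (bundleSet G head a) := hmono a (Set.singleton_subset_iff.mpr h3)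
      · -- b has color 0: impossible since b owns two distinct edges
        have hsub := hbundle0 b hb0
        have e1 : s(a, b) = fav b := hsub ⟨hsE, hsh⟩
        have e2 : g = fav b := hsub hg
        exact absurd (e1.trans e2.symm) hner
    · have hS : (bundleSet G head b \ {g}) ∩ G.incidenceSet a = ∅ := by
        apply Set.eq_empty_iff_forall_notMem.mpr
        intro x hx
        have hxe : x = s(a, b) := hSsub hx
        exact hsab (hxe ▸ hx.1)
      rw [hS]
      exact hmono a (Set.empty_subset _)
end

section
/- Let G be a graph obtained from an odd cycle by adding one additional edge (a chord between two non-adjacent vertices of the cycle). Then G is strongly EFX-orientable. -/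
open SimpleGraph
open scoped Classical

variable {V : Type*}

open scoped Fin.NatCast Fin.IntCast Fin.CommRing
namespace EFXaux
variable {m : ℕ}

def eC (v : Fin (m+2)) : Sym2 (Fin (m+2)) := s(v, v+1)

lemma eC_def (v : Fin (m+2)) : eC v = s(v, v+1) := rfl

lemma natCast_ne_zero {c : ℕ} (hc : 0 < c) (hlt : c < m + 2) : (c : Fin (m+2)) ≠ 0 := by
  intro h
  have h2 : (c : Fin (m+2)).val = 0 := by rw [h]; rfl
  rw [Fin.val_cast_of_lt hlt] at h2; omega

lemma two_eq_cast : (2 : Fin (m+2)) = ((2:ℕ) : Fin (m+2)) := by norm_cast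

lemma one_ne_zero' (hm : 3 ≤ m) : (1 : Fin (m+2)) ≠ 0 := by
  have := natCast_ne_zero (m := m) (c := 1) (by omega) (by omega)
  simpa using this

lemma two_ne_zero' (hm : 3 ≤ m) : (2 : Fin (m+2)) ≠ 0 := by
  rw [two_eq_cast]; exact natCast_ne_zero (by omega) (by omega)

lemma three_ne_zero' (hm : 3 ≤ m) : (3 : Fin (m+2)) ≠ 0 := by
  have : (3 : Fin (m+2)) = ((3:ℕ) : Fin (m+2)) := by norm_cast
  rw [this]; exact natCast_ne_zero (by omega) (by omega)

lemma cast_self_eq_zero : (((m+2) : ℕ) : Fin (m+2)) = 0 := by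
  simp [Fin.natCast_self]

lemma neg_one_eq : (-1 : Fin (m+2)) = ((m+1 : ℕ) : Fin (m+2)) := by
  have h : ((m+1 : ℕ) : Fin (m+2)) + 1 = 0 := by
    have h0 := cast_self_eq_zero (m := m)
    push_cast at h0 ⊢
    linear_combination h0
  exact (eq_neg_of_add_eq_zero_left h).symm

lemma neg_two_eq : (-2 : Fin (m+2)) = ((m : ℕ) : Fin (m+2)) := by
  have h : ((m : ℕ) : Fin (m+2)) + 2 = 0 := by
    have h0 := cast_self_eq_zero (m := m)
    push_cast at h0 ⊢
    linear_combination h0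
  exact (eq_neg_of_add_eq_zero_left h).symm

lemma val_neg_one : (-1 : Fin (m+2)).val = m + 1 := by
  rw [neg_one_eq, Fin.val_cast_of_lt (by omega)]

lemma val_neg_two : (-2 : Fin (m+2)).val = m := by
  rw [neg_two_eq, Fin.val_cast_of_lt (by omega)]

lemma val_sub_one {x : Fin (m+2)} (hx : x ≠ 0) : (x - 1).val = x.val - 1 := by
  have hv : 1 ≤ x.val := by
    rcases Nat.eq_zero_or_pos x.val with h | h
    · exact absurd (Fin.ext (by simpa using h)) hx
    · omega
  have h1 : ((x.val - 1 : ℕ) : Fin (m+2)) + 1 = x := by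
    have hrw : (x.val : ℕ) = (x.val - 1) + 1 := by omega
    conv_rhs => rw [← Fin.cast_val_eq_self x]
    rw [hrw]; push_cast; ring
  have h2 : x - 1 = ((x.val - 1 : ℕ) : Fin (m+2)) := by
    rw [sub_eq_iff_eq_add]; exact h1.symm
  rw [h2, Fin.val_cast_of_lt (by have := x.isLt; omega)]

end EFXaux

namespace EFXaux
variable {m : ℕ}

/-- inverse of 2 -/
def inv2 (m : ℕ) : Fin (m+2) := ((m+3)/2 : ℕ)

lemma two_mul_inv2 (hodd : Odd m) : (2 : Fin (m+2)) * inv2 m = 1 := by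
  obtain ⟨l, hl⟩ := hodd
  have h3 : (m+3)/2 = l + 2 := by omega
  have : (2 : Fin (m+2)) * inv2 m = (((m+3) : ℕ) : Fin (m+2)) := by
    rw [inv2, h3, two_eq_cast, show (m+3) = 2*(l+2) from by omega]
    push_cast; ring
  rw [this]
  have : ((m+3 : ℕ) : Fin (m+2)) = (((m+2) : ℕ) : Fin (m+2)) + 1 := by push_cast; ring
  rw [this, cast_self_eq_zero, zero_add]

lemma dlog (hodd : Odd m) (x : Fin (m+2)) :
    ∃ M : ℕ, M < m + 2 ∧ ((2 * M : ℕ) : Fin (m+2)) = x := by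
  refine ⟨(x * inv2 m).val, (x * inv2 m).isLt, ?_⟩
  push_cast
  calc (2 : Fin (m+2)) * (x * inv2 m) = (2 * inv2 m) * x := by ring
  _ = x := by rw [two_mul_inv2 hodd, one_mul]

lemma eC_inj (hm : 3 ≤ m) {u v : Fin (m+2)} (h : eC u = eC v) : u = v := by
  rw [eC, eC, Sym2.eq_iff] at h
  rcases h with ⟨h1, _⟩ | ⟨h1, h2⟩
  · exact h1
  · exfalso
    have h0 : (2 : Fin (m+2)) = 0 := by linear_combination h2 - h1
    exact two_ne_zero' hm h0

section Graph
variable (i j : Fin (m+2))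

def Gr : SimpleGraph (Fin (m+2)) := cycleGraph (m+2) ⊔ fromEdgeSet {s(i, j)}

variable {i j}

lemma chord_ne_eC (h1 : j ≠ i + 1) (h2 : i ≠ j + 1) (v : Fin (m+2)) : s(i,j) ≠ eC v := by
  rw [eC, Ne, Sym2.eq_iff]
  rintro (⟨rfl, h⟩ | ⟨h, rfl⟩)
  · exact h1 h
  · exact h2 h

lemma mem_cycle_edge {e : Sym2 (Fin (m+2))} :
    e ∈ (cycleGraph (m+2)).edgeSet ↔ ∃ v, e = eC v := by
  induction e using Sym2.ind with
  | _ x y =>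
    rw [mem_edgeSet, cycleGraph_adj]
    constructor
    · rintro (h | h)
      · refine ⟨y, ?_⟩
        rw [sub_eq_iff_eq_add] at h
        subst h
        rw [eC_def, Sym2.eq_swap, add_comm 1 y]
      · refine ⟨x, ?_⟩
        rw [sub_eq_iff_eq_add] at h
        subst h
        rw [eC_def, add_comm 1 x]
    · rintro ⟨v, hv⟩
      rw [eC_def, Sym2.eq_iff] at hv
      rcases hv with ⟨rfl, rfl⟩ | ⟨rfl, rfl⟩
      · right; ring
      · left; ring

lemma mem_G_edge (hij : i ≠ j) {e : Sym2 (Fin (m+2))} :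
    e ∈ (Gr i j).edgeSet ↔ (∃ v, e = eC v) ∨ e = s(i,j) := by
  rw [Gr, edgeSet_sup, Set.mem_union, mem_cycle_edge, edgeSet_fromEdgeSet]
  constructor
  · rintro (h | ⟨h, _⟩)
    · exact Or.inl h
    · exact Or.inr h
  · rintro (h | h)
    · exact Or.inl h
    · right; refine ⟨h, ?_⟩
      rw [h]
      simp [Sym2.mk_isDiag_iff, hij]

end Graph
end EFXaux

namespace EFXaux
variable {m : ℕ}

noncomputable def hd (p : Fin (m+2) → Prop) (v : Fin (m+2)) : Fin (m+2) :=
  if p v then v else v + 1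

noncomputable def tl (p : Fin (m+2) → Prop) (v : Fin (m+2)) : Fin (m+2) :=
  if p v then v + 1 else v

noncomputable def headFn (p : Fin (m+2) → Prop) (k : Fin (m+2)) :
    Sym2 (Fin (m+2)) → Fin (m+2) :=
  fun e => if h : ∃ v, e = eC v then hd p h.choose else k

variable {p : Fin (m+2) → Prop} {k i j : Fin (m+2)}

lemma headFn_eC (hm : 3 ≤ m) (v : Fin (m+2)) : headFn p k (eC v) = hd p v := by
  rw [headFn]
  have h : ∃ u, eC v = eC (m := m) u := ⟨v, rfl⟩
  rw [dif_pos h]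
  congr 1
  exact (eC_inj hm h.choose_spec).symm

lemma headFn_chord (h1 : j ≠ i + 1) (h2 : i ≠ j + 1) :
    headFn (m := m) p k s(i,j) = k := by
  rw [headFn, dif_neg]
  rintro ⟨v, hv⟩
  exact chord_ne_eC h1 h2 v hv

lemma mem_bundle (hm : 3 ≤ m) (hij : i ≠ j) (h1 : j ≠ i + 1) (h2 : i ≠ j + 1)
    {g : Sym2 (Fin (m+2))} {w : Fin (m+2)} :
    g ∈ bundleSet (Gr i j) (headFn p k) w ↔
      (∃ v, g = eC v ∧ hd p v = w) ∨ (g = s(i,j) ∧ k = w) := by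
  constructor
  · rintro ⟨hg, hw⟩
    rcases (mem_G_edge hij).mp hg with ⟨v, rfl⟩ | rfl
    · exact Or.inl ⟨v, rfl, by rw [← headFn_eC (p := p) (k := k) hm v, hw]⟩
    · exact Or.inr ⟨rfl, by rw [← headFn_chord (p := p) (k := k) h1 h2, hw]⟩
  · rintro (⟨v, rfl, hv⟩ | ⟨rfl, hk⟩)
    · exact ⟨(mem_G_edge hij).mpr (Or.inl ⟨v, rfl⟩), by rw [headFn_eC hm, hv]⟩
    · exact ⟨(mem_G_edge hij).mpr (Or.inr rfl), by rw [headFn_chord h1 h2, hk]⟩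

lemma eC_mem_bundle (hm : 3 ≤ m) (hij : i ≠ j) (h1 : j ≠ i + 1) (h2 : i ≠ j + 1)
    {v w : Fin (m+2)} (hw : hd p v = w) :
    eC v ∈ bundleSet (Gr i j) (headFn p k) w :=
  (mem_bundle hm hij h1 h2).mpr (Or.inl ⟨v, rfl, hw⟩)

lemma chord_mem_bundle (hm : 3 ≤ m) (hij : i ≠ j) (h1 : j ≠ i + 1) (h2 : i ≠ j + 1) :
    s(i,j) ∈ bundleSet (Gr i j) (headFn p k) k :=
  (mem_bundle hm hij h1 h2).mpr (Or.inr ⟨rfl, rfl⟩)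

/-- two distinct members determine a Sym2 element -/
lemma sym2_eq_of_mem {a b : Fin (m+2)} {e : Sym2 (Fin (m+2))} (hab : a ≠ b)
    (ha : a ∈ e) (hb : b ∈ e) : e = s(a, b) := by
  induction e using Sym2.ind with
  | _ x y =>
    rw [Sym2.mem_iff] at ha hb
    rcases ha with rfl | rfl
    · rcases hb with rfl | rfl
      · exact absurd rfl hab
      · rfl
    · rcases hb with rfl | rfl
      · exact Sym2.eq_swap
      · exact absurd rfl hab

lemma master (hm : 3 ≤ m) (hij : i ≠ j) (h1 : j ≠ i + 1) (h2 : i ≠ j + 1)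
    (f : Fin (m+2) → Set (Sym2 (Fin (m+2))) → NNReal)
    (hmono : ∀ a, Monotone (f a))
    (hgraph : ∀ a X, f a X = f a (X ∩ (Gr i j).incidenceSet a))
    {k' : Fin (m+2)}
    (hkk' : (k = i ∧ k' = j) ∨ (k = j ∧ k' = i))
    (Hcyc : ∀ v : Fin (m+2),
      (∃ g ∈ bundleSet (Gr i j) (headFn p k) (hd p v), g ≠ eC v) →
      f (tl p v) {eC v} ≤ f (tl p v) (bundleSet (Gr i j) (headFn p k) (tl p v)))
    (Hch : (∃ g ∈ bundleSet (Gr i j) (headFn p k) k, g ≠ s(i,j)) →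
      f k' {s(i,j)} ≤ f k' (bundleSet (Gr i j) (headFn p k) k')) :
    IsEFXOrientation (Gr i j) f (headFn p k) := by
  have hik : k = i ∨ k = j := by rcases hkk' with ⟨h, _⟩ | ⟨h, _⟩ <;> [exact Or.inl h; exact Or.inr h]
  constructor
  · intro e he
    rcases (mem_G_edge hij).mp he with ⟨v, rfl⟩ | rfl
    · rw [headFn_eC hm, hd]
      split
      · rw [eC_def]; exact Sym2.mem_mk_left _ _
      · rw [eC_def]; exact Sym2.mem_mk_right _ _
    · rw [headFn_chord h1 h2]
      rcases hik with rfl | rfl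
      · exact Sym2.mem_mk_left _ _
      · exact Sym2.mem_mk_right _ _
  · intro a b g hg
    by_cases hab : a = b
    · subst hab
      exact hmono a (Set.diff_subset)
    -- a ≠ b
    set X := bundleSet (Gr i j) (headFn p k)
    have hT : f a (X b \ {g}) = f a ((X b \ {g}) ∩ (Gr i j).incidenceSet a) :=
      hgraph a _
    set T := (X b \ {g}) ∩ (Gr i j).incidenceSet a with hTdef
    have hTsub : T ⊆ {s(a,b)} := by
      rintro e ⟨⟨heX, _⟩, heI⟩
      have heE : e ∈ (Gr i j).edgeSet := heX.1
      have hbmem : b ∈ e := by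
        have hh : headFn p k e ∈ e := by
          rcases (mem_G_edge hij).mp heE with ⟨v, rfl⟩ | rfl
          · rw [headFn_eC hm, hd]
            split
            · rw [eC_def]; exact Sym2.mem_mk_left _ _
            · rw [eC_def]; exact Sym2.mem_mk_right _ _
          · rw [headFn_chord h1 h2]
            rcases hik with rfl | rfl
            · exact Sym2.mem_mk_left _ _
            · exact Sym2.mem_mk_right _ _
        rwa [heX.2] at hh
      have hamem : a ∈ e := heI.2
      exact sym2_eq_of_mem hab hamem hbmem
    rcases Set.subset_singleton_iff_eq.mp hTsub with hTe | hTe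
    · rw [hT, hTe]
      exact hmono a (Set.empty_subset _)
    · -- T = {s(a,b)}
      have hmemT : s(a,b) ∈ T := by rw [hTe]; exact rfl
      obtain ⟨⟨habX, habg⟩, habI⟩ := hmemT
      have habE : s(a,b) ∈ (Gr i j).edgeSet := habX.1
      have hhead : headFn p k s(a,b) = b := habX.2
      rw [hT, hTe]
      have hprem : ∃ g' ∈ X b, g' ≠ s(a,b) := ⟨g, hg, fun h => habg h.symm⟩
      rcases (mem_G_edge hij).mp habE with ⟨v, hv⟩ | hv
      · -- cycle edge
        have hhd : hd p v = b := by rw [← headFn_eC (p := p) (k := k) hm v, ← hv, hhead]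
        have hav : a = tl p v := by
          rw [eC_def, Sym2.eq_iff] at hv
          by_cases hp : p v
          · rw [hd, if_pos hp] at hhd
            rw [tl, if_pos hp]
            rcases hv with ⟨ha', hb'⟩ | ⟨ha', hb'⟩
            · exact absurd (ha'.trans hhd) hab
            · exact ha'
          · rw [hd, if_neg hp] at hhd
            rw [tl, if_neg hp]
            rcases hv with ⟨ha', hb'⟩ | ⟨ha', hb'⟩
            · exact ha'
            · exact absurd (ha'.trans hhd) hab
        have := Hcyc v (by rw [hhd]; rwa [hv] at hprem)
        rw [← hav] at this
        rw [hv]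
        exact this
      · -- chord
        have hkb : k = b := by rw [← headFn_chord (p := p) (k := k) h1 h2, ← hv, hhead]
        have hak' : a = k' := by
          have hamem : a ∈ s(i,j) := by rw [← hv]; exact Sym2.mem_mk_left _ _
          rw [Sym2.mem_iff] at hamem
          rcases hkk' with ⟨hk1, hk2⟩ | ⟨hk1, hk2⟩ <;> rcases hamem with rfl | rfl
          · exfalso; exact hab (by rw [← hkb, hk1])
          · rw [hk2]
          · rw [hk2]
          · exfalso; exact hab (by rw [← hkb, hk1])
        have := Hch (by rw [hkb]; rwa [hv] at hprem)
        rw [← hak'] at this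
        rw [hv]
        exact this

end EFXaux

namespace EFXaux
variable {m : ℕ} {k i j : Fin (m+2)}

lemma OR1 (hm : 3 ≤ m) (hij : i ≠ j) (h1 : j ≠ i + 1) (h2 : i ≠ j + 1)
    (f : Fin (m+2) → Set (Sym2 (Fin (m+2))) → NNReal)
    (hmono : ∀ a, Monotone (f a))
    (hgraph : ∀ a X, f a X = f a (X ∩ (Gr i j).incidenceSet a))
    {k' : Fin (m+2)} (hkk' : (k = i ∧ k' = j) ∨ (k = j ∧ k' = i))
    (hc1 : f (k-1) {eC (k-1)} ≤ f (k-1) {eC (k-2)})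
    (hc2 : f k' {s(i,j)} ≤ f k' {eC (k'-1)}) :
    IsEFXOrientation (Gr i j) f (headFn (fun _ => False) k) := by
  set p : Fin (m+2) → Prop := fun _ => False with hp
  have hdv : ∀ v, hd p v = v + 1 := fun v => by rw [hd, if_neg (by simp [hp])]
  have htv : ∀ v, tl p v = v := fun v => by rw [tl, if_neg (by simp [hp])]
  apply master hm hij h1 h2 f hmono hgraph hkk'
  · intro v hprem
    rw [htv]
    by_cases hvk : v + 1 = k
    · have hvk1 : v = k - 1 := by rw [eq_sub_iff_add_eq]; exact hvk
      have hw : eC (v-1) ∈ bundleSet (Gr i j) (headFn p k) v :=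
        eC_mem_bundle hm hij h1 h2 (by rw [hdv, sub_add_cancel])
      have step : f v {eC v} ≤ f v {eC (v-1)} := by
        rw [hvk1, show (k : Fin (m+2)) - 1 - 1 = k - 2 from by ring]; exact hc1
      exact step.trans (hmono v (Set.singleton_subset_iff.mpr hw))
    · exfalso
      obtain ⟨g, hgX, hgne⟩ := hprem
      rw [hdv] at hgX
      rcases (mem_bundle hm hij h1 h2).mp hgX with ⟨v', rfl, hv'⟩ | ⟨rfl, hk⟩
      · rw [hdv] at hv'
        exact hgne (by rw [add_left_inj] at hv'; rw [hv'])
      · exact hvk hk.symm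
  · intro _
    have hw : eC (k'-1) ∈ bundleSet (Gr i j) (headFn p k) k' :=
      eC_mem_bundle hm hij h1 h2 (by rw [hdv, sub_add_cancel])
    exact hc2.trans (hmono k' (Set.singleton_subset_iff.mpr hw))

lemma OR2 (hm : 3 ≤ m) (hij : i ≠ j) (h1 : j ≠ i + 1) (h2 : i ≠ j + 1)
    (f : Fin (m+2) → Set (Sym2 (Fin (m+2))) → NNReal)
    (hmono : ∀ a, Monotone (f a))
    (hgraph : ∀ a X, f a X = f a (X ∩ (Gr i j).incidenceSet a))
    {k' : Fin (m+2)} (hkk' : (k = i ∧ k' = j) ∨ (k = j ∧ k' = i))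
    (hc1 : f (k+1) {eC k} ≤ f (k+1) {eC (k+1)})
    (hc2 : f k' {s(i,j)} ≤ f k' {eC k'}) :
    IsEFXOrientation (Gr i j) f (headFn (fun _ => True) k) := by
  set p : Fin (m+2) → Prop := fun _ => True with hp
  have hdv : ∀ v, hd p v = v := fun v => by rw [hd, if_pos (by simp [hp])]
  have htv : ∀ v, tl p v = v + 1 := fun v => by rw [tl, if_pos (by simp [hp])]
  apply master hm hij h1 h2 f hmono hgraph hkk'
  · intro v hprem
    rw [htv]
    by_cases hvk : v = k
    · subst hvk
      have hw : eC (v+1) ∈ bundleSet (Gr i j) (headFn p v) (v+1) :=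
        eC_mem_bundle hm hij h1 h2 (hdv _)
      exact hc1.trans (hmono (v+1) (Set.singleton_subset_iff.mpr hw))
    · exfalso
      obtain ⟨g, hgX, hgne⟩ := hprem
      rw [hdv] at hgX
      rcases (mem_bundle hm hij h1 h2).mp hgX with ⟨v', rfl, hv'⟩ | ⟨rfl, hk⟩
      · rw [hdv] at hv'
        exact hgne (by rw [hv'])
      · exact hvk hk.symm
  · intro _
    have hw : eC k' ∈ bundleSet (Gr i j) (headFn p k) k' :=
      eC_mem_bundle hm hij h1 h2 (hdv _)
    exact hc2.trans (hmono k' (Set.singleton_subset_iff.mpr hw))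

end EFXaux

namespace EFXaux
variable {m : ℕ} {k i j t : Fin (m+2)}

section PFacts
variable (k t)
/-- segment predicate for orientation C(k,t) -/
def seg (k t v : Fin (m+2)) : Prop := (v - t).val < (k - t).val
variable {k t}

lemma seg_t (hkt : k ≠ t) : seg k t t := by
  rw [seg, sub_self]
  have : (k - t) ≠ 0 := sub_ne_zero_of_ne hkt
  have : (k - t).val ≠ 0 := fun h => this (Fin.ext (by simpa using h))
  simpa using Nat.pos_of_ne_zero this

lemma not_seg_tm1 : ¬ seg k t (t-1) := by
  rw [seg, show t - 1 - t = -1 from by ring, val_neg_one]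
  have := (k - t).isLt
  omega

lemma not_seg_k : ¬ seg k t k := lt_irrefl _

lemma seg_km1 (hkt : k ≠ t) : seg k t (k-1) := by
  rw [seg, show k - 1 - t = (k - t) - 1 from by ring]
  have hne : (k - t) ≠ 0 := sub_ne_zero_of_ne hkt
  rw [val_sub_one hne]
  have : (k - t).val ≠ 0 := fun h => hne (Fin.ext (by simpa using h))
  omega

lemma seg_fat {w : Fin (m+2)} (hw : seg k t w) (hw1 : ¬ seg k t (w-1)) : w = t := by
  by_contra hne
  have h0 : w - t ≠ 0 := sub_ne_zero_of_ne hne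
  rw [seg, show w - 1 - t = (w - t) - 1 from by ring, val_sub_one h0] at hw1
  rw [seg] at hw
  omega

lemma seg_tp1 (hk1 : k ≠ t + 1) (hkt : k ≠ t) : seg k t (t+1) := by
  rw [seg, show t + 1 - t = 1 from by ring, Fin.val_one]
  have hne : (k - t) ≠ 0 := sub_ne_zero_of_ne hkt
  have h0 : (k - t).val ≠ 0 := fun h => hne (Fin.ext (by simpa using h))
  have h1 : (k - t) ≠ 1 := by
    intro h
    exact hk1 (by rw [← h]; ring)
  have h1' : (k - t).val ≠ 1 := by
    intro h
    exact h1 (by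
      have : ((k - t).val : Fin (m+2)) = ((1 : ℕ) : Fin (m+2)) := by rw [h]
      rwa [Fin.cast_val_eq_self, Nat.cast_one] at this)
  omega

lemma not_seg_tm2 (hk1 : t ≠ k + 1) : ¬ seg k t (t-2) := by
  rw [seg, show t - 2 - t = -2 from by ring, val_neg_two]
  have hne : (k - t) ≠ -1 := by
    intro h
    exact hk1 (by linear_combination -h)
  have : (k - t).val ≠ m + 1 := by
    intro h
    exact hne (by
      have : ((k - t).val : Fin (m+2)) = ((m + 1 : ℕ) : Fin (m+2)) := by rw [h]
      rwa [Fin.cast_val_eq_self, ← neg_one_eq] at this)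
  have := (k - t).isLt
  omega

end PFacts

lemma OR3 (hm : 3 ≤ m) (hij : i ≠ j) (h1 : j ≠ i + 1) (h2 : i ≠ j + 1)
    (f : Fin (m+2) → Set (Sym2 (Fin (m+2))) → NNReal)
    (hmono : ∀ a, Monotone (f a))
    (hgraph : ∀ a X, f a X = f a (X ∩ (Gr i j).incidenceSet a))
    {k' : Fin (m+2)} (hkk' : (k = i ∧ k' = j) ∨ (k = j ∧ k' = i))
    (hkt : k ≠ t)
    (hcc1 : if t = k + 1 then f k {eC k} ≤ f k {s(i,j)}
            else f (t-1) {eC (t-1)} ≤ f (t-1) {eC (t-2)})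
    (hcc2 : if t = k - 1 then f k {eC t} ≤ f k {s(i,j)}
            else f (t+1) {eC t} ≤ f (t+1) {eC (t+1)}) :
    IsEFXOrientation (Gr i j) f (headFn (seg k t) k) := by
  set p : Fin (m+2) → Prop := seg k t with hp
  apply master hm hij h1 h2 f hmono hgraph hkk'
  · intro v hprem
    by_cases hv2 : v = t
    · -- v = t : head is t, envied by t+1
      rw [hv2, tl, if_pos (seg_t hkt)]
      by_cases htk : t = k - 1
      · -- t + 1 = k : witness is the chord
        have htk' : t + 1 = k := by rw [htk]; ring
        have hw : s(i,j) ∈ bundleSet (Gr i j) (headFn p k) k :=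
          chord_mem_bundle hm hij h1 h2
        rw [if_pos htk] at hcc2
        rw [htk']
        exact hcc2.trans (hmono k (Set.singleton_subset_iff.mpr hw))
      · have hk1 : k ≠ t + 1 := fun h => htk (by rw [h]; ring)
        have hw : eC (t+1) ∈ bundleSet (Gr i j) (headFn p k) (t+1) :=
          eC_mem_bundle hm hij h1 h2 (by rw [hd, if_pos (seg_tp1 hk1 hkt)])
        rw [if_neg htk] at hcc2
        exact hcc2.trans (hmono (t+1) (Set.singleton_subset_iff.mpr hw))
    · by_cases hv1 : v = t - 1
      · -- v = t - 1 : head is t, envied by t-1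
        rw [hv1, tl, if_neg (not_seg_tm1)]
        by_cases htk : t = k + 1
        · -- t - 1 = k : witness is the chord
          have htk' : t - 1 = k := by rw [htk]; ring
          have hw : s(i,j) ∈ bundleSet (Gr i j) (headFn p k) k :=
            chord_mem_bundle hm hij h1 h2
          rw [if_pos htk] at hcc1
          rw [htk']
          exact hcc1.trans (hmono k (Set.singleton_subset_iff.mpr hw))
        · have hw : eC (t-2) ∈ bundleSet (Gr i j) (headFn p k) (t-1) :=
            eC_mem_bundle hm hij h1 h2
              (by rw [hd, if_neg (not_seg_tm2 htk), show t - 2 + 1 = t - 1 from by ring])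
          rw [if_neg htk] at hcc1
          exact hcc1.trans (hmono (t-1) (Set.singleton_subset_iff.mpr hw))
      · -- thin vertex
        exfalso
        obtain ⟨g, hgX, hgne⟩ := hprem
        rcases (mem_bundle hm hij h1 h2).mp hgX with ⟨v', rfl, hv'⟩ | ⟨rfl, hk⟩
        · -- cycle edge: show v' = v
          apply hgne
          simp only [hd] at hv'
          by_cases hpv : p v <;> by_cases hpv' : p v'
          · rw [if_pos hpv', if_pos hpv] at hv'; rw [hv']
          · rw [if_neg hpv', if_pos hpv] at hv'
            -- v' + 1 = v, p v, ¬ p (v - 1)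
            exfalso
            apply hv2
            apply seg_fat hpv
            rw [show v - 1 = v' from by rw [← hv']; ring]
            exact hpv'
          · rw [if_pos hpv', if_neg hpv] at hv'
            -- v' = v + 1, p v', ¬ p v = ¬ p (v' - 1)
            exfalso
            apply hv1
            have : v' = t := by
              apply seg_fat hpv'
              rw [show v' - 1 = v from by rw [hv']; ring]
              exact hpv
            linear_combination this - hv'
          · rw [if_neg hpv', if_neg hpv] at hv'
            rw [add_left_inj] at hv'; rw [hv']
        · -- chord into hd p v
          rw [hd] at hk
          by_cases hpv : p v
          · rw [if_pos hpv] at hk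
            exact not_seg_k (hk ▸ hpv)
          · rw [if_neg hpv] at hk
            apply hpv
            have : k - 1 = v := by rw [hk]; ring
            rw [← this]
            exact seg_km1 hkt
  · -- chord : bundle of k is thin
    intro hprem
    exfalso
    obtain ⟨g, hgX, hgne⟩ := hprem
    rcases (mem_bundle hm hij h1 h2).mp hgX with ⟨v', rfl, hv'⟩ | ⟨rfl, _⟩
    · rw [hd] at hv'
      by_cases hpv' : p v'
      · rw [if_pos hpv'] at hv'
        exact not_seg_k (hv' ▸ hpv')
      · rw [if_neg hpv'] at hv'
        apply hpv'
        have : k - 1 = v' := by rw [← hv']; ring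
        rw [← this]
        exact seg_km1 hkt
    · exact hgne rfl

end EFXaux

namespace EFXaux
section Select
variable {m : ℕ} {α : Type*} [LinearOrder α]
variable {bb ff : Fin (m+2) → α}

lemma prop_fwd {a : Fin (m+2)}
    (hdag : ∀ v, v ≠ a → (bb v < ff v ∨ ff (v+2) < bb (v+2))) :
    ∀ M : ℕ, ∀ v : Fin (m+2), ff v ≤ bb v →
      (∀ l : ℕ, l < M → v + 2 * (l : Fin (m+2)) ≠ a) →
      ff (v + 2 * (M : Fin (m+2))) ≤ bb (v + 2 * (M : Fin (m+2))) := by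
  intro M
  induction M with
  | zero => intro v hB _; simpa using hB
  | succ M IH =>
    intro v hB havoid
    have h0 : v ≠ a := by simpa using havoid 0 (Nat.succ_pos M)
    have hstep : ff (v+2) ≤ bb (v+2) := by
      rcases hdag v h0 with h | h
      · exact absurd hB (not_le.mpr h)
      · exact h.le
    have IH2 := IH (v+2) hstep (fun l hl hEq => by
      apply havoid (l+1) (by omega)
      rw [← hEq]; push_cast; ring)
    have heq : (v+2) + 2*((M : ℕ) : Fin (m+2)) = v + 2*((M+1 : ℕ) : Fin (m+2)) := by
      push_cast; ring
    rwa [heq] at IH2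

lemma prop_fwd_all
    (hdag : ∀ v : Fin (m+2), bb v < ff v ∨ ff (v+2) < bb (v+2)) :
    ∀ M : ℕ, ∀ v : Fin (m+2), ff v ≤ bb v →
      ff (v + 2 * (M : Fin (m+2))) ≤ bb (v + 2 * (M : Fin (m+2))) := by
  intro M
  induction M with
  | zero => intro v hB; simpa using hB
  | succ M IH =>
    intro v hB
    have hstep : ff (v+2) ≤ bb (v+2) := by
      rcases hdag v with h | h
      · exact absurd hB (not_le.mpr h)
      · exact h.le
    have IH2 := IH (v+2) hstep
    have heq : (v+2) + 2*((M : ℕ) : Fin (m+2)) = v + 2*((M+1 : ℕ) : Fin (m+2)) := by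
      push_cast; ring
    rwa [heq] at IH2

lemma prop_bwd {a : Fin (m+2)}
    (hdag : ∀ v, v ≠ a → (bb v < ff v ∨ ff (v+2) < bb (v+2))) :
    ∀ M : ℕ, ∀ v : Fin (m+2),
      bb (v + 2 * ((M+1 : ℕ) : Fin (m+2))) ≤ ff (v + 2 * ((M+1 : ℕ) : Fin (m+2))) →
      (∀ l : ℕ, l ≤ M → v + 2 * (l : Fin (m+2)) ≠ a) →
      bb v < ff v := by
  intro M
  induction M with
  | zero =>
    intro v hF havoid
    have h0 : v ≠ a := by simpa using havoid 0 le_rfl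
    rcases hdag v h0 with h | h
    · exact h
    · exfalso
      have : v + 2 * ((0+1 : ℕ) : Fin (m+2)) = v + 2 := by push_cast; ring
      rw [this] at hF
      exact absurd hF (not_le.mpr h)
  | succ M IH =>
    intro v hF havoid
    have h0 : v ≠ a := by simpa using havoid 0 (Nat.zero_le _)
    have hF' : bb ((v+2) + 2*((M+1 : ℕ) : Fin (m+2))) ≤ ff ((v+2) + 2*((M+1 : ℕ) : Fin (m+2))) := by
      have heq : (v+2) + 2*((M+1 : ℕ) : Fin (m+2)) = v + 2*((M+1+1 : ℕ) : Fin (m+2)) := by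
        push_cast; ring
      rw [heq]; exact hF
    have hstep : bb (v+2) < ff (v+2) := IH (v+2) hF' (fun l hl hEq => by
      apply havoid (l+1) (by omega)
      rw [← hEq]; push_cast; ring)
    rcases hdag v h0 with h | h
    · exact h
    · exact absurd hstep (not_lt.mpr h.le)

lemma exists_steps (hodd : Odd m) (u w : Fin (m+2)) :
    u + 2 * (((((w - u) * inv2 m).val : ℕ)) : Fin (m+2)) = w := by
  rw [Fin.cast_val_eq_self]
  calc u + 2 * ((w - u) * inv2 m) = u + (2 * inv2 m) * (w - u) := by ring
  _ = w := by rw [two_mul_inv2 hodd]; ring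

lemma all_B (hodd : Odd m)
    (hdag : ∀ v : Fin (m+2), bb v < ff v ∨ ff (v+2) < bb (v+2))
    {u : Fin (m+2)} (hu : ff u ≤ bb u) : ∀ w, ff w ≤ bb w := by
  intro w
  have := prop_fwd_all hdag ((( w - u) * inv2 m).val) u hu
  rwa [exists_steps hodd u w] at this

end Select
end EFXaux

namespace EFXaux
section Select2
variable {m : ℕ} {α : Type*} [LinearOrder α]
variable {bb ff : Fin (m+2) → α}

/-- if some vertex other than `a` is weakly backward, then `a - 2` is weakly backward -/
lemma b_at_am2 (hm : 3 ≤ m) (hodd : Odd m) {a u : Fin (m+2)} (hua : u ≠ a)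
    (hdag : ∀ v, v ≠ a → (bb v < ff v ∨ ff (v+2) < bb (v+2)))
    (hu : ff u ≤ bb u) : ff (a - 2) ≤ bb (a - 2) := by
  have h2i := two_mul_inv2 (m := m) hodd
  set Mf : Fin (m+2) := (a - 2 - u) * inv2 m with hMfdef
  set M : ℕ := Mf.val with hMdef
  have hM : 2 * ((M : ℕ) : Fin (m+2)) = a - 2 - u := by
    rw [hMdef, Fin.cast_val_eq_self, hMfdef]
    calc (2 : Fin (m+2)) * ((a - 2 - u) * inv2 m) = (2 * inv2 m) * (a - 2 - u) := by ring
    _ = a - 2 - u := by rw [h2i]; ring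
  have havoid : ∀ l : ℕ, l < M → u + 2 * (l : Fin (m+2)) ≠ a := by
    intro l hl hEq
    have hlval : ((l : Fin (m+2))).val = l := Fin.val_cast_of_lt (lt_trans hl Mf.isLt)
    have hlf : ((l : ℕ) : Fin (m+2)) = Mf + 1 := by
      rw [hMfdef]
      linear_combination inv2 m * hEq + (1 - ((l : ℕ) : Fin (m+2))) * h2i
    rcases eq_or_ne Mf (Fin.last (m+1)) with hlast | hlast
    · have : ((l : ℕ) : Fin (m+2)) = 0 := by
        rw [hlf, hlast]
        exact Fin.ext (by simp [Fin.val_add_one, Fin.last])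
      rw [this] at hEq
      apply hua
      rw [← hEq]; ring
    · have : l = M + 1 := by
        have := congrArg Fin.val hlf
        rwa [hlval, Fin.val_add_one, if_neg hlast, ← hMdef] at this
      omega
  have hprop := prop_fwd hdag M u hu havoid
  have heq : u + 2 * ((M : ℕ) : Fin (m+2)) = a - 2 := by rw [hM]; ring
  rwa [heq] at hprop

/-- pull strict-forwardness backward two steps past the whole chain -/
lemma sF_pull (hm : 3 ≤ m) (hodd : Odd m) {a : Fin (m+2)}
    (hdag : ∀ v, v ≠ a → (bb v < ff v ∨ ff (v+2) < bb (v+2)))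
    (hF : bb (a+1) < ff (a+1)) : bb (a+4) < ff (a+4) := by
  have h2i := two_mul_inv2 (m := m) hodd
  set Mf : Fin (m+2) := (-3 : Fin (m+2)) * inv2 m with hMfdef
  have hMf2 : 2 * Mf = -3 := by
    rw [hMfdef]
    calc (2 : Fin (m+2)) * (-3 * inv2 m) = (2 * inv2 m) * (-3) := by ring
    _ = -3 := by rw [h2i]; ring
  have hMfne : Mf ≠ 0 := by
    intro h
    rw [h, mul_zero] at hMf2
    exact three_ne_zero' hm (by linear_combination hMf2)
  have hMvalne : Mf.val ≠ 0 := fun h => hMfne (Fin.val_injective (h.trans (Fin.val_zero _).symm))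
  set M : ℕ := Mf.val - 1 with hMdef
  have hM1 : M + 1 = Mf.val := Nat.succ_pred_eq_of_pos (Nat.pos_of_ne_zero hMvalne)
  have hcast : ((M + 1 : ℕ) : Fin (m+2)) = Mf := by rw [hM1, Fin.cast_val_eq_self]
  have hhyp : bb ((a+4) + 2 * ((M+1 : ℕ) : Fin (m+2))) ≤ ff ((a+4) + 2 * ((M+1 : ℕ) : Fin (m+2))) := by
    have : (a+4) + 2 * ((M+1 : ℕ) : Fin (m+2)) = a + 1 := by
      rw [hcast]
      linear_combination hMf2
    rw [this]
    exact hF.le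
  have havoid : ∀ l : ℕ, l ≤ M → (a+4) + 2 * (l : Fin (m+2)) ≠ a := by
    intro l hl hEq
    have hll : l < m + 2 := by have := Mf.isLt; omega
    have hlval : ((l : Fin (m+2))).val = l := Fin.val_cast_of_lt hll
    have hlf : ((l : ℕ) : Fin (m+2)) = -2 := by
      linear_combination inv2 m * hEq + (-(((l : ℕ) : Fin (m+2))) - 2) * h2i
    have hlm : l = m := by
      have := congrArg Fin.val hlf
      rwa [hlval, val_neg_two] at this
    have hMm : M = m := by
      have := Mf.isLt
      omega
    have hMfval : Mf.val = m + 1 := by omega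
    have hMfeq : Mf = -1 := Fin.ext (by rw [hMfval, val_neg_one])
    rw [hMfeq] at hMf2
    exact one_ne_zero' hm (by linear_combination hMf2)
  exact prop_bwd hdag M (a+4) hhyp havoid

end Select2
end EFXaux

namespace EFXaux
section Select3
variable {m : ℕ} {α : Type*} [LinearOrder α]
variable {bb ff cc : Fin (m+2) → α}

lemma four_ne_zero' (hm : 3 ≤ m) : (4 : Fin (m+2)) ≠ 0 := by
  have : (4 : Fin (m+2)) = ((4:ℕ) : Fin (m+2)) := by norm_cast
  rw [this]; exact natCast_ne_zero (by omega) (by omega)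

def SelStatement (bb ff cc : Fin (m+2) → α) (i j : Fin (m+2)) : Prop :=
  ∃ k k' : Fin (m+2), ((k = i ∧ k' = j) ∨ (k = j ∧ k' = i)) ∧
    ((ff (k-1) ≤ bb (k-1) ∧ cc k' ≤ bb k') ∨
     (bb (k+1) ≤ ff (k+1) ∧ cc k' ≤ ff k') ∨
     (∃ t, t ≠ k ∧
       (if t = k + 1 then ff k ≤ cc k else ff (t-1) ≤ bb (t-1)) ∧
       (if t = k - 1 then bb k ≤ cc k else bb (t+1) ≤ ff (t+1))))

lemma selstatement_symm (h : SelStatement bb ff cc j i) : SelStatement bb ff cc i j := by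
  obtain ⟨k, k', hkk', hp⟩ := h
  exact ⟨k, k', hkk'.symm, hp⟩

lemma blocked (hm : 3 ≤ m) (hodd : Odd m) {i j : Fin (m+2)}
    (hij : i ≠ j) (h1 : j ≠ i + 1) (h2 : i ≠ j + 1) (hj2 : j = i + 2)
    (hdag : ∀ v, v ≠ i → (bb v < ff v ∨ ff (v+2) < bb (v+2)))
    (hC : ¬ SelStatement bb ff cc i j) : False := by
  have e1 : (1 : Fin (m+2)) ≠ 0 := one_ne_zero' hm
  have e2 : (2 : Fin (m+2)) ≠ 0 := two_ne_zero' hm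
  have e3 : (3 : Fin (m+2)) ≠ 0 := three_ne_zero' hm
  have nP1 : ∀ k k', ((k = i ∧ k' = j) ∨ (k = j ∧ k' = i)) →
      ¬(ff (k-1) ≤ bb (k-1) ∧ cc k' ≤ bb k') :=
    fun k k' h hp => hC ⟨k, k', h, Or.inl hp⟩
  have nP2 : ∀ k k', ((k = i ∧ k' = j) ∨ (k = j ∧ k' = i)) →
      ¬(bb (k+1) ≤ ff (k+1) ∧ cc k' ≤ ff k') :=
    fun k k' h hp => hC ⟨k, k', h, Or.inr (Or.inl hp)⟩
  have nP3 : ∀ k k', ((k = i ∧ k' = j) ∨ (k = j ∧ k' = i)) → ∀ t,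
      ¬(t ≠ k ∧
       (if t = k + 1 then ff k ≤ cc k else ff (t-1) ≤ bb (t-1)) ∧
       (if t = k - 1 then bb k ≤ cc k else bb (t+1) ≤ ff (t+1))) :=
    fun k k' h t hp => hC ⟨k, k', h, Or.inr (Or.inr ⟨t, hp⟩)⟩
  by_cases h1all : ∀ u, bb u < ff u
  · -- all strictly forward
    have hcj : ff j < cc j := by
      by_contra hcon
      exact nP2 i j (Or.inl ⟨rfl, rfl⟩) ⟨(h1all _).le, not_lt.mp hcon⟩
    apply nP3 j i (Or.inr ⟨rfl, rfl⟩) (j+1)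
    refine ⟨fun h => e1 (by linear_combination h), ?_, ?_⟩
    · rw [if_pos rfl]; exact hcj.le
    · rw [if_neg (fun h => e2 (by linear_combination h))]
      exact (h1all _).le
  · push_neg at h1all
    obtain ⟨u0, hu0⟩ := h1all
    by_cases h2ex : ∃ u, u ≠ i ∧ ff u ≤ bb u
    · obtain ⟨u, hui, hu⟩ := h2ex
      have hBi2 : ff (i-2) ≤ bb (i-2) := b_at_am2 hm hodd hui hdag hu
      by_cases h3 : bb i ≤ cc i
      · apply nP3 i j (Or.inl ⟨rfl, rfl⟩) (i-1)
        refine ⟨fun h => e1 (by linear_combination - h), ?_, ?_⟩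
        · rw [if_neg (fun h => e2 (by linear_combination - h))]
          rw [show i - 1 - 1 = i - 2 from by ring]
          exact hBi2
        · rw [if_pos rfl]; exact h3
      · have h3' : cc i ≤ bb i := (not_le.mp h3).le
        by_cases h4 : ff (i+1) ≤ bb (i+1)
        · apply nP1 j i (Or.inr ⟨rfl, rfl⟩)
          constructor
          · rw [show j - 1 = i + 1 from by rw [hj2]; ring]
            exact h4
          · exact h3'
        · have h4' : bb (i+1) < ff (i+1) := not_le.mp h4
          have h5' : bb (i+4) < ff (i+4) := sF_pull hm hodd hdag h4'
          by_cases h5 : cc j ≤ ff j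
          · exact nP2 i j (Or.inl ⟨rfl, rfl⟩) ⟨h4'.le, h5⟩
          · apply nP3 j i (Or.inr ⟨rfl, rfl⟩) (j+1)
            refine ⟨fun h => e1 (by linear_combination h), ?_, ?_⟩
            · rw [if_pos rfl]; exact (not_le.mp h5).le
            · rw [if_neg (fun h => e2 (by linear_combination h))]
              rw [show j + 1 + 1 = i + 4 from by rw [hj2]; ring]
              exact h5'.le
    · -- every vertex other than i is strictly forward
      push_neg at h2ex
      have hsf : ∀ u, u ≠ i → bb u < ff u := h2ex
      have hci : ff i < cc i := by
        by_contra hcon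
        apply nP2 j i (Or.inr ⟨rfl, rfl⟩)
        refine ⟨?_, not_lt.mp hcon⟩
        refine (hsf (j+1) ?_).le
        rw [hj2]
        intro h
        exact e3 (by linear_combination h)
      apply nP3 i j (Or.inl ⟨rfl, rfl⟩) (i+1)
      refine ⟨fun h => e1 (by linear_combination h), ?_, ?_⟩
      · rw [if_pos rfl]; exact hci.le
      · rw [if_neg (fun h => e2 (by linear_combination h))]
        refine (hsf (i+1+1) ?_).le
        intro h
        exact e2 (by linear_combination h)

end Select3
end EFXaux

namespace EFXaux
section Select4
variable {m : ℕ} {α : Type*} [LinearOrder α]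
variable {bb ff cc : Fin (m+2) → α}

lemma free (hm : 3 ≤ m) (hodd : Odd m) {i j : Fin (m+2)}
    (hij : i ≠ j) (h1 : j ≠ i + 1) (h2 : i ≠ j + 1)
    (hdag : ∀ v : Fin (m+2), bb v < ff v ∨ ff (v+2) < bb (v+2))
    (hC : ¬ SelStatement bb ff cc i j) : False := by
  have e1 : (1 : Fin (m+2)) ≠ 0 := one_ne_zero' hm
  have e2 : (2 : Fin (m+2)) ≠ 0 := two_ne_zero' hm
  have nP1 : ∀ k k', ((k = i ∧ k' = j) ∨ (k = j ∧ k' = i)) →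
      ¬(ff (k-1) ≤ bb (k-1) ∧ cc k' ≤ bb k') :=
    fun k k' h hp => hC ⟨k, k', h, Or.inl hp⟩
  have nP2 : ∀ k k', ((k = i ∧ k' = j) ∨ (k = j ∧ k' = i)) →
      ¬(bb (k+1) ≤ ff (k+1) ∧ cc k' ≤ ff k') :=
    fun k k' h hp => hC ⟨k, k', h, Or.inr (Or.inl hp)⟩
  have nP3 : ∀ k k', ((k = i ∧ k' = j) ∨ (k = j ∧ k' = i)) → ∀ t,
      ¬(t ≠ k ∧
       (if t = k + 1 then ff k ≤ cc k else ff (t-1) ≤ bb (t-1)) ∧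
       (if t = k - 1 then bb k ≤ cc k else bb (t + 1) ≤ ff (t + 1))) :=
    fun k k' h t hp => hC ⟨k, k', h, Or.inr (Or.inr ⟨t, hp⟩)⟩
  by_cases h1all : ∀ u, bb u < ff u
  · have hcj : ff j < cc j := by
      by_contra hcon
      exact nP2 i j (Or.inl ⟨rfl, rfl⟩) ⟨(h1all _).le, not_lt.mp hcon⟩
    apply nP3 j i (Or.inr ⟨rfl, rfl⟩) (j+1)
    refine ⟨fun h => e1 (by linear_combination h), ?_, ?_⟩
    · rw [if_pos rfl]; exact hcj.le
    · rw [if_neg (fun h => e2 (by linear_combination h))]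
      exact (h1all _).le
  · push_neg at h1all
    obtain ⟨u0, hu0⟩ := h1all
    have hAB : ∀ w, ff w ≤ bb w := all_B hodd hdag hu0
    by_cases h6 : cc j ≤ bb j
    · exact nP1 i j (Or.inl ⟨rfl, rfl⟩) ⟨hAB _, h6⟩
    · apply nP3 j i (Or.inr ⟨rfl, rfl⟩) (j-1)
      refine ⟨fun h => e1 (by linear_combination - h), ?_, ?_⟩
      · rw [if_neg (fun h => e2 (by linear_combination - h))]
        exact hAB _
      · rw [if_pos rfl]; exact (not_le.mp h6).le

lemma select (hm : 3 ≤ m) (hodd : Odd m) {i j : Fin (m+2)}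
    (hij : i ≠ j) (h1 : j ≠ i + 1) (h2 : i ≠ j + 1) :
    SelStatement bb ff cc i j := by
  by_contra hC
  have gdag : ∀ (k k' : Fin (m+2)), ((k = i ∧ k' = j) ∨ (k = j ∧ k' = i)) →
      ∀ v : Fin (m+2), v + 1 ≠ k → v + 1 ≠ k + 1 → v + 1 ≠ k - 1 →
      (bb v < ff v ∨ ff (v+2) < bb (v+2)) := by
    intro k k' hkk' v hv1 hv2 hv3
    by_contra hcon
    push_neg at hcon
    refine hC ⟨k, k', hkk', Or.inr (Or.inr ⟨v+1, hv1, ?_, ?_⟩)⟩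
    · rw [if_neg hv2, show v + 1 - 1 = v from by ring]; exact hcon.1
    · rw [if_neg hv3, show v + 1 + 1 = v + 2 from by ring]; exact hcon.2
  have e1 : (1 : Fin (m+2)) ≠ 0 := one_ne_zero' hm
  have e2 : (2 : Fin (m+2)) ≠ 0 := two_ne_zero' hm
  have e3 : (3 : Fin (m+2)) ≠ 0 := three_ne_zero' hm
  have e4 : (4 : Fin (m+2)) ≠ 0 := four_ne_zero' hm
  by_cases hj2 : j = i + 2
  · apply blocked hm hodd hij h1 h2 hj2 ?_ hC
    intro v hvi
    by_cases hz1 : v + 1 = i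
    · apply gdag j i (Or.inr ⟨rfl, rfl⟩) v
      · rw [hz1]; exact fun h => hij h
      · rw [hz1]; exact fun h => h2 h
      · rw [hz1]; exact fun h => h1 (by linear_combination - h)
    · by_cases hz2 : v + 1 = i - 1
      · apply gdag j i (Or.inr ⟨rfl, rfl⟩) v
        · rw [hz2]; exact fun h => e3 (by linear_combination - h - hj2)
        · rw [hz2]; exact fun h => e4 (by linear_combination - h - hj2)
        · rw [hz2]; exact fun h => hij (by linear_combination h)
      · apply gdag i j (Or.inl ⟨rfl, rfl⟩) v hz1 (fun h => hvi (by linear_combination h)) hz2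
  · by_cases hi2 : i = j + 2
    · apply blocked hm hodd hij.symm h2 h1 hi2 ?_ (fun hs => hC (selstatement_symm hs))
      intro v hvj
      by_cases hz1 : v + 1 = j
      · apply gdag i j (Or.inl ⟨rfl, rfl⟩) v
        · rw [hz1]; exact fun h => hij h.symm
        · rw [hz1]; exact fun h => h1 h
        · rw [hz1]; exact fun h => h2 (by linear_combination - h)
      · by_cases hz2 : v + 1 = j - 1
        · apply gdag i j (Or.inl ⟨rfl, rfl⟩) v
          · rw [hz2]; exact fun h => e3 (by linear_combination - h - hi2)
          · rw [hz2]; exact fun h => e4 (by linear_combination - h - hi2)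
          · rw [hz2]; exact fun h => hij (by linear_combination - h)
        · apply gdag j i (Or.inr ⟨rfl, rfl⟩) v hz1 (fun h => hvj (by linear_combination h)) hz2
    · apply free hm hodd hij h1 h2 ?_ hC
      intro v
      by_cases hz0 : v + 1 = i + 1
      · apply gdag j i (Or.inr ⟨rfl, rfl⟩) v
        · rw [hz0]; exact fun h => h1 h.symm
        · rw [hz0]; exact fun h => hij (by linear_combination h)
        · rw [hz0]; exact fun h => hj2 (by linear_combination - h)
      · by_cases hz1 : v + 1 = i
        · apply gdag j i (Or.inr ⟨rfl, rfl⟩) v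
          · rw [hz1]; exact fun h => hij h
          · rw [hz1]; exact fun h => h2 h
          · rw [hz1]; exact fun h => h1 (by linear_combination - h)
        · by_cases hz2 : v + 1 = i - 1
          · apply gdag j i (Or.inr ⟨rfl, rfl⟩) v
            · rw [hz2]; exact fun h => h2 (by linear_combination h)
            · rw [hz2]; exact fun h => hi2 (by linear_combination h)
            · rw [hz2]; exact fun h => hij (by linear_combination h)
          · apply gdag i j (Or.inl ⟨rfl, rfl⟩) v hz1 hz0 hz2

end Select4
end EFXaux

/-- An odd cycle together with one additional edge (an edge between two
non-adjacent vertices of the cycle) is strongly EFX-orientable. -/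
theorem stronglyEFXOrientable_oddCycle_plus_chord (n : ℕ) (hodd : Odd n) (hn : 3 ≤ n)
    (i j : Fin n) (hij : i ≠ j) (hnadj : ¬ (cycleGraph n).Adj i j) :
    StronglyEFXOrientable (cycleGraph n ⊔ SimpleGraph.fromEdgeSet {s(i, j)}) := by
  have hn5 : 5 ≤ n := by
    obtain ⟨l, hl⟩ := hodd
    by_contra hlt
    push_neg at hlt
    have h3 : n = 3 := by omega
    subst h3
    revert i j
    decide
  obtain ⟨m, rfl⟩ : ∃ m, n = m + 2 := ⟨n - 2, by omega⟩
  have hm : 3 ≤ m := by omega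
  have hoddm : Odd m := by
    obtain ⟨l, hl⟩ := hodd
    exact ⟨l - 1, by omega⟩
  rw [cycleGraph_adj] at hnadj
  push_neg at hnadj
  have h1 : j ≠ i + 1 := fun h => hnadj.2 (by rw [h]; ring)
  have h2 : i ≠ j + 1 := fun h => hnadj.1 (by rw [h]; ring)
  intro f hmono hgraph
  have hgraph' : ∀ a X, f a X = f a (X ∩ (EFXaux.Gr i j).incidenceSet a) := hgraph
  obtain ⟨k, k', hkk', hP⟩ :=
    EFXaux.select (bb := fun v => f v {EFXaux.eC (v-1)})
      (ff := fun v => f v {EFXaux.eC v}) (cc := fun v => f v {s(i,j)}) hm hoddm hij h1 h2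
  rcases hP with ⟨ha, hb⟩ | ⟨ha, hb⟩ | ⟨t, htk, hcc1, hcc2⟩
  · refine ⟨_, EFXaux.OR1 hm hij h1 h2 f hmono hgraph' hkk' ?_ hb⟩
    rw [show k - 2 = k - 1 - 1 from by ring]
    exact ha
  · refine ⟨_, EFXaux.OR2 hm hij h1 h2 f hmono hgraph' hkk' ?_ hb⟩
    have ha' : f (k+1) {EFXaux.eC (k+1-1)} ≤ f (k+1) {EFXaux.eC (k+1)} := ha
    rw [show (k : Fin (m+2)) + 1 - 1 = k from by ring] at ha'
    exact ha'
  · refine ⟨_, EFXaux.OR3 hm hij h1 h2 f hmono hgraph' hkk' (Ne.symm htk) ?_ ?_⟩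
    · split_ifs with h
      · rw [if_pos h] at hcc1; exact hcc1
      · rw [if_neg h] at hcc1
        rw [show t - 2 = t - 1 - 1 from by ring]
        exact hcc1
    · split_ifs with h
      · rw [if_pos h] at hcc2
        have hcc2' : f k {EFXaux.eC (k-1)} ≤ f k {s(i,j)} := hcc2
        rw [show t = k - 1 from h]
        exact hcc2'
      · rw [if_neg h] at hcc2
        have hcc2' : f (t+1) {EFXaux.eC (t+1-1)} ≤ f (t+1) {EFXaux.eC (t+1)} := hcc2
        rw [show (t : Fin (m+2)) + 1 - 1 = t from by ring] at hcc2'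
        exact hcc2'
end

section
/- Let G be a finite simple graph with a vertex v of degree 1. Then G − v (G with the vertex v and its incident edge deleted) is strongly EFX-orientable if and only if G is strongly EFX-orientable. -/
open SimpleGraph
open scoped Classical

variable {V : Type*}

private lemma s2v_not_mem {v : V} (e' : Sym2 {u : V | u ≠ v}) :
    v ∉ Sym2.map Subtype.val e' := by
  rw [Sym2.mem_map]
  rintro ⟨b, -, hb⟩
  exact b.2 hb

private lemma mem_s2v {s : Set V} {a : s} {e' : Sym2 s} :
    (a : V) ∈ Sym2.map Subtype.val e' ↔ a ∈ e' := by
  rw [Sym2.mem_map]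
  constructor
  · rintro ⟨b, hb, h⟩
    rwa [show b = a from Subtype.ext h] at hb
  · exact fun h => ⟨a, h, rfl⟩

private lemma edge_s2v (G : SimpleGraph V) (s : Set V) (e' : Sym2 s) :
    e' ∈ (G.induce s).edgeSet ↔ Sym2.map Subtype.val e' ∈ G.edgeSet := by
  induction e' using Sym2.ind with
  | _ a b => simp [Sym2.map_pair_eq]

private lemma inc_s2v (G : SimpleGraph V) (s : Set V) (b : s) (e' : Sym2 s) :
    e' ∈ (G.induce s).incidenceSet b ↔ Sym2.map Subtype.val e' ∈ G.incidenceSet (b : V) := by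
  simp [SimpleGraph.incidenceSet, Set.mem_sep_iff, edge_s2v, mem_s2v]

private lemma exists_s2v {v : V} {e : Sym2 V} (h : v ∉ e) :
    ∃ e' : Sym2 {u : V | u ≠ v}, Sym2.map Subtype.val e' = e := by
  induction e using Sym2.ind with
  | _ a b =>
    simp only [Sym2.mem_iff, not_or] at h
    exact ⟨s(⟨a, Ne.symm h.1⟩, ⟨b, Ne.symm h.2⟩), Sym2.map_pair_eq _ _ _⟩

private lemma dir2 [Fintype V] (G : SimpleGraph V) (v u : V) (hadj : G.Adj v u)
    (h : StronglyEFXOrientable G) : StronglyEFXOrientable (G.induce {u | u ≠ v}) := by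
  classical
  intro fS hmonoS hgrS
  have hιinj : Function.Injective (Sym2.map (Subtype.val : {u : V | u ≠ v} → V)) :=
    Sym2.map.injective Subtype.val_injective
  let f : V → Set (Sym2 V) → NNReal := fun a X =>
    if h : a = v then 0 else fS ⟨a, h⟩ {e' | Sym2.map Subtype.val e' ∈ X}
  have hfv : ∀ (a : V) (ha : a ≠ v) (X : Set (Sym2 V)),
      f a X = fS ⟨a, ha⟩ {e' | Sym2.map Subtype.val e' ∈ X} := by
    intro a ha X
    simp only [f]
    rw [dif_neg ha]
  have hf0 : ∀ X, f v X = 0 := by intro X; simp [f]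
  have hmono : ∀ a, Monotone (f a) := by
    intro a X Y hXY
    by_cases ha : a = v
    · subst ha; rw [hf0, hf0]
    · rw [hfv a ha, hfv a ha]
      exact hmonoS _ fun e' he' => hXY he'
  have hgr : ∀ a X, f a X = f a (X ∩ G.incidenceSet a) := by
    intro a X
    by_cases ha : a = v
    · subst ha; rw [hf0, hf0]
    · rw [hfv a ha, hfv a ha]
      rw [hgrS ⟨a, ha⟩ {e' | Sym2.map Subtype.val e' ∈ X},
        hgrS ⟨a, ha⟩ {e' | Sym2.map Subtype.val e' ∈ X ∩ G.incidenceSet a}]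
      congr 1
      ext e'
      simp only [Set.mem_inter_iff, Set.mem_setOf_eq, inc_s2v]
      tauto
  obtain ⟨head, hhead, hEFX⟩ := h f hmono hgr
  let head' : Sym2 {u : V | u ≠ v} → {u : V | u ≠ v} := fun e' =>
    if h : head (Sym2.map Subtype.val e') = v then ⟨u, hadj.ne'⟩
    else ⟨head (Sym2.map Subtype.val e'), h⟩
  have hh' : ∀ (e' : Sym2 {u : V | u ≠ v}) (h : head (Sym2.map Subtype.val e') ≠ v),
      head' e' = ⟨head (Sym2.map Subtype.val e'), h⟩ := by
    intro e' hne
    simp only [head']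
    rw [dif_neg hne]
  have hbundle : ∀ b : {u : V | u ≠ v},
      bundleSet (G.induce {u | u ≠ v}) head' b
        = {e' | Sym2.map Subtype.val e' ∈ bundleSet G head (b : V)} := by
    intro b
    ext e'
    constructor
    · rintro ⟨he, hh⟩
      have heG : Sym2.map Subtype.val e' ∈ G.edgeSet := (edge_s2v G _ e').mp he
      have hvv : head (Sym2.map Subtype.val e') ≠ v := by
        intro hc
        have hm := hhead _ heG
        rw [hc] at hm
        exact s2v_not_mem e' hm
      rw [hh' e' hvv] at hh
      exact ⟨heG, congrArg Subtype.val hh⟩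
    · rintro ⟨he, hh⟩
      have hvv : head (Sym2.map Subtype.val e') ≠ v := by rw [hh]; exact b.2
      refine ⟨(edge_s2v G _ e').mpr he, ?_⟩
      rw [hh' e' hvv]
      exact Subtype.ext hh
  refine ⟨head', ?_, ?_⟩
  · intro e' he'
    have heG : Sym2.map Subtype.val e' ∈ G.edgeSet := (edge_s2v G _ e').mp he'
    have hm := hhead _ heG
    have hvv : head (Sym2.map Subtype.val e') ≠ v := fun hc => by
      rw [hc] at hm; exact s2v_not_mem e' hm
    rw [hh' e' hvv]
    exact mem_s2v.mp hm
  · intro a b g' hg'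
    rw [hbundle] at hg'
    have key := hEFX a.val b.val (Sym2.map Subtype.val g') hg'
    rw [hfv a.val a.2, hfv a.val a.2] at key
    have preim_diff : {e' | Sym2.map Subtype.val e'
          ∈ bundleSet G head (b : V) \ {Sym2.map Subtype.val g'}}
        = {e' | Sym2.map Subtype.val e' ∈ bundleSet G head (b : V)} \ {g'} := by
      ext x
      constructor
      · rintro ⟨hY, hne⟩
        exact ⟨hY, fun hc => hne (congrArg (Sym2.map Subtype.val) hc)⟩
      · rintro ⟨hY, hne⟩
        exact ⟨hY, fun hc => hne (hιinj hc)⟩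
    rw [preim_diff, ← hbundle b, ← hbundle a] at key
    exact key

private lemma dir1 [Fintype V] (G : SimpleGraph V) (v u : V)
    (hadj : G.Adj v u) (hinc : G.incidenceSet v = {s(v, u)})
    (h' : StronglyEFXOrientable (G.induce {u | u ≠ v})) : StronglyEFXOrientable G := by
  classical
  intro f hmono hgr
  have hιinj : Function.Injective (Sym2.map (Subtype.val : {u : V | u ≠ v} → V)) :=
    Sym2.map.injective Subtype.val_injective
  have himg : ∀ (a : {u : V | u ≠ v}) (X' : Set (Sym2 {u : V | u ≠ v})),
      (Sym2.map Subtype.val '' X') ∩ G.incidenceSet (a : V)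
        = Sym2.map Subtype.val '' (X' ∩ (G.induce {u | u ≠ v}).incidenceSet a) := by
    intro a X'
    ext e
    constructor
    · rintro ⟨⟨e', he', rfl⟩, hi⟩
      exact ⟨e', ⟨he', (inc_s2v G _ a e').mpr hi⟩, rfl⟩
    · rintro ⟨e', ⟨he', hi⟩, rfl⟩
      exact ⟨⟨e', he', rfl⟩, (inc_s2v G _ a e').mp hi⟩
  obtain ⟨head', hhead', hEFX'⟩ :=
    h' (fun a X' => f a.val (Sym2.map Subtype.val '' X'))
      (fun a X Y hXY => hmono _ (Set.image_mono hXY))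
      (fun a X' => by
        show f a.val (Sym2.map Subtype.val '' X')
          = f a.val (Sym2.map Subtype.val '' (X' ∩ (G.induce {u | u ≠ v}).incidenceSet a))
        rw [hgr a.val (Sym2.map Subtype.val '' X'), himg a X'])
  let head : Sym2 V → V := fun e =>
    if hve : v ∈ e then v else (head' (Classical.choose (exists_s2v hve))).val
  have hpos : ∀ e, v ∈ e → head e = v := by
    intro e hve; simp only [head]; rw [dif_pos hve]
  have hneg : ∀ (e : Sym2 V) (hve : v ∉ e),
      head e = (head' (Classical.choose (exists_s2v hve))).val := by
    intro e hve; simp only [head]; rw [dif_neg hve]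
  have hheadv : ∀ e, head e = v ↔ v ∈ e := by
    intro e
    constructor
    · intro hh
      by_contra hve
      rw [hneg e hve] at hh
      exact (head' (Classical.choose (exists_s2v hve))).2 hh
    · exact hpos e
  have hbv : bundleSet G head v = {s(v, u)} := by
    rw [← hinc]
    ext e
    simp only [bundleSet, SimpleGraph.incidenceSet, Set.mem_sep_iff, hheadv]
  have hbne : ∀ (b : V) (hb : b ≠ v),
      bundleSet G head b
        = Sym2.map Subtype.val '' bundleSet (G.induce {u | u ≠ v}) head' ⟨b, hb⟩ := by
    intro b hb
    ext e
    constructor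
    · rintro ⟨he, hh⟩
      have hve : v ∉ e := fun hmem => hb (by rw [← hh]; exact hpos e hmem)
      have hspec := Classical.choose_spec (exists_s2v hve)
      refine ⟨Classical.choose (exists_s2v hve), ⟨?_, ?_⟩, hspec⟩
      · rw [edge_s2v]
        exact Set.mem_of_eq_of_mem hspec he
      · apply Subtype.ext
        show (head' (Classical.choose (exists_s2v hve)) : V) = b
        rw [← hh, hneg e hve]
    · rintro ⟨e', ⟨he', hh⟩, rfl⟩
      have hve : v ∉ Sym2.map Subtype.val e' := s2v_not_mem e'
      refine ⟨(edge_s2v G _ e').mp he', ?_⟩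
      have hspec := Classical.choose_spec (exists_s2v hve)
      have hce : Classical.choose (exists_s2v hve) = e' := hιinj hspec
      rw [hneg _ hve, hce, hh]
  refine ⟨head, ?_, ?_⟩
  · intro e he
    by_cases hve : v ∈ e
    · rw [hpos e hve]; exact hve
    · rw [hneg e hve]
      have hspec := Classical.choose_spec (exists_s2v hve)
      have he' : Classical.choose (exists_s2v hve) ∈ (G.induce {u | u ≠ v}).edgeSet := by
        rw [edge_s2v]
        exact Set.mem_of_eq_of_mem hspec he
      have hm := hhead' _ he'
      have hmm : (head' (Classical.choose (exists_s2v hve)) : V)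
          ∈ Sym2.map Subtype.val (Classical.choose (exists_s2v hve)) := mem_s2v.mpr hm
      rwa [hspec] at hmm
  · intro a b g hg
    by_cases hb : b = v
    · subst hb
      rw [hbv] at hg ⊢
      rw [Set.mem_singleton_iff] at hg
      subst hg
      rw [Set.diff_self]
      exact hmono a (Set.empty_subset _)
    · by_cases ha : a = v
      · rw [hgr a (bundleSet G head b \ {g})]
        have hempty : (bundleSet G head b \ {g}) ∩ G.incidenceSet a = ∅ := by
          ext e
          simp only [Set.mem_inter_iff, Set.mem_diff, Set.mem_empty_iff_false, iff_false]
          rintro ⟨⟨⟨he, hh⟩, -⟩, hi⟩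
          exact hb (by rw [← hh]; exact hpos e (ha ▸ hi.2))
        rw [hempty]
        exact hmono a (Set.empty_subset _)
      · rw [hbne b hb] at hg
        obtain ⟨g', hg', rfl⟩ := hg
        have key : f a (Sym2.map Subtype.val ''
              (bundleSet (G.induce {u | u ≠ v}) head' ⟨b, hb⟩ \ {g'}))
            ≤ f a (Sym2.map Subtype.val ''
              bundleSet (G.induce {u | u ≠ v}) head' ⟨a, ha⟩) :=
          hEFX' ⟨a, ha⟩ ⟨b, hb⟩ g' hg'
        rw [Set.image_diff hιinj, Set.image_singleton] at key
        rw [hbne a ha, hbne b hb]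
        exact key

/-- If `v` is a vertex of degree 1 in `G`, then `G - v` is strongly
EFX-orientable if and only if `G` is strongly EFX-orientable. -/
theorem stronglyEFXOrientable_deleteVertex_iff [Fintype V] (G : SimpleGraph V) (v : V)
    (hv : G.degree v = 1) :
    StronglyEFXOrientable (G.induce {u | u ≠ v}) ↔ StronglyEFXOrientable G := by
  obtain ⟨u, hu⟩ : ∃ u, G.neighborFinset v = {u} :=
    Finset.card_eq_one.mp (by rw [G.card_neighborFinset_eq_degree]; exact hv)
  have hadj : G.Adj v u := by
    rw [← SimpleGraph.mem_neighborFinset, hu]; exact Finset.mem_singleton_self u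
  have hinc : G.incidenceSet v = {s(v, u)} := by
    ext e
    simp only [Set.mem_singleton_iff, SimpleGraph.incidenceSet, Set.mem_sep_iff]
    constructor
    · rintro ⟨he, hve⟩
      obtain ⟨w, rfl⟩ := Sym2.mem_iff_exists.mp hve
      have hw : G.Adj v w := G.mem_edgeSet.mp he
      have : w ∈ G.neighborFinset v := by
        rw [SimpleGraph.mem_neighborFinset]; exact hw
      rw [hu, Finset.mem_singleton] at this
      rw [this]
    · rintro rfl
      exact ⟨G.mem_edgeSet.mpr hadj, Sym2.mem_mk_left v u⟩
  exact ⟨dir1 G v u hadj hinc, dir2 G v u hadj⟩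
end

section
/- The graph consisting of two triangles glued together at a single vertex (the bowtie graph on 5 vertices: triangles v_1v_2v_3 and v_3v_4v_5 sharing only the vertex v_3) is not 0-1 strongly EFX-orientable, and hence not strongly EFX-orientable. -/
open SimpleGraph
open scoped Classical

variable {V : Type*}

/-- The bowtie graph: two triangles `v₀v₁v₂` and `v₂v₃v₄` glued at the single vertex `v₂`. -/
def bowtie : SimpleGraph (Fin 5) :=
  SimpleGraph.fromEdgeSet
    {s(0, 1), s(0, 2), s(1, 2), s(2, 3), s(2, 4), s(3, 4)}

/-- The counterexample valuation: agents 0 and 1 value only the edge `s(0,1)`,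
agent 2 values `s(2,3)` and `s(2,4)`, agent 3 values only `s(2,3)`,
agent 4 values only `s(2,4)`. -/
def wB : Fin 5 → Sym2 (Fin 5) → ℕ
| 0, e => if e = s(0,1) then 1 else 0
| 1, e => if e = s(0,1) then 1 else 0
| 2, e => if e = s(2,3) ∨ e = s(2,4) then 1 else 0
| 3, e => if e = s(2,3) then 1 else 0
| 4, e => if e = s(2,4) then 1 else 0

lemma wB_le_one (a : Fin 5) (e : Sym2 (Fin 5)) : wB a e ≤ 1 := by
  fin_cases a <;> simp only [wB] <;> split_ifs <;> simp

lemma wB_not_mem (a : Fin 5) (e : Sym2 (Fin 5)) (h : a ∉ e) : wB a e = 0 := by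
  fin_cases a <;> simp only [wB] <;> split_ifs with h1 <;>
    first
      | rfl
      | (subst h1; simp_all)
      | (rcases h1 with h1 | h1 <;> subst h1 <;> simp_all)

lemma mem_bundle_bowtie (head : Sym2 (Fin 5) → Fin 5) (v : Fin 5) (e : Sym2 (Fin 5)) :
    e ∈ bundle bowtie head v ↔ e ∈ bowtie.edgeSet ∧ head e = v := by
  simp [bundle]

lemma eA : s(0,1) ∈ bowtie.edgeSet := by simp [bowtie]
lemma eB : s(0,2) ∈ bowtie.edgeSet := by simp [bowtie]
lemma eC : s(1,2) ∈ bowtie.edgeSet := by simp [bowtie]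
lemma eD : s(2,3) ∈ bowtie.edgeSet := by simp [bowtie]
lemma eE : s(2,4) ∈ bowtie.edgeSet := by simp [bowtie]
lemma eF : s(3,4) ∈ bowtie.edgeSet := by simp [bowtie]

/-- Lower bound: if the bundle of `b` minus `g` contains an edge valued by `a`,
the envied sum is at least 1. -/
lemma one_le_sum {S : Finset (Sym2 (Fin 5))} {a : Fin 5} {e0 : Sym2 (Fin 5)}
    (h : e0 ∈ S) (h1 : wB a e0 = 1) : 1 ≤ ∑ e ∈ S, wB a e :=
  h1 ▸ Finset.single_le_sum (fun _ _ => Nat.zero_le _) h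

section
variable (head : Sym2 (Fin 5) → Fin 5)

lemma Z1 (hA : head s(0,1) = 0) : ∑ e ∈ bundle bowtie head 1, wB 1 e = 0 := by
  refine Finset.sum_eq_zero fun e he => ?_
  rw [mem_bundle_bowtie] at he
  simp only [wB]
  split_ifs with h1
  · subst h1; rw [hA] at he; exact absurd he.2 (by decide)
  · rfl

lemma Z0 (hA : head s(0,1) = 1) : ∑ e ∈ bundle bowtie head 0, wB 0 e = 0 := by
  refine Finset.sum_eq_zero fun e he => ?_
  rw [mem_bundle_bowtie] at he
  simp only [wB]
  split_ifs with h1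
  · subst h1; rw [hA] at he; exact absurd he.2 (by decide)
  · rfl

lemma Z3 (hD : head s(2,3) = 2) : ∑ e ∈ bundle bowtie head 3, wB 3 e = 0 := by
  refine Finset.sum_eq_zero fun e he => ?_
  rw [mem_bundle_bowtie] at he
  simp only [wB]
  split_ifs with h1
  · subst h1; rw [hD] at he; exact absurd he.2 (by decide)
  · rfl

lemma Z4 (hE : head s(2,4) = 2) : ∑ e ∈ bundle bowtie head 4, wB 4 e = 0 := by
  refine Finset.sum_eq_zero fun e he => ?_
  rw [mem_bundle_bowtie] at he
  simp only [wB]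
  split_ifs with h1
  · subst h1; rw [hE] at he; exact absurd he.2 (by decide)
  · rfl

lemma Z2 (hD : head s(2,3) = 3) (hE : head s(2,4) = 4) :
    ∑ e ∈ bundle bowtie head 2, wB 2 e = 0 := by
  refine Finset.sum_eq_zero fun e he => ?_
  rw [mem_bundle_bowtie] at he
  simp only [wB]
  split_ifs with h1
  · rcases h1 with h1 | h1 <;> subst h1
    · rw [hD] at he; exact absurd he.2 (by decide)
    · rw [hE] at he; exact absurd he.2 (by decide)
  · rfl

end

/-- The key combinatorial fact: no orientation of the bowtie is EFX for `wB`. -/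
lemma no_orientation : ¬ ∃ head : Sym2 (Fin 5) → Fin 5,
    IsEFX01Orientation bowtie wB head := by
  rintro ⟨head, hmem, hefx⟩
  -- a generic contradiction engine
  have engine : ∀ (a b : Fin 5) (g e0 : Sym2 (Fin 5)),
      g ∈ bowtie.edgeSet → head g = b →
      e0 ∈ bowtie.edgeSet → head e0 = b → e0 ≠ g →
      wB a e0 = 1 → (∑ e ∈ bundle bowtie head a, wB a e = 0) → False := by
    intro a b g e0 hgE hgH heE heH hne hval hzero
    have hg : g ∈ bundle bowtie head b := (mem_bundle_bowtie head b g).2 ⟨hgE, hgH⟩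
    have h2 := hefx a b g hg
    rw [hzero] at h2
    refine absurd (le_trans (one_le_sum ?_ hval) h2) (by decide)
    simp only [Finset.mem_erase]
    exact ⟨hne, (mem_bundle_bowtie head b e0).2 ⟨heE, heH⟩⟩
  -- Step 1: obtain an edge e★ of the left triangle in the bundle of vertex 2.
  have hA := hmem s(0,1) eA
  rw [Sym2.mem_iff] at hA
  have hstar : ∃ es : Sym2 (Fin 5), es ∈ bowtie.edgeSet ∧ head es = 2 ∧
      es ≠ s(2,3) ∧ es ≠ s(2,4) := by
    rcases hA with hA | hA
    · -- head s(0,1) = 0, so head s(0,2) must be 2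
      have hB := hmem s(0,2) eB
      rw [Sym2.mem_iff] at hB
      rcases hB with hB | hB
      · exact absurd (engine 1 0 s(0,2) s(0,1) eB hB eA hA (by decide) (by decide)
          (Z1 head hA)) id
      · exact ⟨s(0,2), eB, hB, by decide, by decide⟩
    · -- head s(0,1) = 1, so head s(1,2) must be 2
      have hC := hmem s(1,2) eC
      rw [Sym2.mem_iff] at hC
      rcases hC with hC | hC
      · exact absurd (engine 0 1 s(1,2) s(0,1) eC hC eA hA (by decide) (by decide)
          (Z0 head hA)) id
      · exact ⟨s(1,2), eC, hC, by decide, by decide⟩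
  obtain ⟨es, hesE, hesH, hesD, hesE'⟩ := hstar
  -- Step 2: case analysis on the heads of s(2,3), s(2,4), s(3,4).
  have hD := hmem s(2,3) eD
  rw [Sym2.mem_iff] at hD
  rcases hD with hD | hD
  · -- head s(2,3) = 2 : agent 3 envies agent 2
    exact engine 3 2 es s(2,3) hesE hesH eD hD hesD.symm (by decide) (Z3 head hD)
  · have hE := hmem s(2,4) eE
    rw [Sym2.mem_iff] at hE
    rcases hE with hE | hE
    · -- head s(2,4) = 2 : agent 4 envies agent 2
      exact engine 4 2 es s(2,4) hesE hesH eE hE hesE'.symm (by decide) (Z4 head hE)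
    · -- head s(2,3) = 3, head s(2,4) = 4 : agent 2's bundle is worthless to itself
      have hF := hmem s(3,4) eF
      rw [Sym2.mem_iff] at hF
      rcases hF with hF | hF
      · -- head s(3,4) = 3 : agent 2 envies agent 3
        exact engine 2 3 s(3,4) s(2,3) eF hF eD hD (by decide) (by decide)
          (Z2 head hD hE)
      · -- head s(3,4) = 4 : agent 2 envies agent 4
        exact engine 2 4 s(3,4) s(2,4) eF hF eE hE (by decide) (by decide)
          (Z2 head hD hE)

/-- The set function induced by `wB`. -/
noncomputable def fB (a : Fin 5) (X : Set (Sym2 (Fin 5))) : NNReal :=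
  ((∑ e ∈ Finset.univ.filter (· ∈ X), wB a e : ℕ) : NNReal)

lemma fB_mono (a : Fin 5) : Monotone (fB a) := by
  intro X Y hXY
  unfold fB
  rw [Nat.cast_le]
  refine Finset.sum_le_sum_of_subset fun e he => ?_
  simp only [Finset.mem_filter, Finset.mem_univ, true_and] at he ⊢
  exact hXY he

lemma wB_mem_inc (a : Fin 5) (e : Sym2 (Fin 5)) (h : wB a e ≠ 0) :
    e ∈ bowtie.incidenceSet a := by
  fin_cases a <;> simp only [wB] at h <;> split_ifs at h with h1 <;>
    first
      | exact absurd rfl h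
      | (subst h1; exact ⟨by simp [bowtie], by decide⟩)
      | (rcases h1 with h1 | h1 <;> subst h1 <;> exact ⟨by simp [bowtie], by decide⟩)

lemma fB_local (a : Fin 5) (X : Set (Sym2 (Fin 5))) :
    fB a X = fB a (X ∩ bowtie.incidenceSet a) := by
  unfold fB
  congr 1
  refine (Finset.sum_subset ?_ ?_).symm
  · intro e he
    simp only [Finset.mem_filter, Finset.mem_univ, true_and, Set.mem_inter_iff] at he ⊢
    exact he.1
  · intro e he hne
    simp only [Finset.mem_filter, Finset.mem_univ, true_and, Set.mem_inter_iff] at he hne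
    by_contra h
    exact hne ⟨he, wB_mem_inc a e h⟩

/-- The bowtie graph (two triangles glued at a vertex) is not 0-1 strongly
EFX-orientable, and hence not strongly EFX-orientable. -/
theorem bowtie_not_stronglyEFXOrientable :
    ¬ ZeroOneStronglyEFXOrientable bowtie ∧ ¬ StronglyEFXOrientable bowtie := by
  constructor
  · intro h
    exact no_orientation (h wB wB_le_one wB_not_mem)
  · intro h
    obtain ⟨head, hmem, hefx⟩ := h fB fB_mono fB_local
    refine no_orientation ⟨head, hmem, fun a b g hg => ?_⟩
    rw [mem_bundle_bowtie] at hg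
    have hg' : g ∈ bundleSet bowtie head b := hg
    have key := hefx a b g hg'
    unfold fB at key
    rw [Nat.cast_le] at key
    refine le_of_eq_of_le (Finset.sum_congr ?_ fun _ _ => rfl)
      (le_of_le_of_eq key (Finset.sum_congr ?_ fun _ _ => rfl))
    · ext e
      simp only [Finset.mem_erase, Finset.mem_filter, Finset.mem_univ, true_and,
        Set.mem_diff, Set.mem_singleton_iff, mem_bundle_bowtie, bundleSet,
        Set.mem_setOf_eq, Set.mem_sep_iff]
      tauto
    · ext e
      simp only [Finset.mem_filter, Finset.mem_univ, true_and, mem_bundle_bowtie,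
        bundleSet, Set.mem_setOf_eq, Set.mem_sep_iff]
end

section
/- The graph consisting of two vertex-disjoint triangles connected by a single edge (6 vertices: triangles v_1v_2v_3 and v_4v_5v_6 together with the edge v_3v_4) is not 0-1 strongly EFX-orientable, and hence not strongly EFX-orientable. -/
open SimpleGraph
open scoped Classical

variable {V : Type*}

/-- Two vertex-disjoint triangles `v₀v₁v₂` and `v₃v₄v₅` connected by the single edge `v₂v₃`. -/
def twoTrianglesEdge : SimpleGraph (Fin 6) :=
  SimpleGraph.fromEdgeSet
    {s(0, 1), s(0, 2), s(1, 2), s(3, 4), s(3, 5), s(4, 5), s(2, 3)}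



namespace TwoTriAux

def edges7 : Finset (Sym2 (Fin 6)) := {s(0,1), s(0,2), s(1,2), s(3,4), s(3,5), s(4,5), s(2,3)}

lemma mem_edgeSet_iff (e : Sym2 (Fin 6)) : e ∈ twoTrianglesEdge.edgeSet ↔ e ∈ edges7 := by
  rw [twoTrianglesEdge, SimpleGraph.edgeSet_fromEdgeSet]
  simp only [Set.mem_diff, Set.mem_insert_iff, Set.mem_singleton_iff, Set.mem_setOf_eq,
    edges7, Finset.mem_insert, Finset.mem_singleton]
  constructor
  · rintro ⟨h, -⟩; exact h
  · intro h; refine ⟨h, ?_⟩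
    rcases h with rfl|rfl|rfl|rfl|rfl|rfl|rfl <;> decide

def w0 : Fin 6 → Sym2 (Fin 6) → ℕ := fun a e =>
  if (e = s(0,2) ∨ e = s(1,2) ∨ e = s(3,4) ∨ e = s(3,5)) ∧ a ∈ e then 1 else 0

lemma w0_le_one (a : Fin 6) (e : Sym2 (Fin 6)) : w0 a e ≤ 1 := by
  unfold w0; split <;> simp

lemma w0_zero (a : Fin 6) (e : Sym2 (Fin 6)) (h : a ∉ e) : w0 a e = 0 := by
  unfold w0; rw [if_neg]; rintro ⟨-, h2⟩; exact h h2

def Head (o : Fin 7 → Bool) : Sym2 (Fin 6) → Fin 6 := fun e =>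
  if e = s(0,1) then (if o 0 then 0 else 1)
  else if e = s(0,2) then (if o 1 then 0 else 2)
  else if e = s(1,2) then (if o 2 then 1 else 2)
  else if e = s(3,4) then (if o 3 then 3 else 4)
  else if e = s(3,5) then (if o 4 then 3 else 5)
  else if e = s(4,5) then (if o 5 then 4 else 5)
  else if e = s(2,3) then (if o 6 then 2 else 3)
  else 0

set_option maxRecDepth 10000 in
lemma key : ∀ o : Fin 7 → Bool, ¬ (∀ a b : Fin 6, ∀ g ∈ edges7.filter (fun e => Head o e = b),
    ∑ e ∈ (edges7.filter (fun e => Head o e = b)).erase g, w0 a e ≤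
    ∑ e ∈ edges7.filter (fun e => Head o e = a), w0 a e) := by decide

set_option maxRecDepth 4000 in
lemma Head_eval (o : Fin 7 → Bool) :
    Head o s(0,1) = (if o 0 then 0 else 1) ∧
    Head o s(0,2) = (if o 1 then 0 else 2) ∧
    Head o s(1,2) = (if o 2 then 1 else 2) ∧
    Head o s(3,4) = (if o 3 then 3 else 4) ∧
    Head o s(3,5) = (if o 4 then 3 else 5) ∧
    Head o s(4,5) = (if o 5 then 4 else 5) ∧
    Head o s(2,3) = (if o 6 then 2 else 3) := by
  revert o; decide

lemma bundle_eq (head : Sym2 (Fin 6) → Fin 6) (v : Fin 6) :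
    bundle twoTrianglesEdge head v = edges7.filter (fun e => head e = v) := by
  ext e
  simp only [bundle, Finset.mem_filter, Finset.mem_univ, true_and, mem_edgeSet_iff]

lemma sum_erase_irrel {α M : Type*} [AddCommMonoid M] {i1 i2 : DecidableEq α}
    (s : Finset α) (g : α) (f : α → M) :
    ∑ e ∈ @Finset.erase α i1 s g, f e = ∑ e ∈ @Finset.erase α i2 s g, f e := by
  rw [Subsingleton.elim i1 i2]

lemma noEFX01 : ¬ ∃ head, IsEFX01Orientation twoTrianglesEdge w0 head := by
  rintro ⟨head, hmem, hfair⟩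
  have hm : ∀ e ∈ edges7, head e ∈ e := fun e he => hmem e ((mem_edgeSet_iff e).mpr he)
  let o : Fin 7 → Bool :=
    ![decide (head s(0,1) = 0), decide (head s(0,2) = 0), decide (head s(1,2) = 1),
      decide (head s(3,4) = 3), decide (head s(3,5) = 3), decide (head s(4,5) = 4),
      decide (head s(2,3) = 2)]
  obtain ⟨h1, h2, h3, h4, h5, h6, h7⟩ := Head_eval o
  have e0 : o 0 = decide (head s(0,1) = 0) := rfl
  have e1 : o 1 = decide (head s(0,2) = 0) := rfl
  have e2 : o 2 = decide (head s(1,2) = 1) := rfl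
  have e3 : o 3 = decide (head s(3,4) = 3) := rfl
  have e4 : o 4 = decide (head s(3,5) = 3) := rfl
  have e5 : o 5 = decide (head s(4,5) = 4) := rfl
  have e6 : o 6 = decide (head s(2,3) = 2) := rfl
  have hagree : ∀ e ∈ edges7, head e = Head o e := by
    intro e he
    simp only [edges7, Finset.mem_insert, Finset.mem_singleton] at he
    rcases he with rfl|rfl|rfl|rfl|rfl|rfl|rfl
    · rw [h1, e0]; rcases Sym2.mem_iff.mp (hm s(0,1) (by decide)) with h|h <;> rw [h] <;> decide
    · rw [h2, e1]; rcases Sym2.mem_iff.mp (hm s(0,2) (by decide)) with h|h <;> rw [h] <;> decide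
    · rw [h3, e2]; rcases Sym2.mem_iff.mp (hm s(1,2) (by decide)) with h|h <;> rw [h] <;> decide
    · rw [h4, e3]; rcases Sym2.mem_iff.mp (hm s(3,4) (by decide)) with h|h <;> rw [h] <;> decide
    · rw [h5, e4]; rcases Sym2.mem_iff.mp (hm s(3,5) (by decide)) with h|h <;> rw [h] <;> decide
    · rw [h6, e5]; rcases Sym2.mem_iff.mp (hm s(4,5) (by decide)) with h|h <;> rw [h] <;> decide
    · rw [h7, e6]; rcases Sym2.mem_iff.mp (hm s(2,3) (by decide)) with h|h <;> rw [h] <;> decide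
  have hb : ∀ v, bundle twoTrianglesEdge head v = edges7.filter (fun e => Head o e = v) := by
    intro v
    rw [bundle_eq]
    exact Finset.filter_congr (fun e he => by rw [hagree e he])
  refine key o ?_
  intro a b g hg
  have hg' : g ∈ bundle twoTrianglesEdge head b := by rw [hb b]; exact hg
  have h := hfair a b g hg'
  rw [hb a, hb b] at h
  exact (sum_erase_irrel _ _ _).trans_le h

noncomputable def f0 : Fin 6 → Set (Sym2 (Fin 6)) → NNReal := fun a X =>
  ∑ e ∈ edges7.filter (fun e => e ∈ X), (w0 a e : NNReal)

lemma f0_mono (a : Fin 6) : Monotone (f0 a) := by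
  intro X Y hXY
  apply Finset.sum_le_sum_of_subset
  intro e he
  simp only [Finset.mem_filter] at he ⊢
  exact ⟨he.1, hXY he.2⟩

lemma f0_local (a : Fin 6) (X : Set (Sym2 (Fin 6))) :
    f0 a X = f0 a (X ∩ twoTrianglesEdge.incidenceSet a) := by
  unfold f0
  rw [Finset.sum_filter, Finset.sum_filter]
  apply Finset.sum_congr rfl
  intro e he
  by_cases hae : a ∈ e
  · have hinc : e ∈ twoTrianglesEdge.incidenceSet a :=
      ⟨(mem_edgeSet_iff e).mpr he, hae⟩
    by_cases hX : e ∈ X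
    · rw [if_pos hX, if_pos ⟨hX, hinc⟩]
    · rw [if_neg hX, if_neg (fun h => hX h.1)]
  · have : w0 a e = 0 := w0_zero a e hae
    simp [this]

lemma f0_on_bundleSet (head : Sym2 (Fin 6) → Fin 6) (a v : Fin 6) :
    f0 a (bundleSet twoTrianglesEdge head v) =
      ((∑ e ∈ bundle twoTrianglesEdge head v, w0 a e : ℕ) : NNReal) := by
  unfold f0
  rw [Nat.cast_sum]
  apply Finset.sum_congr
  · ext e
    simp only [Finset.mem_filter, bundle, Finset.mem_univ, true_and, bundleSet,
      Set.mem_setOf_eq, mem_edgeSet_iff]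
    tauto
  · intros; rfl

lemma f0_on_bundleSet_erase (head : Sym2 (Fin 6) → Fin 6) (a v : Fin 6) (g : Sym2 (Fin 6)) :
    f0 a (bundleSet twoTrianglesEdge head v \ {g}) =
      ((∑ e ∈ (bundle twoTrianglesEdge head v).erase g, w0 a e : ℕ) : NNReal) := by
  unfold f0
  rw [Nat.cast_sum]
  apply Finset.sum_congr
  · ext e
    simp only [Finset.mem_filter, Finset.mem_erase, bundle, Finset.mem_univ, true_and,
      bundleSet, Set.mem_setOf_eq, mem_edgeSet_iff, Set.mem_diff, Set.mem_singleton_iff]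
    tauto
  · intros; rfl

end TwoTriAux

/-- Two vertex-disjoint triangles connected by a single edge form a graph
that is not 0-1 strongly EFX-orientable, and hence not strongly EFX-orientable. -/
theorem twoTrianglesEdge_not_stronglyEFXOrientable :
    ¬ ZeroOneStronglyEFXOrientable twoTrianglesEdge ∧
    ¬ StronglyEFXOrientable twoTrianglesEdge := by
  constructor
  · intro h
    exact TwoTriAux.noEFX01 (h TwoTriAux.w0 TwoTriAux.w0_le_one TwoTriAux.w0_zero)
  · intro h
    obtain ⟨head, hmem, hfair⟩ := h TwoTriAux.f0 TwoTriAux.f0_mono TwoTriAux.f0_local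
    refine TwoTriAux.noEFX01 ⟨head, hmem, ?_⟩
    intro a b g hg
    have hg' : g ∈ bundleSet twoTrianglesEdge head b := by
      simp only [bundle, Finset.mem_filter, Finset.mem_univ, true_and] at hg
      exact ⟨hg.1, hg.2⟩
    have hle := hfair a b g hg'
    rw [TwoTriAux.f0_on_bundleSet_erase, TwoTriAux.f0_on_bundleSet] at hle
    have h2 : ∑ e ∈ (bundle twoTrianglesEdge head b).erase g, TwoTriAux.w0 a e ≤
        ∑ e ∈ bundle twoTrianglesEdge head a, TwoTriAux.w0 a e := by exact_mod_cast hle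
    exact (TwoTriAux.sum_erase_irrel _ _ _).trans_le h2
end

section
/- The diamond graph, consisting of two triangles sharing one edge (4 vertices v_1, v_2, v_3, v_4 with all edges present except v_1v_4, i.e., K_4 minus one edge), is not strongly EFX-orientable: there exists an assignment of additive graphical valuations to its vertices for which no EFX orientation exists. -/
open SimpleGraph
open scoped Classical

variable {V : Type*}

/-- The diamond graph: `K₄` on the vertices `v₀,v₁,v₂,v₃` minus the edge `v₀v₃`,
i.e. two triangles `v₀v₁v₂` and `v₁v₂v₃` sharing the edge `v₁v₂`. -/
def diamond : SimpleGraph (Fin 4) :=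
  SimpleGraph.fromEdgeSet {s(0, 1), s(0, 2), s(1, 2), s(1, 3), s(2, 3)}

noncomputable def wD : Fin 4 → Sym2 (Fin 4) → NNReal := fun a e =>
  if e = s(0,2) then (if a = 0 then 1 else if a = 2 then 2 else 0)
  else if e = s(1,2) then (if a = 1 then 1 else if a = 2 then 1 else 0)
  else if e = s(1,3) then (if a = 1 then 2 else if a = 3 then 1 else 0)
  else 0

lemma wD_supp (a : Fin 4) (e : Sym2 (Fin 4)) (h : a ∉ e) : wD a e = 0 := by
  unfold wD
  split_ifs with h1 h2 h3 h4 h5 h6 h7 h8 h9 <;> subst_vars <;> first | rfl | (exfalso; revert h; decide)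

lemma wD_out (a : Fin 4) (e : Sym2 (Fin 4))
    (h : e ∉ ({s(0,2), s(1,2), s(1,3)} : Finset (Sym2 (Fin 4)))) : wD a e = 0 := by
  simp [Finset.mem_insert] at h
  simp [wD, h.1, h.2.1, h.2.2]

lemma sum_bundle (a v : Fin 4) (head : Sym2 (Fin 4) → Fin 4) :
    ∑ e ∈ bundle diamond head v, wD a e =
      (if head s(0,2) = v then wD a s(0,2) else 0) +
      (if head s(1,2) = v then wD a s(1,2) else 0) +
      (if head s(1,3) = v then wD a s(1,3) else 0) := by
  rw [bundle, Finset.sum_filter]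
  rw [← Finset.sum_subset (Finset.subset_univ ({s(0,2), s(1,2), s(1,3)} : Finset (Sym2 (Fin 4))))
      (fun x _ hx => by split_ifs with h; exacts [wD_out a x hx, rfl])]
  rw [Finset.sum_insert (by decide), Finset.sum_insert (by decide), Finset.sum_singleton]
  have h1 : s(0,2) ∈ diamond.edgeSet := by simp [diamond]
  have h2 : s(1,2) ∈ diamond.edgeSet := by simp [diamond]
  have h3 : s(1,3) ∈ diamond.edgeSet := by simp [diamond]
  simp only [h1, h2, h3, true_and]
  ring


lemma no_orient :
    ¬ ∃ head : Sym2 (Fin 4) → Fin 4,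
        (∀ e ∈ diamond.edgeSet, head e ∈ e) ∧
        ∀ a b : Fin 4, ∀ g ∈ bundle diamond head b,
          ∑ e ∈ (bundle diamond head b).erase g, wD a e ≤
            ∑ e ∈ bundle diamond head a, wD a e := by
  rintro ⟨head, hin, hefx⟩
  have key : ∀ (a : Fin 4) (g : Sym2 (Fin 4)), g ∈ diamond.edgeSet →
      ∑ e ∈ bundle diamond head (head g), wD a e ≤
        (∑ e ∈ bundle diamond head a, wD a e) + wD a g := by
    intro a g hgE
    have hg' : g ∈ bundle diamond head (head g) := by
      simp [bundle, hgE]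
    calc ∑ e ∈ bundle diamond head (head g), wD a e
        = wD a g + ∑ e ∈ (bundle diamond head (head g)).erase g, wD a e :=
          (Finset.add_sum_erase _ _ hg').symm
      _ ≤ wD a g + ∑ e ∈ bundle diamond head a, wD a e :=
          add_le_add le_rfl (hefx a (head g) g hg')
      _ = _ := add_comm _ _
  have h1 := hin s(0,1) (by simp [diamond]); rw [Sym2.mem_iff] at h1
  have h2 := hin s(0,2) (by simp [diamond]); rw [Sym2.mem_iff] at h2
  have h3 := hin s(1,2) (by simp [diamond]); rw [Sym2.mem_iff] at h3
  have h4 := hin s(1,3) (by simp [diamond]); rw [Sym2.mem_iff] at h4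
  have h5 := hin s(2,3) (by simp [diamond]); rw [Sym2.mem_iff] at h5
  rcases h2 with h2 | h2
  · -- head s(0,2) = 0
    rcases h3 with h3 | h3
    · -- head s(1,2) = 1
      rcases h4 with h4 | h4
      · -- head s(1,3) = 1
        rcases h1 with h1 | h1
        · -- head s(0,1) = 0
          rcases h5 with h5 | h5
          · -- head s(2,3) = 2
            have hx := key 2 (s(0,1)) (by simp [diamond])
            simp only [h1, h2, h3, h4, h5, sum_bundle] at hx
            simp [wD, Sym2.eq_iff] at hx
          · -- head s(2,3) = 3
            have hx := key 2 (s(0,1)) (by simp [diamond])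
            simp only [h1, h2, h3, h4, h5, sum_bundle] at hx
            simp [wD, Sym2.eq_iff] at hx
        · -- head s(0,1) = 1
          rcases h5 with h5 | h5
          · -- head s(2,3) = 2
            have hx := key 2 (s(0,1)) (by simp [diamond])
            simp only [h1, h2, h3, h4, h5, sum_bundle] at hx
            simp [wD, Sym2.eq_iff] at hx
          · -- head s(2,3) = 3
            have hx := key 2 (s(0,1)) (by simp [diamond])
            simp only [h1, h2, h3, h4, h5, sum_bundle] at hx
            simp [wD, Sym2.eq_iff] at hx
      · -- head s(1,3) = 3
        rcases h1 with h1 | h1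
        · -- head s(0,1) = 0
          rcases h5 with h5 | h5
          · -- head s(2,3) = 2
            have hx := key 2 (s(0,1)) (by simp [diamond])
            simp only [h1, h2, h3, h4, h5, sum_bundle] at hx
            simp [wD, Sym2.eq_iff] at hx
          · -- head s(2,3) = 3
            have hx := key 1 (s(2,3)) (by simp [diamond])
            simp only [h1, h2, h3, h4, h5, sum_bundle] at hx
            simp [wD, Sym2.eq_iff] at hx
        · -- head s(0,1) = 1
          rcases h5 with h5 | h5
          · -- head s(2,3) = 2
            have hx := key 2 (s(0,1)) (by simp [diamond])
            simp only [h1, h2, h3, h4, h5, sum_bundle] at hx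
            simp [wD, Sym2.eq_iff] at hx
          · -- head s(2,3) = 3
            have hx := key 1 (s(2,3)) (by simp [diamond])
            simp only [h1, h2, h3, h4, h5, sum_bundle] at hx
            simp [wD, Sym2.eq_iff] at hx
    · -- head s(1,2) = 2
      rcases h4 with h4 | h4
      · -- head s(1,3) = 1
        rcases h1 with h1 | h1
        · -- head s(0,1) = 0
          rcases h5 with h5 | h5
          · -- head s(2,3) = 2
            have hx := key 2 (s(0,1)) (by simp [diamond])
            simp only [h1, h2, h3, h4, h5, sum_bundle] at hx
            simp [wD, Sym2.eq_iff] at hx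
          · -- head s(2,3) = 3
            have hx := key 2 (s(0,1)) (by simp [diamond])
            simp only [h1, h2, h3, h4, h5, sum_bundle] at hx
            simp [wD, Sym2.eq_iff] at hx
        · -- head s(0,1) = 1
          rcases h5 with h5 | h5
          · -- head s(2,3) = 2
            have hx := key 3 (s(0,1)) (by simp [diamond])
            simp only [h1, h2, h3, h4, h5, sum_bundle] at hx
            simp [wD, Sym2.eq_iff] at hx
          · -- head s(2,3) = 3
            have hx := key 3 (s(0,1)) (by simp [diamond])
            simp only [h1, h2, h3, h4, h5, sum_bundle] at hx
            simp [wD, Sym2.eq_iff] at hx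
      · -- head s(1,3) = 3
        rcases h1 with h1 | h1
        · -- head s(0,1) = 0
          rcases h5 with h5 | h5
          · -- head s(2,3) = 2
            have hx := key 1 (s(2,3)) (by simp [diamond])
            simp only [h1, h2, h3, h4, h5, sum_bundle] at hx
            simp [wD, Sym2.eq_iff] at hx
          · -- head s(2,3) = 3
            have hx := key 1 (s(2,3)) (by simp [diamond])
            simp only [h1, h2, h3, h4, h5, sum_bundle] at hx
            simp [wD, Sym2.eq_iff] at hx
        · -- head s(0,1) = 1
          rcases h5 with h5 | h5
          · -- head s(2,3) = 2
            have hx := key 1 (s(2,3)) (by simp [diamond])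
            simp only [h1, h2, h3, h4, h5, sum_bundle] at hx
            simp [wD, Sym2.eq_iff] at hx
          · -- head s(2,3) = 3
            have hx := key 1 (s(2,3)) (by simp [diamond])
            simp only [h1, h2, h3, h4, h5, sum_bundle] at hx
            simp [wD, Sym2.eq_iff] at hx
  · -- head s(0,2) = 2
    rcases h3 with h3 | h3
    · -- head s(1,2) = 1
      rcases h4 with h4 | h4
      · -- head s(1,3) = 1
        rcases h1 with h1 | h1
        · -- head s(0,1) = 0
          rcases h5 with h5 | h5
          · -- head s(2,3) = 2
            have hx := key 0 (s(2,3)) (by simp [diamond])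
            simp only [h1, h2, h3, h4, h5, sum_bundle] at hx
            simp [wD, Sym2.eq_iff] at hx
          · -- head s(2,3) = 3
            have hx := key 3 (s(1,2)) (by simp [diamond])
            simp only [h1, h2, h3, h4, h5, sum_bundle] at hx
            simp [wD, Sym2.eq_iff] at hx
        · -- head s(0,1) = 1
          rcases h5 with h5 | h5
          · -- head s(2,3) = 2
            have hx := key 0 (s(2,3)) (by simp [diamond])
            simp only [h1, h2, h3, h4, h5, sum_bundle] at hx
            simp [wD, Sym2.eq_iff] at hx
          · -- head s(2,3) = 3
            have hx := key 3 (s(0,1)) (by simp [diamond])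
            simp only [h1, h2, h3, h4, h5, sum_bundle] at hx
            simp [wD, Sym2.eq_iff] at hx
      · -- head s(1,3) = 3
        rcases h1 with h1 | h1
        · -- head s(0,1) = 0
          rcases h5 with h5 | h5
          · -- head s(2,3) = 2
            have hx := key 0 (s(2,3)) (by simp [diamond])
            simp only [h1, h2, h3, h4, h5, sum_bundle] at hx
            simp [wD, Sym2.eq_iff] at hx
          · -- head s(2,3) = 3
            have hx := key 1 (s(2,3)) (by simp [diamond])
            simp only [h1, h2, h3, h4, h5, sum_bundle] at hx
            simp [wD, Sym2.eq_iff] at hx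
        · -- head s(0,1) = 1
          rcases h5 with h5 | h5
          · -- head s(2,3) = 2
            have hx := key 0 (s(2,3)) (by simp [diamond])
            simp only [h1, h2, h3, h4, h5, sum_bundle] at hx
            simp [wD, Sym2.eq_iff] at hx
          · -- head s(2,3) = 3
            have hx := key 1 (s(2,3)) (by simp [diamond])
            simp only [h1, h2, h3, h4, h5, sum_bundle] at hx
            simp [wD, Sym2.eq_iff] at hx
    · -- head s(1,2) = 2
      rcases h4 with h4 | h4
      · -- head s(1,3) = 1
        rcases h1 with h1 | h1
        · -- head s(0,1) = 0
          rcases h5 with h5 | h5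
          · -- head s(2,3) = 2
            have hx := key 0 (s(1,2)) (by simp [diamond])
            simp only [h1, h2, h3, h4, h5, sum_bundle] at hx
            simp [wD, Sym2.eq_iff] at hx
          · -- head s(2,3) = 3
            have hx := key 0 (s(1,2)) (by simp [diamond])
            simp only [h1, h2, h3, h4, h5, sum_bundle] at hx
            simp [wD, Sym2.eq_iff] at hx
        · -- head s(0,1) = 1
          rcases h5 with h5 | h5
          · -- head s(2,3) = 2
            have hx := key 0 (s(1,2)) (by simp [diamond])
            simp only [h1, h2, h3, h4, h5, sum_bundle] at hx
            simp [wD, Sym2.eq_iff] at hx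
          · -- head s(2,3) = 3
            have hx := key 0 (s(1,2)) (by simp [diamond])
            simp only [h1, h2, h3, h4, h5, sum_bundle] at hx
            simp [wD, Sym2.eq_iff] at hx
      · -- head s(1,3) = 3
        rcases h1 with h1 | h1
        · -- head s(0,1) = 0
          rcases h5 with h5 | h5
          · -- head s(2,3) = 2
            have hx := key 0 (s(1,2)) (by simp [diamond])
            simp only [h1, h2, h3, h4, h5, sum_bundle] at hx
            simp [wD, Sym2.eq_iff] at hx
          · -- head s(2,3) = 3
            have hx := key 0 (s(1,2)) (by simp [diamond])
            simp only [h1, h2, h3, h4, h5, sum_bundle] at hx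
            simp [wD, Sym2.eq_iff] at hx
        · -- head s(0,1) = 1
          rcases h5 with h5 | h5
          · -- head s(2,3) = 2
            have hx := key 0 (s(1,2)) (by simp [diamond])
            simp only [h1, h2, h3, h4, h5, sum_bundle] at hx
            simp [wD, Sym2.eq_iff] at hx
          · -- head s(2,3) = 3
            have hx := key 0 (s(1,2)) (by simp [diamond])
            simp only [h1, h2, h3, h4, h5, sum_bundle] at hx
            simp [wD, Sym2.eq_iff] at hx


/-- The diamond graph is not strongly EFX-orientable: there is an
assignment of additive graphical valuations (given by edge weights `w`, with the value of a
bundle being the sum of the weights of its edges) for which no EFX orientation exists. -/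
theorem diamond_not_stronglyEFXOrientable :
    (∃ w : Fin 4 → Sym2 (Fin 4) → NNReal,
      (∀ a e, a ∉ e → w a e = 0) ∧
      ¬ ∃ head : Sym2 (Fin 4) → Fin 4,
          (∀ e ∈ diamond.edgeSet, head e ∈ e) ∧
          ∀ a b : Fin 4, ∀ g ∈ bundle diamond head b,
            ∑ e ∈ (bundle diamond head b).erase g, w a e ≤
              ∑ e ∈ bundle diamond head a, w a e) ∧
    ¬ StronglyEFXOrientable diamond := by
  refine ⟨⟨wD, wD_supp, no_orient⟩, ?_⟩
  intro hS
  set f : Fin 4 → Set (Sym2 (Fin 4)) → NNReal :=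
    fun a X => ∑ e ∈ Finset.univ, if e ∈ X then wD a e else 0 with hf
  have hmono : ∀ a, Monotone (f a) := by
    intro a X Y hXY
    apply Finset.sum_le_sum
    intro e _
    by_cases h : e ∈ X
    · simp [h, hXY h]
    · simp [h]
  have hedge3 : ∀ e : Sym2 (Fin 4),
      e ∈ ({s(0,2), s(1,2), s(1,3)} : Finset (Sym2 (Fin 4))) → e ∈ diamond.edgeSet := by
    intro e he
    simp only [Finset.mem_insert, Finset.mem_singleton] at he
    rcases he with rfl | rfl | rfl <;> simp [diamond]
  have hgraph : ∀ a X, f a X = f a (X ∩ diamond.incidenceSet a) := by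
    intro a X
    apply Finset.sum_congr rfl
    intro e _
    by_cases hX : e ∈ X
    · by_cases hI : e ∈ diamond.incidenceSet a
      · simp [hX, hI]
      · have h0 : wD a e = 0 := by
          by_cases haE : a ∈ e
          · apply wD_out
            intro hmem
            exact hI ⟨hedge3 e hmem, haE⟩
          · exact wD_supp a e haE
        simp [hX, hI, h0]
    · simp [hX]
  obtain ⟨head, hhead, hefx⟩ := hS f hmono hgraph
  apply no_orient
  refine ⟨head, hhead, ?_⟩
  have hfeq : ∀ (a : Fin 4) (S : Set (Sym2 (Fin 4))) (F : Finset (Sym2 (Fin 4))),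
      (∀ e, e ∈ F ↔ e ∈ S) → f a S = ∑ e ∈ F, wD a e := by
    intro a S F hF
    show (∑ e ∈ Finset.univ, if e ∈ S then wD a e else 0) = _
    rw [← Finset.sum_filter]
    congr 1
    ext e
    simp [hF e]
  intro a b g hg
  have hg' : g ∈ bundleSet diamond head b := by
    simp only [bundle, Finset.mem_filter] at hg
    exact ⟨hg.2.1, hg.2.2⟩
  have h := hefx a b g hg'
  rwa [hfeq a _ ((bundle diamond head b).erase g)
      (fun e => by
        simp only [Finset.mem_erase, bundle, Finset.mem_filter, Finset.mem_univ, true_and,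
          Set.mem_diff, Set.mem_singleton_iff, bundleSet, Set.mem_setOf_eq]
        tauto),
    hfeq a _ (bundle diamond head a)
      (fun e => by
        simp only [bundle, Finset.mem_filter, Finset.mem_univ, true_and,
          bundleSet, Set.mem_setOf_eq])] at h
end

section
/- Let G be a finite simple graph equipped with an assignment of monotone graphical valuations for which no EFX orientation of G exists, and suppose some edge e = uv of G has zero value for both of its endpoints u and v. Let G' be the graph obtained from G by replacing e with a path of any odd length through new internal vertices (deleting e and adding a u–v path of odd length whose internal vertices are new). Then G' is not strongly EFX-orientable. -/
open SimpleGraph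
open scoped Classical

variable {V : Type*}

/-- The `i`-th vertex (for `0 ≤ i ≤ 2*k+1`) along the replacement `u`–`v` path of odd length
`2*k+1`, whose `2*k` internal vertices are the new vertices `Sum.inr j`. -/
def pathVert (u v : V) (k : ℕ) (i : ℕ) : V ⊕ Fin (2 * k) :=
  if h0 : i = 0 then Sum.inl u
  else if h : i ≤ 2 * k then Sum.inr ⟨i - 1, by omega⟩
  else Sum.inl v

/-- The graph obtained from `G` by deleting the edge `uv` and replacing it with a `u`–`v`
path of odd length `2*k+1` whose internal vertices are new. -/
def replaceByOddPath (G : SimpleGraph V) (u v : V) (k : ℕ) :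
    SimpleGraph (V ⊕ Fin (2 * k)) :=
  SimpleGraph.fromEdgeSet
    ((Sym2.map Sum.inl '' (G.edgeSet \ {s(u, v)})) ∪
      {e | ∃ i : ℕ, i ≤ 2 * k ∧ e = s(pathVert u v k i, pathVert u v k (i + 1))})

lemma pathVert_zero (u v : V) (k : ℕ) : pathVert u v k 0 = Sum.inl u := by
  simp [pathVert]

lemma pathVert_mid (u v : V) (k : ℕ) {i : ℕ} (h1 : 1 ≤ i) (h2 : i ≤ 2 * k) :
    pathVert u v k i = Sum.inr ⟨i - 1, by omega⟩ := by
  unfold pathVert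
  rw [dif_neg (by omega), dif_pos h2]

lemma pathVert_last (u v : V) (k : ℕ) {i : ℕ} (h : 2 * k < i) :
    pathVert u v k i = Sum.inl v := by
  unfold pathVert
  rw [dif_neg (by omega), dif_neg (by omega)]

lemma pathVert_ne_succ {u v : V} (huv : u ≠ v) (k : ℕ) {i : ℕ} (hi : i ≤ 2 * k) :
    pathVert u v k i ≠ pathVert u v k (i + 1) := by
  rcases Nat.eq_zero_or_pos i with rfl | h1
  · rw [pathVert_zero]
    rcases Nat.eq_zero_or_pos k with rfl | hk
    · rw [pathVert_last u v 0 (by omega)]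
      simp [huv]
    · rw [pathVert_mid u v k (by omega) (by omega)]
      simp
  · rw [pathVert_mid u v k h1 hi]
    by_cases h2 : i + 1 ≤ 2 * k
    · rw [pathVert_mid u v k (by omega) h2]
      simp only [ne_eq, Sum.inr.injEq, Fin.mk.injEq]
      omega
    · rw [pathVert_last u v k (by omega)]
      simp

lemma pathVert_ne_succ_succ {u v : V} (huv : u ≠ v) (k : ℕ) {i : ℕ} (hi : i + 1 ≤ 2 * k) :
    pathVert u v k i ≠ pathVert u v k (i + 2) := by
  rcases Nat.eq_zero_or_pos i with rfl | h1
  · rw [pathVert_zero, pathVert_mid u v k (by omega) (by omega)]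
    simp
  · rw [pathVert_mid u v k h1 (by omega)]
    by_cases h2 : i + 2 ≤ 2 * k
    · rw [pathVert_mid u v k (by omega) h2]
      simp only [ne_eq, Sum.inr.injEq, Fin.mk.injEq]
      omega
    · rw [pathVert_last u v k (by omega)]
      simp

/-- The `i`-th edge along the replacement path. -/
def pe (u v : V) (k i : ℕ) : Sym2 (V ⊕ Fin (2 * k)) :=
  s(pathVert u v k i, pathVert u v k (i + 1))

lemma pe_mem_edgeSet (G : SimpleGraph V) {u v : V} (huv : u ≠ v) (k : ℕ) {i : ℕ}
    (hi : i ≤ 2 * k) : pe u v k i ∈ (replaceByOddPath G u v k).edgeSet := by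
  rw [replaceByOddPath, SimpleGraph.edgeSet_fromEdgeSet]
  refine ⟨Or.inr ⟨i, hi, rfl⟩, ?_⟩
  simp only [Set.mem_setOf_eq, pe, Sym2.mk_isDiag_iff]
  exact pathVert_ne_succ huv k hi

lemma pe_ne_pe_succ {u v : V} (huv : u ≠ v) (k : ℕ) {i : ℕ} (hi : i + 1 ≤ 2 * k) :
    pe u v k i ≠ pe u v k (i + 1) := by
  unfold pe
  rw [ne_eq, Sym2.eq_iff]
  rintro (⟨ha, -⟩ | ⟨ha, -⟩)
  · exact pathVert_ne_succ huv k (by omega) ha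
  · exact pathVert_ne_succ_succ huv k hi ha

lemma pre_pe {u v : V} (k : ℕ) {i : ℕ} (hi : i ≤ 2 * k) {e : Sym2 V}
    (h : Sym2.map Sum.inl e = pe u v k i) : e = s(u, v) := by
  induction e using Sym2.ind with
  | _ x y =>
    rw [Sym2.map_pair_eq, pe, Sym2.eq_iff] at h
    have hi0 : i = 0 := by
      by_contra hne
      rw [pathVert_mid u v k (by omega) hi] at h
      rcases h with ⟨h1, -⟩ | ⟨-, h2⟩
      · exact Sum.inl_ne_inr h1
      · exact Sum.inl_ne_inr h2
    subst hi0
    have hk0 : 2 * k = 0 := by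
      by_contra hne
      rw [pathVert_mid u v k (i := 0 + 1) (by omega) (by omega)] at h
      rcases h with ⟨-, h2⟩ | ⟨h1, -⟩
      · exact Sum.inl_ne_inr h2
      · exact Sum.inl_ne_inr h1
    rw [pathVert_zero, pathVert_last u v k (i := 0 + 1) (by omega)] at h
    rcases h with ⟨h1, h2⟩ | ⟨h1, h2⟩
    · rw [Sum.inl.injEq] at h1 h2; rw [h1, h2]
    · rw [Sum.inl.injEq] at h1 h2; rw [h1, h2, Sym2.eq_swap]

lemma map_inl_mem_edgeSet_iff (G : SimpleGraph V) {u v : V} (k : ℕ) {e : Sym2 V}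
    (hne : e ≠ s(u, v)) :
    Sym2.map Sum.inl e ∈ (replaceByOddPath G u v k).edgeSet ↔ e ∈ G.edgeSet := by
  rw [replaceByOddPath, SimpleGraph.edgeSet_fromEdgeSet]
  constructor
  · rintro ⟨h1 | h2, -⟩
    · obtain ⟨e', ⟨he', -⟩, heq⟩ := h1
      rwa [← Sym2.map.injective Sum.inl_injective heq]
    · obtain ⟨i, hi, heq⟩ := h2
      exact absurd (pre_pe k hi heq) hne
  · intro he
    refine ⟨Or.inl ⟨e, ⟨he, hne⟩, rfl⟩, ?_⟩
    simp only [Set.mem_setOf_eq, Sym2.mem_diagSet, Sym2.isDiag_map Sum.inl_injective]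
    exact G.not_isDiag_of_mem_edgeSet he

def valEdge (u v : V) (k : ℕ) (j : Fin (2 * k)) : Sym2 (V ⊕ Fin (2 * k)) :=
  if (j : ℕ) % 2 = 0 then pe u v k ((j : ℕ) + 1) else pe u v k (j : ℕ)

lemma pathVert_inr (u v : V) (k : ℕ) (j : Fin (2 * k)) :
    pathVert u v k ((j : ℕ) + 1) = Sum.inr j := by
  have hj := j.2
  rw [pathVert_mid u v k (by omega) (by omega)]
  exact congrArg Sum.inr (Fin.ext (by simp))

lemma valEdge_mem_edgeSet (G : SimpleGraph V) {u v : V} (huv : u ≠ v) (k : ℕ)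
    (j : Fin (2 * k)) : valEdge u v k j ∈ (replaceByOddPath G u v k).edgeSet := by
  have hj := j.2
  unfold valEdge
  split
  · exact pe_mem_edgeSet G huv k (by omega)
  · exact pe_mem_edgeSet G huv k (by omega)

lemma inr_mem_valEdge (u v : V) (k : ℕ) (j : Fin (2 * k)) :
    Sum.inr j ∈ valEdge u v k j := by
  unfold valEdge
  split
  · rw [pe, pathVert_inr]
    exact Sym2.mem_mk_left _ _
  · rw [pe, pathVert_inr]
    exact Sym2.mem_mk_right _ _

noncomputable def auxF (u v : V) (k : ℕ) (f : V → Set (Sym2 V) → NNReal) :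
    (V ⊕ Fin (2 * k)) → Set (Sym2 (V ⊕ Fin (2 * k))) → NNReal
  | Sum.inl a => fun X => f a (Sym2.map Sum.inl ⁻¹' X)
  | Sum.inr j => fun X => if valEdge u v k j ∈ X then 1 else 0

lemma auxF_inl (u v : V) (k : ℕ) (f : V → Set (Sym2 V) → NNReal) (a : V)
    (X : Set (Sym2 (V ⊕ Fin (2 * k)))) :
    auxF u v k f (Sum.inl a) X = f a (Sym2.map Sum.inl ⁻¹' X) := rfl

lemma auxF_inr (u v : V) (k : ℕ) (f : V → Set (Sym2 V) → NNReal) (j : Fin (2 * k))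
    (X : Set (Sym2 (V ⊕ Fin (2 * k)))) :
    auxF u v k f (Sum.inr j) X = if valEdge u v k j ∈ X then 1 else 0 := rfl

lemma auxF_mono (u v : V) (k : ℕ) (f : V → Set (Sym2 V) → NNReal)
    (hmono : ∀ a, Monotone (f a)) : ∀ a, Monotone (auxF u v k f a) := by
  rintro (a | j) X Y hXY
  · exact hmono a (fun e he => hXY he)
  · rw [auxF_inr, auxF_inr]
    by_cases hP : valEdge u v k j ∈ X
    · rw [if_pos hP, if_pos (hXY hP)]
    · rw [if_neg hP]
      exact zero_le

lemma zero_val (G : SimpleGraph V) {u v : V} (f : V → Set (Sym2 V) → NNReal)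
    (hgraph : ∀ a X, f a X = f a (X ∩ G.incidenceSet a))
    (hzu : ∀ X : Set (Sym2 V), f u (X \ {s(u, v)}) = f u X)
    (hzv : ∀ X : Set (Sym2 V), f v (X \ {s(u, v)}) = f v X)
    (a : V) (Y : Set (Sym2 V)) : f a (Y \ {s(u, v)}) = f a Y := by
  by_cases hau : a = u
  · subst hau; exact hzu Y
  by_cases hav : a = v
  · subst hav; exact hzv Y
  rw [hgraph a (Y \ {s(u, v)}), hgraph a Y]
  congr 1
  ext e
  simp only [Set.mem_inter_iff, Set.mem_diff, Set.mem_singleton_iff]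
  constructor
  · rintro ⟨⟨he, -⟩, hi⟩; exact ⟨he, hi⟩
  · rintro ⟨he, hi⟩
    refine ⟨⟨he, ?_⟩, hi⟩
    rintro rfl
    obtain ⟨-, hmem⟩ := hi
    rw [Sym2.mem_iff] at hmem
    rcases hmem with rfl | rfl
    · exact hau rfl
    · exact hav rfl

lemma f_sandwich (G : SimpleGraph V) {u v : V} (f : V → Set (Sym2 V) → NNReal)
    (hmono : ∀ a, Monotone (f a))
    (hgraph : ∀ a X, f a X = f a (X ∩ G.incidenceSet a))
    (hzu : ∀ X : Set (Sym2 V), f u (X \ {s(u, v)}) = f u X)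
    (hzv : ∀ X : Set (Sym2 V), f v (X \ {s(u, v)}) = f v X)
    (a : V) {A B : Set (Sym2 V)} (h1 : B \ {s(u, v)} ⊆ A) (h2 : A ⊆ B) :
    f a A = f a B := by
  refine le_antisymm (hmono a h2) ?_
  rw [← zero_val G f hgraph hzu hzv a B]
  exact hmono a h1

lemma auxF_graph (G : SimpleGraph V) {u v : V} (huv : u ≠ v) (k : ℕ)
    (f : V → Set (Sym2 V) → NNReal)
    (hmono : ∀ a, Monotone (f a))
    (hgraph : ∀ a X, f a X = f a (X ∩ G.incidenceSet a))
    (hzu : ∀ X : Set (Sym2 V), f u (X \ {s(u, v)}) = f u X)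
    (hzv : ∀ X : Set (Sym2 V), f v (X \ {s(u, v)}) = f v X) :
    ∀ a X, auxF u v k f a X =
      auxF u v k f a (X ∩ (replaceByOddPath G u v k).incidenceSet a) := by
  rintro (a | j) X
  · rw [auxF_inl, auxF_inl]
    set I' := (replaceByOddPath G u v k).incidenceSet (Sum.inl a)
    have hAB : (Sym2.map Sum.inl ⁻¹' (X ∩ I')) ∩ G.incidenceSet a ⊆
        (Sym2.map Sum.inl ⁻¹' X) ∩ G.incidenceSet a := by
      intro e he
      exact ⟨he.1.1, he.2⟩
    have hBA : ((Sym2.map Sum.inl ⁻¹' X) ∩ G.incidenceSet a) \ {s(u, v)} ⊆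
        (Sym2.map Sum.inl ⁻¹' (X ∩ I')) ∩ G.incidenceSet a := by
      rintro e ⟨⟨hx, hi⟩, hne⟩
      rw [Set.mem_singleton_iff] at hne
      have hh : e ∈ G.edgeSet ∧ a ∈ e := hi
      refine ⟨⟨hx, ?_, ?_⟩, hi⟩
      · exact (map_inl_mem_edgeSet_iff G k hne).2 hh.1
      · exact Sym2.mem_map.2 ⟨a, hh.2, rfl⟩
    calc f a (Sym2.map Sum.inl ⁻¹' X)
        = f a ((Sym2.map Sum.inl ⁻¹' X) ∩ G.incidenceSet a) := hgraph a _
      _ = f a ((Sym2.map Sum.inl ⁻¹' (X ∩ I')) ∩ G.incidenceSet a) :=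
          (f_sandwich G f hmono hgraph hzu hzv a hBA hAB).symm
      _ = f a (Sym2.map Sum.inl ⁻¹' (X ∩ I')) := (hgraph a _).symm
  · rw [auxF_inr, auxF_inr]
    have hI : valEdge u v k j ∈ (replaceByOddPath G u v k).incidenceSet (Sum.inr j) :=
      ⟨valEdge_mem_edgeSet G huv k j, inr_mem_valEdge u v k j⟩
    by_cases hP : valEdge u v k j ∈ X
    · rw [if_pos hP, if_pos ⟨hP, hI⟩]
    · rw [if_neg hP, if_neg (fun h => hP h.1)]

lemma path_propagate (G : SimpleGraph V) {u v : V} (huv : u ≠ v) (k : ℕ)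
    (f : V → Set (Sym2 V) → NNReal)
    (head' : Sym2 (V ⊕ Fin (2 * k)) → V ⊕ Fin (2 * k))
    (hmem' : ∀ e ∈ (replaceByOddPath G u v k).edgeSet, head' e ∈ e)
    (hefx' : ∀ a b, ∀ g ∈ bundleSet (replaceByOddPath G u v k) head' b,
      auxF u v k f a (bundleSet (replaceByOddPath G u v k) head' b \ {g}) ≤
        auxF u v k f a (bundleSet (replaceByOddPath G u v k) head' a))
    (h0 : head' (pe u v k 0) ≠ Sum.inl u) :
    ∀ i, i ≤ 2 * k → head' (pe u v k i) = pathVert u v k (i + 1) := by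
  intro i
  induction i with
  | zero =>
    intro hi
    have hm := hmem' _ (pe_mem_edgeSet G huv k hi)
    rw [pe, Sym2.mem_iff] at hm
    rcases hm with h | h
    · rw [pathVert_zero] at h; exact absurd h h0
    · exact h
  | succ i ih =>
    intro hi
    have hih := ih (by omega)
    have hm := hmem' _ (pe_mem_edgeSet G huv k hi)
    rw [pe, Sym2.mem_iff] at hm
    rcases hm with h | h
    swap
    · exact h
    exfalso
    have hjb : i < 2 * k := by omega
    set jb : Fin (2 * k) := ⟨i, hjb⟩ with hjbdef
    have hb : pathVert u v k (i + 1) = Sum.inr jb := pathVert_inr u v k jb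
    have hcvb : (jb : ℕ) = i := rfl
    have hE0 : head' (pe u v k i) = Sum.inr jb := hih.trans hb
    have hE1 : head' (pe u v k (i + 1)) = Sum.inr jb := h.trans hb
    by_cases heven : i % 2 = 0
    · -- the valued edge of vertex i+1 is pe (i+1); partner is vertex i+2
      have hlt : i + 1 < 2 * k := by omega
      set ja : Fin (2 * k) := ⟨i + 1, hlt⟩ with hjadef
      have hcva : (ja : ℕ) = i + 1 := rfl
      have hval : valEdge u v k ja = pe u v k (i + 1) := by
        unfold valEdge
        rw [if_neg (by omega)]
      have h1 : valEdge u v k ja ∈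
          bundleSet (replaceByOddPath G u v k) head' (Sum.inr jb) \ {pe u v k i} := by
        rw [hval]
        refine ⟨⟨pe_mem_edgeSet G huv k hi, hE1⟩, ?_⟩
        intro hcon
        exact pe_ne_pe_succ huv k hi (Set.mem_singleton_iff.1 hcon).symm
      have h2 : valEdge u v k ja ∉
          bundleSet (replaceByOddPath G u v k) head' (Sum.inr ja) := by
        rw [hval]
        rintro ⟨-, hcon⟩
        rw [hE1] at hcon
        have hv : (i : ℕ) = i + 1 := congrArg Fin.val (Sum.inr_injective hcon)
        omega
      have hkey := hefx' (Sum.inr ja) (Sum.inr jb) (pe u v k i)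
        ⟨pe_mem_edgeSet G huv k (by omega), hE0⟩
      rw [auxF_inr, auxF_inr, if_pos h1, if_neg h2] at hkey
      norm_num at hkey
    · -- the valued edge of vertex i+1 is pe i; partner is vertex i
      have h1i : 1 ≤ i := by omega
      have hja : i - 1 < 2 * k := by omega
      set ja : Fin (2 * k) := ⟨i - 1, hja⟩ with hjadef
      have hcva : (ja : ℕ) = i - 1 := rfl
      have hval : valEdge u v k ja = pe u v k i := by
        unfold valEdge
        rw [if_pos (by omega)]
        show pe u v k (i - 1 + 1) = pe u v k i
        have harg : i - 1 + 1 = i := by omega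
        rw [harg]
      have h1 : valEdge u v k ja ∈
          bundleSet (replaceByOddPath G u v k) head' (Sum.inr jb) \ {pe u v k (i + 1)} := by
        rw [hval]
        refine ⟨⟨pe_mem_edgeSet G huv k (by omega), hE0⟩, ?_⟩
        intro hcon
        exact pe_ne_pe_succ huv k hi (Set.mem_singleton_iff.1 hcon)
      have h2 : valEdge u v k ja ∉
          bundleSet (replaceByOddPath G u v k) head' (Sum.inr ja) := by
        rw [hval]
        rintro ⟨-, hcon⟩
        rw [hE0] at hcon
        have hv : (i : ℕ) = i - 1 := congrArg Fin.val (Sum.inr_injective hcon)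
        omega
      have hkey := hefx' (Sum.inr ja) (Sum.inr jb) (pe u v k (i + 1))
        ⟨pe_mem_edgeSet G huv k hi, hE1⟩
      rw [auxF_inr, auxF_inr, if_pos h1, if_neg h2] at hkey
      norm_num at hkey

noncomputable def transferHead (u v c : V) (k : ℕ)
    (head' : Sym2 (V ⊕ Fin (2 * k)) → V ⊕ Fin (2 * k)) : Sym2 V → V :=
  fun e => if e = s(u, v) then c else Sum.elim id (fun _ => u) (head' (Sym2.map Sum.inl e))

lemma transferHead_uv (u v c : V) (k : ℕ)
    (head' : Sym2 (V ⊕ Fin (2 * k)) → V ⊕ Fin (2 * k)) :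
    transferHead u v c k head' s(u, v) = c := if_pos rfl

lemma transferHead_ne (u v c : V) (k : ℕ)
    (head' : Sym2 (V ⊕ Fin (2 * k)) → V ⊕ Fin (2 * k)) {e : Sym2 V} (hne : e ≠ s(u, v)) :
    transferHead u v c k head' e =
      Sum.elim id (fun _ => u) (head' (Sym2.map Sum.inl e)) := if_neg hne


/-- Suppose `G` carries monotone graphical valuations `f` admitting no EFX
orientation, and the edge `uv` has zero value for both of its endpoints. Then the graph
obtained from `G` by replacing `uv` with a path of any odd length (through new internal
vertices) is not strongly EFX-orientable. -/
theorem not_stronglyEFXOrientable_replaceByOddPath [Fintype V] (G : SimpleGraph V)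
    (u v : V) (huv : G.Adj u v)
    (f : V → Set (Sym2 V) → NNReal)
    (hmono : ∀ a, Monotone (f a))
    (hgraph : ∀ a X, f a X = f a (X ∩ G.incidenceSet a))
    (hzu : ∀ X : Set (Sym2 V), f u (X \ {s(u, v)}) = f u X)
    (hzv : ∀ X : Set (Sym2 V), f v (X \ {s(u, v)}) = f v X)
    (hno : ¬ ∃ head : Sym2 V → V, IsEFXOrientation G f head)
    (k : ℕ) :
    ¬ StronglyEFXOrientable (replaceByOddPath G u v k) := by
  intro hS
  apply hno
  have huvne : u ≠ v := huv.ne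
  obtain ⟨head', hmem', hefx'⟩ := hS (auxF u v k f)
    (auxF_mono u v k f hmono)
    (auxF_graph G huvne k f hmono hgraph hzu hzv)
  have hmain : ∃ c, (c = u ∨ c = v) ∧ ∃ i, i ≤ 2 * k ∧ head' (pe u v k i) = Sum.inl c := by
    by_cases h0 : head' (pe u v k 0) = Sum.inl u
    · exact ⟨u, Or.inl rfl, 0, Nat.zero_le _, h0⟩
    · refine ⟨v, Or.inr rfl, 2 * k, le_rfl, ?_⟩
      rw [path_propagate G huvne k f head' hmem' hefx' h0 (2 * k) le_rfl,
        pathVert_last u v k (by omega)]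
  obtain ⟨c, hc, i₀, hi₀, hheadp⟩ := hmain
  set G' := replaceByOddPath G u v k with hG'def
  set head := transferHead u v c k head' with hheaddef
  have hzv' : ∀ a Y, f a (Y \ {s(u, v)}) = f a Y := zero_val G f hgraph hzu hzv
  have hheadmem : ∀ e ∈ G.edgeSet, e ≠ s(u, v) →
      ∃ w, w ∈ e ∧ head' (Sym2.map Sum.inl e) = Sum.inl w ∧ head e = w := by
    intro e he hne
    have hm := hmem' _ ((map_inl_mem_edgeSet_iff G k hne).2 he)
    obtain ⟨w, hw, hweq⟩ := Sym2.mem_map.1 hm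
    refine ⟨w, hw, hweq.symm, ?_⟩
    rw [hheaddef, transferHead_ne u v c k head' hne, ← hweq]
    rfl
  have hheadiff : ∀ e ∈ G.edgeSet, e ≠ s(u, v) →
      ∀ a, (head e = a ↔ head' (Sym2.map Sum.inl e) = Sum.inl a) := by
    intro e he hne a
    obtain ⟨w, hw, hw1, hw2⟩ := hheadmem e he hne
    rw [hw1, hw2]
    constructor
    · rintro rfl; rfl
    · intro hh; exact Sum.inl_injective hh
  have hbundle : ∀ b, bundleSet G head b \ {s(u, v)} =
      (Sym2.map Sum.inl ⁻¹' bundleSet G' head' (Sum.inl b)) \ {s(u, v)} := by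
    intro b
    ext e
    simp only [Set.mem_diff, Set.mem_singleton_iff, Set.mem_preimage]
    constructor
    · rintro ⟨⟨he, hh⟩, hne⟩
      exact ⟨⟨(map_inl_mem_edgeSet_iff G k hne).2 he, (hheadiff e he hne b).1 hh⟩, hne⟩
    · rintro ⟨⟨he, hh⟩, hne⟩
      have he' := (map_inl_mem_edgeSet_iff G k hne).1 he
      exact ⟨⟨he', (hheadiff e he' hne b).2 hh⟩, hne⟩
  have hfB : ∀ a b, f a (bundleSet G head b) =
      auxF u v k f (Sum.inl a) (bundleSet G' head' (Sum.inl b)) := by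
    intro a b
    rw [auxF_inl, ← hzv' a (bundleSet G head b),
      ← hzv' a (Sym2.map Sum.inl ⁻¹' bundleSet G' head' (Sum.inl b)), hbundle b]
  refine ⟨head, ?_, ?_⟩
  · intro e he
    by_cases hne : e = s(u, v)
    · subst hne
      rw [hheaddef, transferHead_uv]
      rcases hc with rfl | rfl
      · exact Sym2.mem_mk_left _ _
      · exact Sym2.mem_mk_right _ _
    · obtain ⟨w, hw, -, hw2⟩ := hheadmem e he hne
      rw [hw2]; exact hw
  · intro a b g hg
    obtain ⟨hge, hgb⟩ := hg
    by_cases hgs : g = s(u, v)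
    · subst hgs
      have hbc : b = c := by
        rw [← hgb, hheaddef, transferHead_uv]
      subst hbc
      rw [hzv' a (bundleSet G head b), hfB a b, hfB a a]
      have hstep : auxF u v k f (Sum.inl a) (bundleSet G' head' (Sum.inl b)) =
          auxF u v k f (Sum.inl a) (bundleSet G' head' (Sum.inl b) \ {pe u v k i₀}) := by
        rw [auxF_inl, auxF_inl, Set.preimage_diff]
        refine (f_sandwich G f hmono hgraph hzu hzv a ?_ Set.diff_subset).symm
        rintro e ⟨he1, he2⟩
        refine ⟨he1, fun hc' => he2 ?_⟩
        exact pre_pe k hi₀ hc'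
      rw [hstep]
      exact hefx' (Sum.inl a) (Sum.inl b) (pe u v k i₀)
        ⟨pe_mem_edgeSet G huvne k hi₀, hheadp⟩
    · have hmg : Sym2.map Sum.inl g ∈ bundleSet G' head' (Sum.inl b) :=
        ⟨(map_inl_mem_edgeSet_iff G k hgs).2 hge, (hheadiff g hge hgs b).1 hgb⟩
      have hpre : Sym2.map Sum.inl ⁻¹' (bundleSet G' head' (Sum.inl b) \ {Sym2.map Sum.inl g}) =
          (Sym2.map Sum.inl ⁻¹' bundleSet G' head' (Sum.inl b)) \ {g} := by
        ext e
        simp only [Set.mem_preimage, Set.mem_diff, Set.mem_singleton_iff]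
        exact and_congr_right (fun _ =>
          not_congr (Sym2.map.injective Sum.inl_injective).eq_iff)
      have hlhs : f a (bundleSet G head b \ {g}) =
          auxF u v k f (Sum.inl a)
            (bundleSet G' head' (Sum.inl b) \ {Sym2.map Sum.inl g}) := by
        rw [auxF_inl, hpre, ← hzv' a (bundleSet G head b \ {g}),
          ← hzv' a ((Sym2.map Sum.inl ⁻¹' bundleSet G' head' (Sum.inl b)) \ {g}),
          Set.diff_diff_comm, Set.diff_diff_comm
            (s := Sym2.map Sum.inl ⁻¹' bundleSet G' head' (Sum.inl b)), hbundle b]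
      rw [hlhs, hfB a a]
      exact hefx' (Sum.inl a) (Sum.inl b) (Sym2.map Sum.inl g) hmg
end
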